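/- arXiv:2309.01358 — 4 statements merged into one kernel-verified Lean document; each statement's English description precedes it below -/
import Mathlib

section
/- Let G be a bi-block graph in class B (each block has at most two cut-vertices) and T_G its associated tree. Then T_G is a tree, and for all vertices a, b of T_G, the distance between a and b in T_G equals their distance in G. -/
open SimpleGraph

variable {V : Type*}

/-- `v` is a cut-vertex of the graph `G`: deleting `v` disconnects `G`. -/
def CutVtx (G : SimpleGraph V) (v : V) : Prop :=
  ¬ (G.induce {v}ᶜ).Connected

/-- A nonseparable graph: connected and with no cut-vertex. -/
def NoCutVtx {W : Type*} (H : SimpleGraph W) : Prop :=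
  H.Connected ∧ ∀ w : W, (H.induce {w}ᶜ).Connected

/-- `B` is (the vertex set of) a block of `G`: a maximal nonseparable
induced subgraph. -/
def IsBlockSet (G : SimpleGraph V) (B : Set V) : Prop :=
  NoCutVtx (G.induce B) ∧ ∀ C : Set V, B ⊆ C → NoCutVtx (G.induce C) → B = C

/-- The set of cut-vertices of `G`. -/
def cutSet (G : SimpleGraph V) : Set V := {v | CutVtx G v}

/-- The set `B` induces a complete bipartite graph in `G` with
bipartition `(V1, V2)`. -/
def CompBipOn (G : SimpleGraph V) (B V1 V2 : Set V) : Prop :=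
  V1.Nonempty ∧ V2.Nonempty ∧ Disjoint V1 V2 ∧ V1 ∪ V2 = B ∧
    ∀ x ∈ B, ∀ y ∈ B, (G.Adj x y ↔ (x ∈ V1 ∧ y ∈ V2) ∨ (x ∈ V2 ∧ y ∈ V1))

/-- A bi-block graph: a connected graph all of whose blocks are
complete bipartite. -/
def BiBlockGraph (G : SimpleGraph V) : Prop :=
  G.Connected ∧ ∀ B : Set V, IsBlockSet G B → ∃ V1 V2 : Set V, CompBipOn G B V1 V2

/-- The class 𝓑: bi-block graphs with at least two blocks and at most two
cut-vertices in each block. -/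
def ClassB (G : SimpleGraph V) : Prop :=
  BiBlockGraph G ∧
  (∃ B1 B2 : Set V, IsBlockSet G B1 ∧ IsBlockSet G B2 ∧ B1 ≠ B2) ∧
  ∀ B : Set V, IsBlockSet G B → (B ∩ cutSet G).ncard ≤ 2

/-- `S` is an admissible vertex set for the associated tree `T_G`:
it contains all cut-vertices of `G`, both vertices of every `K_{1,1}` block,
exactly one non-cut-vertex from each partite set of every leaf block,
exactly one non-cut-vertex from the cut-vertex-free partite set of every
bridge block whose two cut-vertices share a partite set, and no other
vertices. -/
def AssocSet (G : SimpleGraph V) (S : Set V) : Prop :=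
  (∀ v, CutVtx G v → v ∈ S) ∧
  ∀ B V1 V2 : Set V, IsBlockSet G B → CompBipOn G B V1 V2 →
    ((V1.ncard = 1 ∧ V2.ncard = 1) → B ⊆ S) ∧
    (¬ (V1.ncard = 1 ∧ V2.ncard = 1) →
      (((B ∩ cutSet G).ncard = 1) →
          (S ∩ (V1 \ cutSet G)).ncard = 1 ∧ (S ∩ (V2 \ cutSet G)).ncard = 1) ∧
      (((B ∩ cutSet G).ncard = 2) →
          (((V1 ∩ cutSet G).ncard = 2) →
              (S ∩ (V2 \ cutSet G)).ncard = 1 ∧ S ∩ (V1 \ cutSet G) = ∅) ∧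
          (((V2 ∩ cutSet G).ncard = 2) →
              (S ∩ (V1 \ cutSet G)).ncard = 1 ∧ S ∩ (V2 \ cutSet G) = ∅) ∧
          (((V1 ∩ cutSet G).ncard = 1 ∧ (V2 ∩ cutSet G).ncard = 1) →
              S ∩ (B \ cutSet G) = ∅)))

/-- The eccentricity of a vertex. -/
noncomputable def ecc (G : SimpleGraph V) (v : V) : ℕ := sSup (Set.range (G.dist v))

/-- The diameter of a graph. -/
noncomputable def gdiam (G : SimpleGraph V) : ℕ := sSup (Set.range (ecc G))

/-- The radius of a graph. -/
noncomputable def gradius (G : SimpleGraph V) : ℕ := sInf (Set.range (ecc G))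

/-- The center of a graph: vertices of minimum eccentricity. -/
noncomputable def gcenter (G : SimpleGraph V) : Set V := {v | ecc G v = gradius G}

/-- The eccentricity matrix of `G`. -/
noncomputable def eccMatrix (G : SimpleGraph V) : Matrix V V ℝ := fun u v =>
  if G.dist u v = min (ecc G u) (ecc G v) then (G.dist u v : ℝ) else 0

/-- The spectrum of the eccentricity matrix of `G` is symmetric with respect
to the origin: `μ` is an eigenvalue with multiplicity `l` iff `-μ` is. -/
def SpectrumSymm [Fintype V] [DecidableEq V] (G : SimpleGraph V) : Prop :=
  ∀ (hH : (eccMatrix G).IsHermitian) (μ : ℝ),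
    {i | hH.eigenvalues i = μ}.ncard = {i | hH.eigenvalues i = -μ}.ncard

/-- A vertex is diametrically distinguished if it lies on some diametrical
path and is adjacent to some central vertex. -/
noncomputable def DiamDistinguished (G : SimpleGraph V) (u : V) : Prop :=
  (∃ (a b : V) (p : G.Walk a b), p.IsPath ∧ p.length = G.dist a b ∧
      G.dist a b = gdiam G ∧ u ∈ p.support) ∧
  ∃ z ∈ gcenter G, G.Adj u z

namespace Aux
variable {V : Type*} {G : SimpleGraph V}

/-- walks staying inside a set -/
def GoodWalk (G : SimpleGraph V) (A : Set V) (x y : V) : Prop :=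
  ∃ p : G.Walk x y, ∀ z ∈ p.support, z ∈ A

lemma reachable_induce_of_walk {A : Set V} {x y : V} (hx : x ∈ A) (hy : y ∈ A)
    (p : G.Walk x y) (hp : ∀ z ∈ p.support, z ∈ A) :
    (G.induce A).Reachable ⟨x, hx⟩ ⟨y, hy⟩ := by
  induction p with
  | nil => rfl
  | @cons a c b h q ih =>
    have hc : c ∈ A := hp c (by simp)
    have h1 : (G.induce A).Adj ⟨a, hx⟩ ⟨c, hc⟩ := h
    exact (h1.reachable).trans (ih hc hy (fun z hz => hp z (by simp [hz])))

lemma goodwalk_of_induce_reachable {A : Set V} {a b : ↥A}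
    (h : (G.induce A).Reachable a b) : GoodWalk G A a.1 b.1 := by
  obtain ⟨p⟩ := h
  refine ⟨p.map (SimpleGraph.Embedding.induce A).toHom, ?_⟩
  intro z hz
  change z ∈ (p.map (SimpleGraph.Embedding.induce A).toHom).support at hz
  simp only [SimpleGraph.Walk.support_map, List.mem_map] at hz
  obtain ⟨w, _, rfl⟩ := hz
  exact w.2

lemma induce_connected_iff {A : Set V} :
    (G.induce A).Connected ↔ A.Nonempty ∧ ∀ x ∈ A, ∀ y ∈ A, GoodWalk G A x y := by
  constructor
  · intro h
    refine ⟨Set.nonempty_coe_sort.mp h.nonempty, fun x hx y hy => ?_⟩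
    exact goodwalk_of_induce_reachable (h.preconnected ⟨x, hx⟩ ⟨y, hy⟩)
  · rintro ⟨hne, h⟩
    rw [SimpleGraph.connected_iff]
    refine ⟨?_, Set.nonempty_coe_sort.mpr hne⟩
    rintro ⟨x, hx⟩ ⟨y, hy⟩
    obtain ⟨p, hp⟩ := h x hx y hy
    exact reachable_induce_of_walk hx hy p hp

/-- `Nonsep` via plain subsets. -/
def Nonsep (G : SimpleGraph V) (A : Set V) : Prop :=
  (G.induce A).Connected ∧ ∀ w ∈ A, (G.induce (A \ {w})).Connected

def induce_induce_iso {C : Set V} (w : V) (hw : w ∈ C) :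
    ((G.induce C).induce ({(⟨w, hw⟩ : ↥C)}ᶜ)) ≃g (G.induce (C \ {w})) where
  toFun := fun x => ⟨x.1.1, x.1.2, by
    simp only [Set.mem_singleton_iff]
    intro hx
    exact x.2 (by ext; exact hx)⟩
  invFun := fun y => ⟨⟨y.1, y.2.1⟩, by
    intro hy
    apply y.2.2
    simpa using congrArg Subtype.val hy⟩
  left_inv := fun x => by ext; rfl
  right_inv := fun y => by ext; rfl
  map_rel_iff' := Iff.rfl

lemma noCutVtx_induce_iff {C : Set V} : NoCutVtx (G.induce C) ↔ Nonsep G C := by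
  unfold NoCutVtx Nonsep
  refine and_congr Iff.rfl ?_
  constructor
  · intro h w hw
    exact (Iso.connected_iff (induce_induce_iso w hw)).mp (h ⟨w, hw⟩)
  · rintro h ⟨w, hw⟩
    exact (Iso.connected_iff (induce_induce_iso w hw)).mpr (h w hw)

lemma nonsep_singleton (x : V) : (G.induce ({x} : Set V)).Connected := by
  rw [induce_connected_iff]
  refine ⟨⟨x, rfl⟩, ?_⟩
  rintro a rfl b rfl
  exact ⟨SimpleGraph.Walk.nil, by simp⟩

lemma nonsep_pair {x y : V} (h : G.Adj x y) : Nonsep G {x, y} := by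
  have hxy : x ≠ y := h.ne
  constructor
  · rw [induce_connected_iff]
    refine ⟨⟨x, by simp⟩, ?_⟩
    have key : GoodWalk G {x, y} x y :=
      ⟨SimpleGraph.Walk.cons h SimpleGraph.Walk.nil, by intro z hz; simpa using hz⟩
    rintro a ha b hb
    rcases ha with rfl | ha <;> rcases hb with rfl | hb
    · exact ⟨SimpleGraph.Walk.nil, by simp⟩
    · rcases hb with rfl; exact key
    · rcases ha with rfl
      obtain ⟨p, hp⟩ := key
      exact ⟨p.reverse, by simpa using hp⟩
    · rcases ha with rfl; rcases hb with rfl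
      exact ⟨SimpleGraph.Walk.nil, by simp⟩
  · intro w hw
    rcases hw with rfl | hw
    · rw [Set.pair_diff_left hxy]; exact nonsep_singleton y
    · rcases hw with rfl
      rw [Set.pair_diff_right hxy]; exact nonsep_singleton x

variable {V : Type*} {G : SimpleGraph V}

lemma nonsep_of_blockSet {B : Set V} (h : IsBlockSet G B) : Nonsep G B :=
  noCutVtx_induce_iff.mp h.1

lemma exists_block_superset [Finite V] {A : Set V} (hA : Nonsep G A) :
    ∃ B : Set V, A ⊆ B ∧ IsBlockSet G B := by
  classical
  have hfin : ({C : Set V | A ⊆ C ∧ Nonsep G C}).Finite := Set.toFinite _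
  obtain ⟨B, hB, hmax⟩ := Set.Finite.exists_maximalFor id _ hfin ⟨A, subset_rfl, hA⟩
  refine ⟨B, hB.1, noCutVtx_induce_iff.mpr hB.2, ?_⟩
  intro C hBC hC
  exact le_antisymm hBC (hmax ⟨hB.1.trans hBC, noCutVtx_induce_iff.mp hC⟩ hBC)

lemma conn_union {A B : Set V} (hA : (G.induce A).Connected) (hB : (G.induce B).Connected)
    (h : (A ∩ B).Nonempty) : (G.induce (A ∪ B)).Connected := by
  rw [induce_connected_iff] at hA hB ⊢
  obtain ⟨t, htA, htB⟩ := h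
  refine ⟨⟨t, Or.inl htA⟩, ?_⟩
  have key : ∀ x ∈ A ∪ B, GoodWalk G (A ∪ B) x t := by
    rintro x (hx | hx)
    · obtain ⟨p, hp⟩ := hA.2 x hx t htA
      exact ⟨p, fun z hz => Or.inl (hp z hz)⟩
    · obtain ⟨p, hp⟩ := hB.2 x hx t htB
      exact ⟨p, fun z hz => Or.inr (hp z hz)⟩
  intro x hx y hy
  obtain ⟨p, hp⟩ := key x hx
  obtain ⟨q, hq⟩ := key y hy
  refine ⟨p.append q.reverse, ?_⟩
  intro z hz
  rw [SimpleGraph.Walk.mem_support_append_iff] at hz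
  rcases hz with hz | hz
  · exact hp z hz
  · exact hq z (by simpa using hz)

lemma induce_connected_congr {A B : Set V} (h : A = B) (hA : (G.induce A).Connected) :
    (G.induce B).Connected := h ▸ hA

lemma nonsep_union {A B : Set V} (hA : Nonsep G A) (hB : Nonsep G B)
    {x y : V} (hxy : x ≠ y) (hx : x ∈ A ∩ B) (hy : y ∈ A ∩ B) : Nonsep G (A ∪ B) := by
  constructor
  · exact conn_union hA.1 hB.1 ⟨x, hx⟩
  · intro w hw
    have hAw : (G.induce (A \ {w})).Connected := by
      by_cases h : w ∈ A
      · exact hA.2 w h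
      · refine induce_connected_congr ?_ hA.1
        rw [Set.diff_singleton_eq_self h]
    have hBw : (G.induce (B \ {w})).Connected := by
      by_cases h : w ∈ B
      · exact hB.2 w h
      · refine induce_connected_congr ?_ hB.1
        rw [Set.diff_singleton_eq_self h]
    have hint : ((A \ {w}) ∩ (B \ {w})).Nonempty := by
      rcases eq_or_ne x w with rfl | hxw
      · exact ⟨y, ⟨hy.1, hxy.symm⟩, ⟨hy.2, hxy.symm⟩⟩
      · exact ⟨x, ⟨hx.1, hxw⟩, ⟨hx.2, hxw⟩⟩
    refine induce_connected_congr ?_ (conn_union hAw hBw hint)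
    rw [Set.union_diff_distrib]

lemma block_eq_of_two_mem [Finite V] {B1 B2 : Set V} (h1 : IsBlockSet G B1)
    (h2 : IsBlockSet G B2) {x y : V} (hxy : x ≠ y)
    (hx : x ∈ B1 ∩ B2) (hy : y ∈ B1 ∩ B2) : B1 = B2 := by
  have hu : Nonsep G (B1 ∪ B2) :=
    nonsep_union (nonsep_of_blockSet h1) (nonsep_of_blockSet h2) hxy hx hy
  have e1 : B1 = B1 ∪ B2 := h1.2 _ Set.subset_union_left (noCutVtx_induce_iff.mpr hu)
  have e2 : B2 = B1 ∪ B2 := h2.2 _ Set.subset_union_right (noCutVtx_induce_iff.mpr hu)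
  rw [e1, ← e2]

lemma block_exists_pair {B : Set V} (hB : IsBlockSet G B) :
    ∃ x y, x ≠ y ∧ x ∈ B ∧ y ∈ B := by
  have hconn := (nonsep_of_blockSet hB).1
  rw [induce_connected_iff] at hconn
  obtain ⟨x, hx⟩ := hconn.1
  by_contra h
  push_neg at h
  have hBx : B = {x} := by
    ext z
    constructor
    · intro hz
      by_contra hzx
      exact h z x (fun he => hzx he) hz hx
    · rintro rfl; exact hx
  have := (nonsep_of_blockSet hB).2 x hx
  rw [hBx] at this
  have : (G.induce (∅ : Set V)).Connected := by
    refine induce_connected_congr ?_ this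
    simp
  obtain ⟨⟨z, hz⟩⟩ := this.nonempty
  exact hz

lemma block_exists_adj {B : Set V} (hB : IsBlockSet G B) {v : V} (hv : v ∈ B) :
    ∃ u ∈ B, G.Adj v u := by
  obtain ⟨x, y, hxy, hx, hy⟩ := block_exists_pair hB
  have hz : ∃ z ∈ B, z ≠ v := by
    rcases eq_or_ne x v with rfl | hxv
    · exact ⟨y, hy, fun h => hxy h.symm⟩
    · exact ⟨x, hx, hxv⟩
  obtain ⟨z, hzB, hzv⟩ := hz
  have hconn := (nonsep_of_blockSet hB).1
  rw [induce_connected_iff] at hconn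
  obtain ⟨p, hp⟩ := hconn.2 v hv z hzB
  cases p with
  | nil => exact absurd rfl hzv.symm
  | @cons a c b h q => exact ⟨c, hp c (by simp), h⟩

lemma exists_block_of_adj [Finite V] {x y : V} (h : G.Adj x y) :
    ∃ B : Set V, IsBlockSet G B ∧ x ∈ B ∧ y ∈ B := by
  obtain ⟨B, hsub, hB⟩ := exists_block_superset (nonsep_pair h)
  exact ⟨B, hB, hsub (by simp), hsub (by simp)⟩

lemma not_cutVtx_walk {v x y : V} (h : ¬ CutVtx G v) (hx : x ≠ v) (hy : y ≠ v) :
    ∃ p : G.Walk x y, v ∉ p.support := by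
  rw [CutVtx, not_not, induce_connected_iff] at h
  obtain ⟨p, hp⟩ := h.2 x hx y hy
  exact ⟨p, fun hv => hp v hv rfl⟩
lemma mem_support_closed_iff_tail {v : V} (c : G.Walk v v) (hc : ¬ c.Nil) (z : V) :
    z ∈ c.support ↔ z ∈ c.support.tail := by
  cases c with
  | nil => simp at hc
  | @cons a b c h q =>
    simp only [SimpleGraph.Walk.support_cons, List.tail_cons, List.mem_cons]
    constructor
    · rintro (rfl | hz)
      · exact q.end_mem_support
      · exact hz
    · intro hz; exact Or.inr hz

lemma mem_support_rotate [DecidableEq V] {u v : V} {c : G.Walk v v} (hc : c.IsCycle) (h : u ∈ c.support)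
    (z : V) : z ∈ (c.rotate u h).support ↔ z ∈ c.support := by
  have h1 := SimpleGraph.Walk.support_rotate c u h
  rw [mem_support_closed_iff_tail _ (hc.rotate h).not_nil,
    mem_support_closed_iff_tail _ hc.not_nil]
  exact h1.mem_iff

lemma conn_cycle_del [DecidableEq V] {w b : V} (h : G.Adj w b) (r : G.Walk b w)
    (hnodup : r.support.Nodup) :
    (G.induce ({z | z ∈ (SimpleGraph.Walk.cons h r).support} \ {w})).Connected := by
  cases hr' : r.reverse with
  | nil => exact (h.ne rfl).elim
  | @cons a b2 c2 h2 r2 =>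
    -- r.reverse = cons (h2 : Adj w b2) (r2 : Walk b2 b)
    have hsupr : r.support = (SimpleGraph.Walk.cons h2 r2).support.reverse := by
      rw [← hr', SimpleGraph.Walk.support_reverse, List.reverse_reverse]
    have hw_not : w ∉ r2.support := by
      rw [hsupr] at hnodup
      have h3 : (SimpleGraph.Walk.cons h2 r2).support.Nodup := List.nodup_reverse.mp hnodup
      rw [SimpleGraph.Walk.support_cons, List.nodup_cons] at h3
      exact h3.1
    have setEq : {z | z ∈ (SimpleGraph.Walk.cons h r).support} \ {w}
        = {z | z ∈ r2.support} := by
      ext z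
      simp only [Set.mem_diff, Set.mem_setOf_eq, Set.mem_singleton_iff,
        SimpleGraph.Walk.support_cons, List.mem_cons]
      constructor
      · rintro ⟨rfl | hz, hzw⟩
        · exact absurd rfl hzw
        · rw [hsupr] at hz
          simp only [List.mem_reverse, SimpleGraph.Walk.support_cons, List.mem_cons] at hz
          rcases hz with rfl | hz
          · exact absurd rfl hzw
          · exact hz
      · intro hz
        refine ⟨Or.inr ?_, fun he => hw_not (he ▸ hz)⟩
        rw [hsupr]
        simp only [List.mem_reverse, SimpleGraph.Walk.support_cons, List.mem_cons]
        exact Or.inr hz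
    rw [setEq, induce_connected_iff]
    refine ⟨⟨b, r2.end_mem_support⟩, ?_⟩
    intro x hx y hy
    refine ⟨(r2.dropUntil x hx).append (r2.dropUntil y hy).reverse, ?_⟩
    intro z hz
    rw [SimpleGraph.Walk.mem_support_append_iff] at hz
    rcases hz with hz | hz
    · exact SimpleGraph.Walk.support_dropUntil_subset _ hx hz
    · rw [SimpleGraph.Walk.support_reverse, List.mem_reverse] at hz
      exact SimpleGraph.Walk.support_dropUntil_subset _ hy hz

lemma nonsep_cycle_support [DecidableEq V] {v : V} {c : G.Walk v v} (hc : c.IsCycle) :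
    Nonsep G {z | z ∈ c.support} := by
  constructor
  · rw [induce_connected_iff]
    refine ⟨⟨v, c.start_mem_support⟩, ?_⟩
    intro x hx y hy
    have hy' : y ∈ (c.rotate x hx).support := (mem_support_rotate hc hx y).mpr hy
    refine ⟨(c.rotate x hx).takeUntil y hy', ?_⟩
    intro z hz
    exact (mem_support_rotate hc hx z).mp
      (SimpleGraph.Walk.support_takeUntil_subset _ hy' hz)
  · intro w hw
    have hdc : (c.rotate w hw).IsCycle := hc.rotate hw
    have hmem := mem_support_rotate hc hw
    have hEq : {z | z ∈ c.support} = {z | z ∈ (c.rotate w hw).support} :=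
      Set.ext fun z => (hmem z).symm
    rw [hEq]
    cases hdeq : c.rotate w hw with
    | nil =>
      rw [hdeq] at hdc
      exact absurd (by simp) hdc.not_nil
    | @cons a b c2 h r =>
      apply conn_cycle_del h r
      have := hdc.support_nodup
      rw [hdeq] at this
      simpa using this
lemma cut_of_mem_two_blocks [Finite V] {B1 B2 : Set V} (h1 : IsBlockSet G B1)
    (h2 : IsBlockSet G B2) (hne : B1 ≠ B2) {v : V} (hv1 : v ∈ B1) (hv2 : v ∈ B2) :
    CutVtx G v := by
  classical
  by_contra hnc
  obtain ⟨x, hxB, hvx⟩ := block_exists_adj h1 hv1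
  obtain ⟨y, hyB, hvy⟩ := block_exists_adj h2 hv2
  have hxy : x ≠ y := by
    rintro rfl
    exact hne (block_eq_of_two_mem h1 h2 hvx.ne ⟨hv1, hv2⟩ ⟨hxB, hyB⟩)
  obtain ⟨p0, hp0⟩ := not_cutVtx_walk hnc hvx.ne' hvy.ne'
  set Q : G.Walk x y := p0.bypass with hQ
  have hQpath : Q.IsPath := p0.bypass_isPath
  have hvQ : v ∉ Q.support := fun hmem => hp0 (p0.support_bypass_subset hmem)
  set pc : G.Walk x v := Q.concat hvy.symm with hpc
  have hpcpath : pc.IsPath := by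
    rw [SimpleGraph.Walk.isPath_def, hpc, SimpleGraph.Walk.support_concat,
      List.nodup_append]
    refine ⟨hQpath.support_nodup, List.nodup_singleton v, ?_⟩
    intro z hz
    simp only [List.mem_singleton]
    rintro _ rfl rfl
    exact hvQ hz
  have hedge : s(v, x) ∉ pc.edges := by
    rw [hpc, SimpleGraph.Walk.edges_concat, List.concat_eq_append, List.mem_append]
    rintro (he | he)
    · exact hvQ (Q.fst_mem_support_of_mem_edges he)
    · simp only [List.mem_singleton, Sym2.eq_iff] at he
      rcases he with ⟨rfl, rfl⟩ | ⟨-, rfl⟩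
      · exact hvy.ne rfl
      · exact hxy rfl
  set cyc : G.Walk v v := SimpleGraph.Walk.cons hvx pc with hcyc
  have hcycle : cyc.IsCycle := (SimpleGraph.Walk.cons_isCycle_iff pc hvx).mpr ⟨hpcpath, hedge⟩
  obtain ⟨B3, hsub, hB3⟩ := exists_block_superset (nonsep_cycle_support hcycle)
  have hvB3 : v ∈ B3 := hsub (by simp [hcyc])
  have hxB3 : x ∈ B3 := hsub (by simp [hcyc, hpc])
  have hyB3 : y ∈ B3 := by
    apply hsub
    have : y ∈ pc.support := by
      rw [hpc, SimpleGraph.Walk.support_concat]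
      exact List.mem_append_left _ Q.end_mem_support
    simp only [hcyc, Set.mem_setOf_eq, SimpleGraph.Walk.support_cons, List.mem_cons]
    exact Or.inr this
  have e1 : B3 = B1 := block_eq_of_two_mem hB3 h1 hvx.ne ⟨hvB3, hv1⟩ ⟨hxB3, hxB⟩
  have e2 : B3 = B2 := block_eq_of_two_mem hB3 h2 hvy.ne ⟨hvB3, hv2⟩ ⟨hyB3, hyB⟩
  exact hne (e1 ▸ e2)

lemma exists_boundary_of_walk {A : Set V} {x y : V} (p : G.Walk x y)
    (hx : x ∈ A) (hy : y ∉ A) : ∃ u ∈ A, ∃ w, w ∉ A ∧ G.Adj u w := by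
  induction p with
  | nil => exact absurd hx hy
  | @cons a c b h q ih =>
    by_cases hc : c ∈ A
    · exact ih hc hy
    · exact ⟨a, hx, c, hc, h⟩

lemma exists_boundary (hconn : G.Connected) {A : Set V} (hA : A.Nonempty)
    (hA2 : A ≠ Set.univ) : ∃ u ∈ A, ∃ w, w ∉ A ∧ G.Adj u w := by
  obtain ⟨x, hx⟩ := hA
  have : ∃ y, y ∉ A := by
    by_contra h
    push_neg at h
    exact hA2 (Set.eq_univ_of_forall h)
  obtain ⟨y, hy⟩ := this
  obtain ⟨p⟩ := hconn.preconnected x y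
  exact exists_boundary_of_walk p hx hy

lemma block_has_cut [Finite V] (hconn : G.Connected)
    (htwo : ∃ B1 B2 : Set V, IsBlockSet G B1 ∧ IsBlockSet G B2 ∧ B1 ≠ B2)
    {B : Set V} (hB : IsBlockSet G B) : ∃ c ∈ B, CutVtx G c := by
  by_cases huniv : B = Set.univ
  · exfalso
    obtain ⟨B1, B2, h1, h2, hne⟩ := htwo
    have e1 : B1 = Set.univ := h1.2 _ (by simp) (huniv ▸ hB.1)
    have e2 : B2 = Set.univ := h2.2 _ (by simp) (huniv ▸ hB.1)
    exact hne (e1 ▸ e2.symm ▸ rfl)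
  · obtain ⟨u, huB, w, hwB, hadj⟩ :=
      exists_boundary hconn ⟨(block_exists_pair hB).choose,
        (block_exists_pair hB).choose_spec.choose_spec.2.1⟩ huniv
    obtain ⟨B', hB', huB', hwB'⟩ := exists_block_of_adj hadj
    have hne : B ≠ B' := fun h => hwB (h ▸ hwB')
    exact ⟨u, huB, cut_of_mem_two_blocks hB hB' hne huB huB'⟩

lemma exists_shortest_path {a b : V} (h : G.Reachable a b) :
    ∃ p : G.Walk a b, p.IsPath ∧ p.length = G.dist a b := by
  classical
  obtain ⟨p, hp⟩ := h.exists_walk_length_eq_dist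
  refine ⟨p.bypass, p.bypass_isPath, le_antisymm ?_ (SimpleGraph.dist_le _)⟩
  calc p.bypass.length ≤ p.length := p.length_bypass_le
  _ = G.dist a b := hp

lemma dist_split (hconn : G.Connected) {a b c : V} (p : G.Walk a b)
    (hlen : p.length = G.dist a b) (hc : c ∈ p.support) :
    G.dist a c + G.dist c b = G.dist a b := by
  classical
  have h1 : G.dist a c ≤ (p.takeUntil c hc).length := SimpleGraph.dist_le _
  have h2 : G.dist c b ≤ (p.dropUntil c hc).length := SimpleGraph.dist_le _
  have h3 : (p.takeUntil c hc).length + (p.dropUntil c hc).length = p.length := by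
    rw [← SimpleGraph.Walk.length_append, p.take_spec hc]
  have h4 := hconn.dist_triangle (u := a) (v := c) (w := b)
  omega
lemma diff_eq_self_of_inter_empty {A C : Set V} (h : A ∩ C = ∅) : A \ C = A := by
  ext z
  simp only [Set.mem_diff]
  refine ⟨fun hz => hz.1, fun hz => ⟨hz, fun hc => ?_⟩⟩
  have hzc : z ∈ A ∩ C := ⟨hz, hc⟩
  rw [h] at hzc
  exact hzc

lemma compBipOn_symm {B V1 V2 : Set V} (h : CompBipOn G B V1 V2) : CompBipOn G B V2 V1 := by
  obtain ⟨h1, h2, hd, hu, hadj⟩ := h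
  exact ⟨h2, h1, hd.symm, by rw [Set.union_comm]; exact hu,
    fun x hx y hy => by rw [hadj x hx y hy, or_comm]⟩

lemma cut_ncard_cases [Finite V] (hG : ClassB G) {B : Set V} (hB : IsBlockSet G B) :
    (B ∩ cutSet G).ncard = 1 ∨ (B ∩ cutSet G).ncard = 2 := by
  obtain ⟨c, hcB, hcut⟩ := block_has_cut hG.1.1 hG.2.1 hB
  have hpos : 0 < (B ∩ cutSet G).ncard :=
    (Set.ncard_pos (Set.toFinite _)).mpr ⟨c, hcB, hcut⟩
  have hle := hG.2.2 B hB
  omega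

lemma bcut_split {B V1 V2 : Set V} (hbip : CompBipOn G B V1 V2) :
    B ∩ cutSet G = (V1 ∩ cutSet G) ∪ (V2 ∩ cutSet G) := by
  rw [← hbip.2.2.2.1, Set.union_inter_distrib_right]

lemma exists_S_V2 [Finite V] {S : Set V} (hG : ClassB G) (hS : AssocSet G S)
    {B V1 V2 : Set V} (hB : IsBlockSet G B) (hbip : CompBipOn G B V1 V2) :
    ∃ w, w ∈ S ∧ w ∈ V2 := by
  have clauses := hS.2 B V1 V2 hB hbip
  by_cases hk : V1.ncard = 1 ∧ V2.ncard = 1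
  · obtain ⟨w, hw⟩ := hbip.2.1
    exact ⟨w, clauses.1 hk (hbip.2.2.2.1 ▸ Set.mem_union_right _ hw), hw⟩
  · by_cases hc2 : (V2 ∩ cutSet G).Nonempty
    · obtain ⟨w, hwV2, hwcut⟩ := hc2
      exact ⟨w, hS.1 w hwcut, hwV2⟩
    · have hempty : V2 ∩ cutSet G = ∅ := Set.not_nonempty_iff_eq_empty.mp hc2
      have hBcut : B ∩ cutSet G = V1 ∩ cutSet G := by
        rw [bcut_split hbip, hempty, Set.union_empty]
      rcases cut_ncard_cases hG hB with h1 | h2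
      · obtain ⟨-, hV2⟩ := (clauses.2 hk).1 h1
        obtain ⟨w, hw⟩ := Set.ncard_eq_one.mp hV2
        have : w ∈ S ∩ (V2 \ cutSet G) := hw ▸ rfl
        exact ⟨w, this.1, this.2.1⟩
      · have hV1 : (V1 ∩ cutSet G).ncard = 2 := hBcut ▸ h2
        obtain ⟨hV2, -⟩ := ((clauses.2 hk).2 h2).1 hV1
        obtain ⟨w, hw⟩ := Set.ncard_eq_one.mp hV2
        have : w ∈ S ∩ (V2 \ cutSet G) := hw ▸ rfl
        exact ⟨w, this.1, this.2.1⟩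

lemma S_inter_le_one [Finite V] {S : Set V} (hG : ClassB G) (hS : AssocSet G S)
    {B V1 V2 : Set V} (hB : IsBlockSet G B) (hbip : CompBipOn G B V1 V2) :
    (S ∩ V1).ncard ≤ 1 ∨ (S ∩ V2).ncard ≤ 1 := by
  by_cases hk : V1.ncard = 1 ∧ V2.ncard = 1
  · left
    calc (S ∩ V1).ncard ≤ V1.ncard := Set.ncard_le_ncard Set.inter_subset_right (Set.toFinite _)
    _ = 1 := hk.1
  · have clauses := hS.2 B V1 V2 hB hbip
    have hdisj' : Disjoint (V1 ∩ cutSet G) (V2 ∩ cutSet G) :=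
      (hbip.2.2.1.mono Set.inter_subset_left Set.inter_subset_left)
    rcases cut_ncard_cases hG hB with h1 | h2
    · obtain ⟨c, hc⟩ := Set.ncard_eq_one.mp h1
      have hcB : c ∈ B ∩ cutSet G := hc ▸ rfl
      have hcB' : c ∈ V1 ∪ V2 := hbip.2.2.2.1.symm ▸ hcB.1
      rcases hcB' with hcV1 | hcV2
      · right
        have hV2cut : V2 ∩ cutSet G = ∅ := by
          ext z
          simp only [Set.mem_inter_iff, Set.mem_empty_iff_false, iff_false, not_and]
          intro hzV2 hzcut
          have : z ∈ B ∩ cutSet G := ⟨hbip.2.2.2.1 ▸ Set.mem_union_right _ hzV2, hzcut⟩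
          rw [hc] at this
          exact hbip.2.2.1.ne_of_mem hcV1 hzV2 this.symm
        have hV2eq : V2 \ cutSet G = V2 := diff_eq_self_of_inter_empty hV2cut
        have := ((clauses.2 hk).1 h1).2
        rw [hV2eq] at this
        exact this.le
      · left
        have hV1cut : V1 ∩ cutSet G = ∅ := by
          ext z
          simp only [Set.mem_inter_iff, Set.mem_empty_iff_false, iff_false, not_and]
          intro hzV1 hzcut
          have : z ∈ B ∩ cutSet G := ⟨hbip.2.2.2.1 ▸ Set.mem_union_left _ hzV1, hzcut⟩
          rw [hc] at this
          exact hbip.2.2.1.ne_of_mem hzV1 hcV2 this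
        have hV1eq : V1 \ cutSet G = V1 := diff_eq_self_of_inter_empty hV1cut
        have := ((clauses.2 hk).1 h1).1
        rw [hV1eq] at this
        exact this.le
    · have hsum : (V1 ∩ cutSet G).ncard + (V2 ∩ cutSet G).ncard = 2 := by
        rw [← Set.ncard_union_eq hdisj' (Set.toFinite _) (Set.toFinite _), ← bcut_split hbip]
        exact h2
      have hcases : (V1 ∩ cutSet G).ncard = 2 ∨ (V1 ∩ cutSet G).ncard = 0 ∨
          ((V1 ∩ cutSet G).ncard = 1 ∧ (V2 ∩ cutSet G).ncard = 1) := by omega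
      rcases hcases with hA | hB0 | hC
      · right
        have hV2cut : V2 ∩ cutSet G = ∅ := by
          have : (V2 ∩ cutSet G).ncard = 0 := by omega
          exact (Set.ncard_eq_zero (Set.toFinite _)).mp this
        have hV2eq : V2 \ cutSet G = V2 := diff_eq_self_of_inter_empty hV2cut
        have := (((clauses.2 hk).2 h2).1 hA).1
        rw [hV2eq] at this
        exact this.le
      · left
        have hV2 : (V2 ∩ cutSet G).ncard = 2 := by omega
        have hV1cut : V1 ∩ cutSet G = ∅ := (Set.ncard_eq_zero (Set.toFinite _)).mp hB0
        have hV1eq : V1 \ cutSet G = V1 := diff_eq_self_of_inter_empty hV1cut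
        have := (((clauses.2 hk).2 h2).2.1 hV2).1
        rw [hV1eq] at this
        exact this.le
      · left
        have hempty := ((clauses.2 hk).2 h2).2.2 hC
        have hsub : S ∩ V1 ⊆ V1 ∩ cutSet G := by
          rintro z ⟨hzS, hzV1⟩
          refine ⟨hzV1, ?_⟩
          by_contra hzc
          have : z ∈ S ∩ (B \ cutSet G) :=
            ⟨hzS, hbip.2.2.2.1 ▸ Set.mem_union_left _ hzV1, hzc⟩
          rw [hempty] at this
          exact this
        calc (S ∩ V1).ncard ≤ (V1 ∩ cutSet G).ncard :=
          Set.ncard_le_ncard hsub (Set.toFinite _)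
        _ = 1 := hC.1
lemma find_exit {A : Set V} {x y : V} (q : G.Walk x y) :
    x ∈ A → y ∉ A → ∃ c, c ∈ q.support ∧ c ∈ A ∧ ∃ w, w ∉ A ∧ G.Adj c w := by
  induction q with
  | nil => intro hx hy; exact absurd hx hy
  | @cons a u b h r ih =>
    intro hx hy
    by_cases hu : u ∈ A
    · obtain ⟨c, hc1, hc2, hw⟩ := ih hu hy
      exact ⟨c, by simp [hc1], hc2, hw⟩
    · exact ⟨a, by simp, hx, u, hu, h⟩

lemma key [Finite V] {S : Set V} (hG : ClassB G) (hS : AssocSet G S) :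
    ∀ n (a b : V) (ha : a ∈ S) (hb : b ∈ S), G.dist a b = n →
    ∃ p : (G.induce S).Walk ⟨a, ha⟩ ⟨b, hb⟩, p.length = n := by
  classical
  intro n
  induction n using Nat.strong_induction_on with
  | _ n ih =>
    intro a b ha hb hdist
    have hconn := hG.1.1
    by_cases hab : a = b
    · subst hab
      have hn : n = 0 := by rw [← hdist, SimpleGraph.dist_self]
      exact ⟨SimpleGraph.Walk.nil, by simp [hn]⟩
    · have hreach : G.Reachable a b := hconn.preconnected a b
      by_cases hcom : ∃ B, IsBlockSet G B ∧ a ∈ B ∧ b ∈ B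
      · obtain ⟨B, hB, haB, hbB⟩ := hcom
        obtain ⟨V1, V2, hbip⟩ := hG.1.2 B hB
        by_cases hadj : G.Adj a b
        · have hn : n = 1 := by
            rw [← hdist, SimpleGraph.dist_eq_one_iff_adj]
            exact hadj
          have hadj' : (G.induce S).Adj ⟨a, ha⟩ ⟨b, hb⟩ := hadj
          exact ⟨SimpleGraph.Walk.cons hadj' SimpleGraph.Walk.nil, by simp [hn]⟩
        · have haB' : a ∈ V1 ∪ V2 := by rw [hbip.2.2.2.1]; exact haB
          have hbB' : b ∈ V1 ∪ V2 := by rw [hbip.2.2.2.1]; exact hbB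
          have hiff := hbip.2.2.2.2
          have same : (a ∈ V1 ∧ b ∈ V1) ∨ (a ∈ V2 ∧ b ∈ V2) := by
            rcases haB' with h1 | h1 <;> rcases hbB' with h2 | h2
            · exact Or.inl ⟨h1, h2⟩
            · exact absurd ((hiff a haB b hbB).mpr (Or.inl ⟨h1, h2⟩)) hadj
            · exact absurd ((hiff a haB b hbB).mpr (Or.inr ⟨h1, h2⟩)) hadj
            · exact Or.inr ⟨h1, h2⟩
          have hmid : ∃ w, w ∈ S ∧ G.Adj a w ∧ G.Adj w b := by
            rcases same with ⟨h1, h2⟩ | ⟨h1, h2⟩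
            · obtain ⟨w, hwS, hwV2⟩ := exists_S_V2 hG hS hB hbip
              have hwB : w ∈ B := by rw [← hbip.2.2.2.1]; exact Or.inr hwV2
              exact ⟨w, hwS, (hiff a haB w hwB).mpr (Or.inl ⟨h1, hwV2⟩),
                (hiff w hwB b hbB).mpr (Or.inr ⟨hwV2, h2⟩)⟩
            · obtain ⟨w, hwS, hwV1⟩ := exists_S_V2 hG hS hB (compBipOn_symm hbip)
              have hwB : w ∈ B := by rw [← hbip.2.2.2.1]; exact Or.inl hwV1
              exact ⟨w, hwS, (hiff a haB w hwB).mpr (Or.inr ⟨h1, hwV1⟩),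
                (hiff w hwB b hbB).mpr (Or.inl ⟨hwV1, h2⟩)⟩
          obtain ⟨w, hwS, haw, hwb⟩ := hmid
          have hn : n = 2 := by
            have hle : G.dist a b ≤ 2 := by
              have := SimpleGraph.dist_le
                (SimpleGraph.Walk.cons haw (SimpleGraph.Walk.cons hwb SimpleGraph.Walk.nil))
              simpa using this
            have hpos : 0 < G.dist a b := hreach.pos_dist_of_ne hab
            have hne1 : G.dist a b ≠ 1 := fun h =>
              hadj (SimpleGraph.dist_eq_one_iff_adj.mp h)
            omega
          have haw' : (G.induce S).Adj ⟨a, ha⟩ ⟨w, hwS⟩ := haw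
          have hwb' : (G.induce S).Adj ⟨w, hwS⟩ ⟨b, hb⟩ := hwb
          exact ⟨SimpleGraph.Walk.cons haw'
            (SimpleGraph.Walk.cons hwb' SimpleGraph.Walk.nil), by simp [hn]⟩
      · obtain ⟨p, hppath, hplen⟩ := exists_shortest_path hreach
        cases p with
        | nil => exact absurd rfl hab
        | @cons a' x b' hax q =>
          obtain ⟨B, hB, haB, hxB⟩ := exists_block_of_adj hax
          have hbB : b ∉ B := fun h => hcom ⟨B, hB, haB, h⟩
          obtain ⟨c, hcq, hcB, w, hwB, hcw⟩ := find_exit q hxB hbB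
          obtain ⟨B', hB', hcB', hwB'⟩ := exists_block_of_adj hcw
          have hBne : B ≠ B' := fun h => hwB (h ▸ hwB')
          have hccut : CutVtx G c := cut_of_mem_two_blocks hB hB' hBne hcB hcB'
          have hcS : c ∈ S := hS.1 c hccut
          have hca : a ≠ c := by
            rintro rfl
            exact (SimpleGraph.Walk.cons_isPath_iff _ _).mp hppath |>.2 hcq
          have hcb : c ≠ b := fun h => hbB (h ▸ hcB)
          have hcp : c ∈ (SimpleGraph.Walk.cons hax q).support := by
            simp only [SimpleGraph.Walk.support_cons, List.mem_cons]
            exact Or.inr hcq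
          have hsplit := dist_split hconn _ hplen hcp
          have d1pos : 0 < G.dist a c := (hconn.preconnected a c).pos_dist_of_ne hca
          have d2pos : 0 < G.dist c b := (hconn.preconnected c b).pos_dist_of_ne hcb
          have hd1 : G.dist a c < n := by omega
          have hd2 : G.dist c b < n := by omega
          obtain ⟨p1, hp1⟩ := ih (G.dist a c) hd1 a c ha hcS rfl
          obtain ⟨p2, hp2⟩ := ih (G.dist c b) hd2 c b hcS hb rfl
          refine ⟨p1.append p2, ?_⟩
          rw [SimpleGraph.Walk.length_append, hp1, hp2]
          omega

lemma no_cycle_in_block [Finite V] {S : Set V} (hG : ClassB G) (hS : AssocSet G S)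
    {B V1 V2 : Set V} (hB : IsBlockSet G B) (hbip : CompBipOn G B V1 V2)
    {v : V} (c' : G.Walk v v) (hc' : c'.IsCycle)
    (hSsup : ∀ z ∈ c'.support, z ∈ S) (hBsup : ∀ z ∈ c'.support, z ∈ B)
    (hv1 : v ∈ V1) : False := by
  have hiff := hbip.2.2.2.2
  have hdisj := hbip.2.2.1
  cases c' with
  | nil => exact hc'.not_nil (by simp)
  | @cons _ a1 _ h1 r1 =>
    cases r1 with
    | nil => exact h1.ne rfl
    | @cons _ a2 _ h2 r2 =>
      cases r2 with
      | nil =>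
        have := hc'.three_le_length
        simp at this
      | @cons _ a3 _ h3 r3 =>
        have hvsup : v ∈ (SimpleGraph.Walk.cons h1 (SimpleGraph.Walk.cons h2
            (SimpleGraph.Walk.cons h3 r3))).support := by simp
        have ha1sup : a1 ∈ (SimpleGraph.Walk.cons h1 (SimpleGraph.Walk.cons h2
            (SimpleGraph.Walk.cons h3 r3))).support := by simp
        have ha2sup : a2 ∈ (SimpleGraph.Walk.cons h1 (SimpleGraph.Walk.cons h2
            (SimpleGraph.Walk.cons h3 r3))).support := by simp
        have ha3sup : a3 ∈ (SimpleGraph.Walk.cons h1 (SimpleGraph.Walk.cons h2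
            (SimpleGraph.Walk.cons h3 r3))).support := by
          simp [SimpleGraph.Walk.start_mem_support]
        have hvB := hBsup v hvsup
        have ha1B := hBsup a1 ha1sup
        have ha2B := hBsup a2 ha2sup
        have ha3B := hBsup a3 ha3sup
        have notV2 : v ∉ V2 := fun h => hdisj.ne_of_mem hv1 h rfl
        have ha1V2 : a1 ∈ V2 := by
          rcases (hiff v hvB a1 ha1B).mp h1 with ⟨-, h⟩ | ⟨h, -⟩
          · exact h
          · exact absurd h notV2
        have ha1notV1 : a1 ∉ V1 := fun h => hdisj.ne_of_mem h ha1V2 rfl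
        have ha2V1 : a2 ∈ V1 := by
          rcases (hiff a1 ha1B a2 ha2B).mp h2 with ⟨h, -⟩ | ⟨-, h⟩
          · exact absurd h ha1notV1
          · exact h
        have ha2notV2 : a2 ∉ V2 := fun h => hdisj.ne_of_mem ha2V1 h rfl
        have ha3V2 : a3 ∈ V2 := by
          rcases (hiff a2 ha2B a3 ha3B).mp h3 with ⟨-, h⟩ | ⟨h, -⟩
          · exact h
          · exact absurd h ha2notV2
        cases r3 with
        | nil => exact notV2 ha3V2
        | @cons _ a4 _ h4 r4 =>
          -- distinctness from the nodup of the cycle support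
          have hnodup := hc'.support_nodup
          simp only [SimpleGraph.Walk.support_cons, List.tail_cons, List.nodup_cons,
            List.mem_cons] at hnodup
          have hvr4 : v ∈ r4.support := r4.end_mem_support
          have hne13 : a1 ≠ a3 := by
            intro h
            exact hnodup.1 (Or.inr (Or.inl h))
          have hne2v : a2 ≠ v := by
            intro h
            exact hnodup.2.1 (Or.inr (by rw [h]; exact hvr4))
          have hS1 : 1 < (S ∩ V1).ncard := by
            rw [Set.one_lt_ncard (Set.toFinite _)]
            refine ⟨v, ⟨hSsup v hvsup, hv1⟩, a2, ⟨hSsup a2 ha2sup, ha2V1⟩, fun h => hne2v h.symm⟩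
          have hS2 : 1 < (S ∩ V2).ncard := by
            rw [Set.one_lt_ncard (Set.toFinite _)]
            refine ⟨a1, ⟨hSsup a1 ha1sup, ha1V2⟩, a3, ⟨hSsup a3 ha3sup, ha3V2⟩, hne13⟩
          rcases S_inter_le_one hG hS hB hbip with h | h <;> omega

lemma acyclic [Finite V] {S : Set V} (hG : ClassB G) (hS : AssocSet G S) :
    (G.induce S).IsAcyclic := by
  classical
  intro v c hc
  have hinj : Function.Injective (SimpleGraph.Embedding.induce (G := G) S).toHom :=
    (SimpleGraph.Embedding.induce (G := G) S).injective
  set c' := c.map (SimpleGraph.Embedding.induce (G := G) S).toHom with hc'def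
  have hcyc : c'.IsCycle := hc.map hinj
  have hSsup : ∀ z ∈ c'.support, z ∈ S := by
    intro z hz
    rw [hc'def, SimpleGraph.Walk.support_map, List.mem_map] at hz
    obtain ⟨w, -, rfl⟩ := hz
    exact w.2
  obtain ⟨B, hsub, hB⟩ := exists_block_superset (nonsep_cycle_support hcyc)
  obtain ⟨V1, V2, hbip⟩ := hG.1.2 B hB
  have hBsup : ∀ z ∈ c'.support, z ∈ B := fun z hz => hsub hz
  have hvB : (v : V) ∈ B := hBsup _ c'.start_mem_support
  have hvB' : (v : V) ∈ V1 ∪ V2 := by rw [hbip.2.2.2.1]; exact hvB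
  rcases hvB' with hv | hv
  · exact no_cycle_in_block hG hS hB hbip c' hcyc hSsup hBsup hv
  · exact no_cycle_in_block hG hS hB (compBipOn_symm hbip) c' hcyc hSsup hBsup hv
end Aux

theorem stmt_3 {V : Type*} [Fintype V] (G : SimpleGraph V) (hG : ClassB G)
    (S : Set V) (hS : AssocSet G S) :
    (G.induce S).IsTree ∧ ∀ a b : S, (G.induce S).dist a b = G.dist a.1 b.1 := by
  classical
  have hT : ∀ a b : S, ∃ p : (G.induce S).Walk a b, p.length = G.dist a.1 b.1 := by
    rintro ⟨a, ha⟩ ⟨b, hb⟩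
    exact Aux.key hG hS (G.dist a b) a b ha hb rfl
  constructor
  · constructor
    · rw [SimpleGraph.connected_iff]
      constructor
      · intro a b
        obtain ⟨p, -⟩ := hT a b
        exact ⟨p⟩
      · obtain ⟨B1, B2, h1, h2, hne⟩ := hG.2.1
        obtain ⟨c, hcB, hcut⟩ := Aux.block_has_cut hG.1.1 hG.2.1 h1
        exact ⟨⟨c, hS.1 c hcut⟩⟩
    · exact Aux.acyclic hG hS
  · intro a b
    obtain ⟨p, hp⟩ := hT a b
    apply le_antisymm
    · calc (G.induce S).dist a b ≤ p.length := SimpleGraph.dist_le p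
      _ = G.dist a.1 b.1 := hp
    · have hreach : (G.induce S).Reachable a b := ⟨p⟩
      obtain ⟨q, hq⟩ := hreach.exists_walk_length_eq_dist
      calc G.dist a.1 b.1
          ≤ (q.map (SimpleGraph.Embedding.induce (G := G) S).toHom).length :=
            SimpleGraph.dist_le _
        _ = q.length := SimpleGraph.Walk.length_map _ _
        _ = (G.induce S).dist a b := hq
end

section
/- Let G be a bi-block graph in class B and T_G its associated tree. For all vertices a, b of G there exist vertices a', b' of T_G with d_G(a,b) = d_G(a',b'). -/
open SimpleGraph

variable {V : Type*}

namespace BW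


variable {G : SimpleGraph V}

/-- two vertices are joined by a walk staying inside `s`. -/
def InW (G : SimpleGraph V) (s : Set V) (x y : V) : Prop :=
  ∃ p : G.Walk x y, ∀ v ∈ p.support, v ∈ s

/-- the induced subgraph on `s` is connected. -/
def Conn (G : SimpleGraph V) (s : Set V) : Prop := (G.induce s).Connected

lemma InW.mem_left {s : Set V} {x y : V} (h : InW G s x y) : x ∈ s := by
  obtain ⟨p, hp⟩ := h; exact hp x p.start_mem_support

lemma InW.mem_right {s : Set V} {x y : V} (h : InW G s x y) : y ∈ s := by
  obtain ⟨p, hp⟩ := h; exact hp y p.end_mem_support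

lemma InW.refl {s : Set V} {x : V} (hx : x ∈ s) : InW G s x x :=
  ⟨Walk.nil, by simpa using hx⟩

lemma InW.symm {s : Set V} {x y : V} (h : InW G s x y) : InW G s y x := by
  obtain ⟨p, hp⟩ := h
  exact ⟨p.reverse, by intro v hv; rw [Walk.support_reverse] at hv; exact hp v (by simpa using hv)⟩

lemma InW.trans {s : Set V} {x y z : V} (h : InW G s x y) (h' : InW G s y z) : InW G s x z := by
  obtain ⟨p, hp⟩ := h; obtain ⟨q, hq⟩ := h'
  refine ⟨p.append q, ?_⟩
  intro v hv
  rcases (Walk.mem_support_append_iff _ _).mp hv with h | h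
  · exact hp v h
  · exact hq v h

lemma InW.mono {s t : Set V} (hst : s ⊆ t) {x y : V} (h : InW G s x y) : InW G t x y := by
  obtain ⟨p, hp⟩ := h; exact ⟨p, fun v hv => hst (hp v hv)⟩

lemma reachable_of_inW {s : Set V} {x y : V} (h : InW G s x y) (hx : x ∈ s) (hy : y ∈ s) :
    (G.induce s).Reachable ⟨x, hx⟩ ⟨y, hy⟩ := by
  obtain ⟨p, hp⟩ := h
  induction p with
  | nil => rfl
  | @cons a b c hadj q ih =>
    have hb : b ∈ s := hp b (by simp)
    have h1 : (G.induce s).Adj ⟨a, hx⟩ ⟨b, hb⟩ := hadj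
    exact (h1.reachable).trans (ih hb hy (fun v hv => hp v (by simp [hv])))

lemma conn_iff {s : Set V} :
    Conn G s ↔ s.Nonempty ∧ ∀ x ∈ s, ∀ y ∈ s, InW G s x y := by
  constructor
  · intro h
    refine ⟨?_, ?_⟩
    · obtain ⟨⟨x, hx⟩⟩ := h.nonempty
      exact ⟨x, hx⟩
    · intro x hx y hy
      obtain ⟨W⟩ := h.preconnected ⟨x, hx⟩ ⟨y, hy⟩
      refine ⟨W.map (SimpleGraph.Embedding.induce s).toHom, ?_⟩
      intro v hv
      change v ∈ (W.map (SimpleGraph.Embedding.induce s).toHom).support at hv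
      rw [Walk.support_map, List.mem_map] at hv
      obtain ⟨⟨u, hu⟩, _, rfl⟩ := hv
      exact hu
  · rintro ⟨⟨x0, hx0⟩, h⟩
    have : Nonempty s := ⟨⟨x0, hx0⟩⟩
    exact ⟨fun ⟨x, hx⟩ ⟨y, hy⟩ => reachable_of_inW (h x hx y hy) hx hy⟩

/-- removing a vertex from an induced set. -/
def induceDiffIso (s : Set V) (w : s) :
    ((G.induce s).induce ({w}ᶜ : Set s)) ≃g (G.induce (s \ {(w : V)})) where
  toFun x := ⟨x.1.1, x.1.2, fun h => x.2 (by simpa [Subtype.ext_iff] using h)⟩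
  invFun x := ⟨⟨x.1, x.2.1⟩, fun h => x.2.2 (by simpa [Subtype.ext_iff] using h)⟩
  left_inv x := rfl
  right_inv x := rfl
  map_rel_iff' := Iff.rfl

lemma conn_del_iff {s : Set V} (w : s) :
    ((G.induce s).induce ({w}ᶜ : Set s)).Connected ↔ Conn G (s \ {(w : V)}) :=
  (induceDiffIso s w).connected_iff

lemma noCutVtx_induce_iff {s : Set V} :
    NoCutVtx (G.induce s) ↔ Conn G s ∧ ∀ w ∈ s, Conn G (s \ {w}) := by
  unfold NoCutVtx
  constructor
  · rintro ⟨h1, h2⟩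
    exact ⟨h1, fun w hw => (conn_del_iff ⟨w, hw⟩).mp (h2 ⟨w, hw⟩)⟩
  · rintro ⟨h1, h2⟩
    exact ⟨h1, fun w => (conn_del_iff w).mpr (h2 w w.2)⟩

lemma nocut_del {s : Set V} (h : NoCutVtx (G.induce s)) (w : V) : Conn G (s \ {w}) := by
  by_cases hw : w ∈ s
  · exact (noCutVtx_induce_iff.mp h).2 w hw
  · rw [Set.diff_singleton_eq_self hw]
    exact (noCutVtx_induce_iff.mp h).1

lemma conn_union {s t : Set V} (hs : Conn G s) (ht : Conn G t) (h : (s ∩ t).Nonempty) :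
    Conn G (s ∪ t) := by
  obtain ⟨c, hcs, hct⟩ := h
  rw [conn_iff] at hs ht ⊢
  refine ⟨⟨c, Or.inl hcs⟩, ?_⟩
  have key : ∀ x ∈ s ∪ t, InW G (s ∪ t) x c := by
    rintro x (hx | hx)
    · exact (hs.2 x hx c hcs).mono Set.subset_union_left
    · exact (ht.2 x hx c hct).mono Set.subset_union_right
  intro x hx y hy
  exact (key x hx).trans (key y hy).symm

lemma nocut_union {s t : Set V} (hs : NoCutVtx (G.induce s)) (ht : NoCutVtx (G.induce t))
    {x y : V} (hx : x ∈ s ∩ t) (hy : y ∈ s ∩ t) (hxy : x ≠ y) :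
    NoCutVtx (G.induce (s ∪ t)) := by
  rw [noCutVtx_induce_iff]
  constructor
  · exact conn_union (noCutVtx_induce_iff.mp hs).1 (noCutVtx_induce_iff.mp ht).1 ⟨x, hx⟩
  · intro w _
    have : (s ∪ t) \ {w} = (s \ {w}) ∪ (t \ {w}) := Set.union_diff_distrib
    rw [this]
    refine conn_union (nocut_del hs w) (nocut_del ht w) ?_
    rcases eq_or_ne x w with rfl | hxw
    · exact ⟨y, ⟨hy.1, hxy.symm⟩, ⟨hy.2, hxy.symm⟩⟩
    · exact ⟨x, ⟨hx.1, hxw⟩, ⟨hx.2, hxw⟩⟩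

lemma exists_block_superset [Fintype V] {s : Set V} (h : NoCutVtx (G.induce s)) :
    ∃ B : Set V, s ⊆ B ∧ IsBlockSet G B := by
  classical
  have hfin : ({C : Set V | s ⊆ C ∧ NoCutVtx (G.induce C)}).Finite := Set.toFinite _
  obtain ⟨B, hB, hmax⟩ := Set.Finite.exists_maximalFor id _ hfin ⟨s, subset_rfl, h⟩
  refine ⟨B, hB.1, hB.2, ?_⟩
  intro C hBC hC
  exact Set.Subset.antisymm hBC (hmax ⟨hB.1.trans hBC, hC⟩ hBC)

lemma conn_singleton (a : V) : Conn G {a} := by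
  rw [conn_iff]
  refine ⟨⟨a, rfl⟩, ?_⟩
  rintro x rfl y rfl
  exact InW.refl rfl

lemma pair_noCutVtx {x y : V} (h : G.Adj x y) : NoCutVtx (G.induce {x, y}) := by
  have hxy : x ≠ y := h.ne
  rw [noCutVtx_induce_iff]
  constructor
  · rw [conn_iff]
    refine ⟨⟨x, Or.inl rfl⟩, ?_⟩
    have hx : (x : V) ∈ ({x, y} : Set V) := Or.inl rfl
    have hy : (y : V) ∈ ({x, y} : Set V) := Or.inr rfl
    have hxyW : InW G {x, y} x y := ⟨Walk.cons h Walk.nil, by intro v hv; simpa using hv⟩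
    rintro a (rfl | rfl) b (rfl | rfl)
    · exact InW.refl hx
    · exact hxyW
    · exact hxyW.symm
    · exact InW.refl hy
  · intro w hw
    rcases hw with rfl | rfl
    · have heq : ({w, y} : Set V) \ {w} = {y} := by
        ext v
        simp only [Set.mem_diff, Set.mem_insert_iff, Set.mem_singleton_iff]
        constructor
        · rintro ⟨rfl | rfl, h2⟩
          · exact absurd rfl h2
          · rfl
        · rintro rfl
          exact ⟨Or.inr rfl, fun h2 => hxy h2.symm⟩
      rw [heq]; exact conn_singleton y
    · have heq : ({x, w} : Set V) \ {w} = {x} := by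
        ext v
        simp only [Set.mem_diff, Set.mem_insert_iff, Set.mem_singleton_iff]
        constructor
        · rintro ⟨rfl | rfl, h2⟩
          · rfl
          · exact absurd rfl h2
        · rintro rfl
          exact ⟨Or.inl rfl, fun h2 => hxy h2⟩
      rw [heq]; exact conn_singleton x

lemma exists_adj (hGc : G.Connected) [Nontrivial V] (a : V) : ∃ z, G.Adj a z := by
  obtain ⟨b, hb⟩ := exists_ne a
  obtain ⟨p⟩ := hGc.preconnected a b
  cases p with
  | nil => exact absurd rfl hb.symm
  | cons h q => exact ⟨_, h⟩

lemma exists_block_mem [Fintype V] (hGc : G.Connected) [Nontrivial V] (a : V) :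
    ∃ B : Set V, a ∈ B ∧ IsBlockSet G B := by
  obtain ⟨z, hz⟩ := exists_adj hGc a
  obtain ⟨B, hsub, hB⟩ := exists_block_superset (pair_noCutVtx hz)
  exact ⟨B, hsub (Or.inl rfl), hB⟩

/-- first visit of a walk to a set. -/
lemma first_visit {s : Set V} {z b : V} (p : G.Walk z b) (hb : b ∈ s) :
    ∃ c ∈ s, ∃ q : G.Walk z c, (∀ v ∈ q.support, v ∈ s → v = c) ∧
      (∀ v ∈ q.support, v ∈ p.support) := by
  induction p with
  | nil => exact ⟨_, hb, Walk.nil, by simp, by simp⟩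
  | @cons a c d hadj q ih =>
    by_cases ha : a ∈ s
    · exact ⟨a, ha, Walk.nil, by simp, by simp⟩
    · obtain ⟨c0, hc0, q0, hq0, hsub⟩ := ih hb
      refine ⟨c0, hc0, Walk.cons hadj q0, ?_, ?_⟩
      · intro v hv hvs
        rw [Walk.support_cons, List.mem_cons] at hv
        rcases hv with rfl | hv
        · exact absurd hvs ha
        · exact hq0 v hv hvs
      · intro v hv
        rw [Walk.support_cons, List.mem_cons] at hv
        rcases hv with rfl | hv
        · simp
        · simp [hsub v hv]


lemma conn_univ (hGc : G.Connected) : Conn G Set.univ :=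
  (induceUnivIso G).connected_iff.mpr hGc

lemma block_two (hG : ClassB G) {B : Set V} (hB : IsBlockSet G B) (v : V) :
    ∃ b ∈ B, b ≠ v := by
  obtain ⟨V1, V2, h1, h2, hdisj, hunion, _⟩ := hG.1.2 B hB
  obtain ⟨x1, hx1⟩ := h1
  obtain ⟨x2, hx2⟩ := h2
  have hne : x1 ≠ x2 := fun h => (Set.disjoint_left.mp hdisj hx1) (h ▸ hx2)
  have hx1B : x1 ∈ B := hunion ▸ Or.inl hx1
  have hx2B : x2 ∈ B := hunion ▸ Or.inr hx2
  rcases eq_or_ne x1 v with rfl | h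
  · exact ⟨x2, hx2B, hne.symm⟩
  · exact ⟨x1, hx1B, h⟩

lemma nontrivial_of_classB (hG : ClassB G) : Nontrivial V := by
  obtain ⟨B1, B2, hB1, _, _⟩ := hG.2.1
  obtain ⟨V1, V2, h1, h2, hdisj, _, _⟩ := hG.1.2 B1 hB1
  obtain ⟨x1, hx1⟩ := h1
  obtain ⟨x2, hx2⟩ := h2
  exact ⟨x1, x2, fun h => (Set.disjoint_left.mp hdisj hx1) (h ▸ hx2)⟩

lemma append_path {u v w : V} {p : G.Walk u v} {q : G.Walk v w}
    (hp : p.IsPath) (hq : q.IsPath) (hmid : ∀ a ∈ p.support, a ∈ q.support → a = v) :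
    (p.append q).IsPath := by
  rw [Walk.isPath_def, Walk.support_append]
  have hnp : p.support.Nodup := by rwa [Walk.isPath_def] at hp
  have hnq : q.support.Nodup := by rwa [Walk.isPath_def] at hq
  have hqc : q.support = v :: q.support.tail := q.support_eq_cons
  have hnt : q.support.tail.Nodup := by
    rw [hqc] at hnq; exact hnq.of_cons
  have hvt : v ∉ q.support.tail := by
    rw [hqc] at hnq; exact (List.nodup_cons.mp hnq).1
  refine hnp.append hnt ?_
  intro a ha hat
  have haq : a ∈ q.support := by rw [hqc]; exact List.mem_cons_of_mem _ hat
  have : a = v := hmid a ha haq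
  exact hvt (this ▸ hat)

lemma split_avoid [DecidableEq V] {v v' : V} {p : G.Walk v v'} (hp : p.IsPath) {u : V} (hu : u ∈ p.support)
    {w : V} (hw : w ≠ u) :
    w ∉ (p.takeUntil u hu).support ∨ w ∉ (p.dropUntil u hu).support := by
  by_contra hcon
  push_neg at hcon
  obtain ⟨h1, h2⟩ := hcon
  have hsp : ((p.takeUntil u hu).append (p.dropUntil u hu)).IsPath := by
    rw [Walk.take_spec]; exact hp
  rw [Walk.isPath_def, Walk.support_append] at hsp
  have hdisj := List.disjoint_of_nodup_append hsp
  have h2t : w ∈ (p.dropUntil u hu).support.tail := by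
    have hc := (p.dropUntil u hu).support_eq_cons
    rw [hc, List.mem_cons] at h2
    rcases h2 with h2 | h2
    · exact absurd h2 hw
    · exact h2
  exact hdisj h1 h2t

lemma ear [DecidableEq V] (hGc : G.Connected) {B : Set V} (hB : IsBlockSet G B)
    {v v' : V} (p : G.Walk v v') (hp : p.IsPath) (hv : v ∈ B) (hv' : v' ∈ B)
    (hne : v ≠ v') {t : V} (ht : t ∈ p.support) (htB : t ∉ B) : False := by
  classical
  set C : Set V := B ∪ {x | x ∈ p.support} with hC
  have hBC : B ⊆ C := Set.subset_union_left
  have hsupC : ∀ x ∈ p.support, x ∈ C := fun x hx => Or.inr hx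
  have anchor : ∀ w : V, (if w = v then v' else v) ∈ C \ {w} := by
    intro w
    constructor
    · split <;> [exact hBC hv'; exact hBC hv]
    · split
      · rename_i h; simp only [Set.mem_singleton_iff]; rw [h]; exact hne.symm
      · rename_i h; simp only [Set.mem_singleton_iff]; exact fun hc => h hc.symm
  have key : ∀ w : V, ∀ u ∈ C \ {w}, InW G (C \ {w}) u (if w = v then v' else v) := by
    intro w u hu
    have hαB : (if w = v then v' else v) ∈ B := by split <;> assumption
    have hαm := anchor w
    have linkB : ∀ z ∈ B \ {w}, InW G (C \ {w}) z (if w = v then v' else v) := by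
      intro z hz
      have hcon := nocut_del hB.1 w
      have hmem : (if w = v then v' else v) ∈ B \ {w} := Set.mem_diff _ |>.mpr ⟨hαB, hαm.2⟩
      have h2 := (conn_iff.mp hcon).2 z hz (if w = v then v' else v) hmem
      refine h2.mono ?_
      intro x hx
      exact ⟨hBC hx.1, hx.2⟩
    rcases hu with ⟨huC, huw⟩
    have hwu : w ≠ u := fun h => huw (h ▸ rfl)
    rcases huC with huB | hup
    · exact linkB u ⟨huB, huw⟩
    · have hup' : u ∈ p.support := hup
      have hsub1 := p.support_takeUntil_subset hup'
      have hsub2 := p.support_dropUntil_subset hup'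
      rcases split_avoid hp hup' hwu with h1 | h2
      · have hInW : InW G (C \ {w}) u v := by
          refine ⟨(p.takeUntil u hup').reverse, ?_⟩
          intro x hx
          rw [Walk.support_reverse, List.mem_reverse] at hx
          refine ⟨hsupC x (hsub1 hx), fun hxw => ?_⟩
          rw [Set.mem_singleton_iff] at hxw
          exact h1 (hxw ▸ hx)
        have hvw : v ≠ w := by
          intro hvw'
          exact h1 (hvw' ▸ (p.takeUntil u hup').start_mem_support)
        exact hInW.trans (linkB v ⟨hv, hvw⟩)
      · have hInW : InW G (C \ {w}) u v' := by
          refine ⟨p.dropUntil u hup', ?_⟩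
          intro x hx
          refine ⟨hsupC x (hsub2 hx), fun hxw => ?_⟩
          rw [Set.mem_singleton_iff] at hxw
          exact h2 (hxw ▸ hx)
        have hvw : v' ≠ w := by
          intro hvw'
          exact h2 (hvw' ▸ (p.dropUntil u hup').end_mem_support)
        exact hInW.trans (linkB v' ⟨hv', hvw⟩)
  have hCconn : ∀ w : V, Conn G (C \ {w}) := by
    intro w
    rw [conn_iff]
    exact ⟨⟨_, anchor w⟩, fun x hx y hy => (key w x hx).trans (key w y hy).symm⟩
  have hCnc : NoCutVtx (G.induce C) := by
    rw [noCutVtx_induce_iff]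
    refine ⟨?_, fun w _ => hCconn w⟩
    by_cases huniv : C = Set.univ
    · rw [huniv]; exact conn_univ hGc
    · obtain ⟨w, hw⟩ := (Set.ne_univ_iff_exists_notMem C).mp huniv
      have := hCconn w
      rwa [Set.diff_singleton_eq_self hw] at this
  have hBeq := hB.2 C hBC hCnc
  exact htB (hBeq ▸ hsupC t ht)

lemma meet [DecidableEq V] {x c c' : V} (p1 : G.Walk x c) (p2 : G.Walk x c')
    (h1 : p1.IsPath) (h2 : p2.IsPath) (hc : c ∉ p2.support) (hc' : c' ∉ p1.support) :
    ∃ r : G.Walk c c', r.IsPath ∧ (∀ v ∈ r.support, v ∈ p1.support ∨ v ∈ p2.support) ∧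
      ∃ t ∈ r.support, t ≠ c ∧ t ≠ c' ∧ t ∈ p2.support := by
  have hx2 : x ∈ {v | v ∈ p2.support} := p2.start_mem_support
  obtain ⟨t, ht2, q, hqmeet, hqsub⟩ := first_visit (s := {v | v ∈ p2.support}) p1.reverse hx2
  have hqsub' : ∀ v ∈ q.support, v ∈ p1.support := by
    intro v hv
    have := hqsub v hv
    rwa [Walk.support_reverse, List.mem_reverse] at this
  have hq'path : q.bypass.IsPath := q.bypass_isPath
  have hq'sub : ∀ v ∈ q.bypass.support, v ∈ q.support := fun v hv => q.support_bypass_subset hv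
  have htp2 : t ∈ p2.support := ht2
  have hdroppath : (p2.dropUntil t htp2).IsPath := h2.dropUntil htp2
  have hdropsub := p2.support_dropUntil_subset htp2
  have hrpath : (q.bypass.append (p2.dropUntil t htp2)).IsPath := by
    apply append_path hq'path hdroppath
    intro a ha hadrop
    exact hqmeet a (hq'sub a ha) (hdropsub hadrop)
  refine ⟨q.bypass.append (p2.dropUntil t htp2), hrpath, ?_, t, ?_, ?_, ?_, htp2⟩
  · intro v hv
    rcases (Walk.mem_support_append_iff _ _).mp hv with h | h
    · exact Or.inl (hqsub' v (hq'sub v h))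
    · exact Or.inr (hdropsub h)
  · exact (Walk.mem_support_append_iff _ _).mpr (Or.inl q.bypass.end_mem_support)
  · rintro rfl; exact hc htp2
  · rintro rfl; exact hc' (hqsub' _ q.end_mem_support)

lemma noncut_nbrs [DecidableEq V] (hG : ClassB G) {B : Set V} (hB : IsBlockSet G B) {v z : V}
    (hvB : v ∈ B) (hv : ¬ CutVtx G v) (hadj : G.Adj v z) : z ∈ B := by
  by_contra hz
  have hGc := hG.1.1
  have hconn : Conn G ({v}ᶜ : Set V) := not_not.mp hv
  obtain ⟨b, hbB, hbv⟩ := block_two hG hB v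
  have hzc : z ∈ ({v}ᶜ : Set V) := by
    simp only [Set.mem_compl_iff, Set.mem_singleton_iff]
    exact hadj.ne'
  have hbc : b ∈ ({v}ᶜ : Set V) := by
    simp only [Set.mem_compl_iff, Set.mem_singleton_iff]; exact hbv
  obtain ⟨W, hW⟩ := (conn_iff.mp hconn).2 z hzc b hbc
  obtain ⟨b₀, hb₀B, q, hqmeet, hqsub⟩ := first_visit (s := B) W hbB
  have hq'path : q.bypass.IsPath := q.bypass_isPath
  have hvq' : v ∉ q.bypass.support := by
    intro h
    have h2 := hW v (hqsub _ (q.support_bypass_subset h))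
    simp at h2
  have hR : (Walk.cons hadj q.bypass).IsPath := hq'path.cons hvq'
  have hb₀v : v ≠ b₀ := by
    intro h
    have h2 := hW b₀ (hqsub _ q.end_mem_support)
    simp only [Set.mem_compl_iff, Set.mem_singleton_iff] at h2
    exact h2 h.symm
  have hzsup : z ∈ (Walk.cons hadj q.bypass).support := by
    rw [Walk.support_cons]
    exact List.mem_cons_of_mem _ q.bypass.start_mem_support
  exact ear hGc hB (Walk.cons hadj q.bypass) hR hvB hb₀B hb₀v hzsup hz

lemma cut_of_outside [DecidableEq V] (hG : ClassB G) {B : Set V} (hB : IsBlockSet G B) {v z : V}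
    (hvB : v ∈ B) (hz : z ∉ B) (hadj : G.Adj v z) : CutVtx G v := by
  by_contra hv
  exact hz (noncut_nbrs hG hB hvB hv hadj)

lemma blocks_inter {B B' : Set V} (hB : IsBlockSet G B) (hB' : IsBlockSet G B')
    (hne : B ≠ B') : (B ∩ B').Subsingleton := by
  intro x hx y hy
  by_contra hxy
  have hnc := nocut_union hB.1 hB'.1 hx hy hxy
  have h1 := hB.2 (B ∪ B') Set.subset_union_left hnc
  have h2 := hB'.2 (B ∪ B') Set.subset_union_right hnc
  exact hne (h1.trans h2.symm)

lemma cross_edge {B : Set V} :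
    ∀ {a z : V}, (p : G.Walk a z) → a ∈ B → z ∉ B → ∃ v ∈ B, ∃ z', z' ∉ B ∧ G.Adj v z' := by
  intro a z p
  induction p with
  | nil => exact fun ha hz => absurd ha hz
  | @cons a b c h q ih =>
    intro ha hz
    by_cases hb : b ∈ B
    · exact ih hb hz
    · exact ⟨a, ha, b, hb, h⟩

lemma cut_in_block [Fintype V] [DecidableEq V] (hG : ClassB G) {B : Set V}
    (hB : IsBlockSet G B) : ∃ c ∈ B, CutVtx G c := by
  by_contra hno
  push_neg at hno
  by_cases huniv : B = Set.univ
  · obtain ⟨B1, B2, hB1, hB2, hne⟩ := hG.2.1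
    have hBnc : NoCutVtx (G.induce B) := hB.1
    have h1 : B1 = B := hB1.2 B (by rw [huniv]; exact Set.subset_univ _) hBnc
    have h2 : B2 = B := hB2.2 B (by rw [huniv]; exact Set.subset_univ _) hBnc
    exact hne (h1.trans h2.symm)
  · obtain ⟨z, hz⟩ := (Set.ne_univ_iff_exists_notMem B).mp huniv
    obtain ⟨b, hbB, _⟩ := block_two hG hB z
    obtain ⟨W⟩ := hG.1.1.preconnected b z
    obtain ⟨v, hvB, z', hz', hadj⟩ := cross_edge W hbB hz
    exact (hno v hvB) (cut_of_outside hG hB hvB hz' hadj)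

lemma cut_two_blocks [Fintype V] [DecidableEq V] (hG : ClassB G) {c : V} (hc : CutVtx G c)
    (B : Set V) : ∃ B', IsBlockSet G B' ∧ c ∈ B' ∧ B' ≠ B := by
  have hGc := hG.1.1
  have hnt := nontrivial_of_classB hG
  have hne : (({c}ᶜ : Set V)).Nonempty := by
    obtain ⟨x, hx⟩ := exists_ne c
    exact ⟨x, by simpa using hx⟩
  have hnc : ¬ ((({c}ᶜ : Set V)).Nonempty ∧ ∀ x ∈ ({c}ᶜ : Set V), ∀ y ∈ ({c}ᶜ : Set V),
      InW G ({c}ᶜ : Set V) x y) := fun h => hc (conn_iff.mpr h)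
  push_neg at hnc
  obtain ⟨x, hx, y, hy, hnxy⟩ := hnc hne
  have hxc : x ≠ c := by simpa using hx
  have hyc : y ≠ c := by simpa using hy
  obtain ⟨W0⟩ := hGc.preconnected x y
  have hppath : W0.bypass.IsPath := W0.bypass_isPath
  have hcp : c ∈ W0.bypass.support := by
    by_contra hcp
    refine hnxy ⟨W0.bypass, fun v hv => ?_⟩
    simp only [Set.mem_compl_iff, Set.mem_singleton_iff]
    exact fun h => hcp (h ▸ hv)
  have hq1path : (W0.bypass.takeUntil c hcp).IsPath := hppath.takeUntil hcp
  have hq2path : (W0.bypass.dropUntil c hcp).IsPath := hppath.dropUntil hcp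
  obtain ⟨u, hadj1, qq1, heq1⟩ := Walk.exists_eq_cons_of_ne hxc.symm
    ((W0.bypass.takeUntil c hcp).reverse)
  obtain ⟨u', hadj2, qq2, heq2⟩ := Walk.exists_eq_cons_of_ne (Ne.symm hyc)
    (W0.bypass.dropUntil c hcp)
  have hq1r : (W0.bypass.takeUntil c hcp).reverse.IsPath := hq1path.reverse
  rw [heq1] at hq1r
  have hcqq1 : c ∉ qq1.support := ((Walk.cons_isPath_iff _ _).mp hq1r).2
  rw [heq2] at hq2path
  have hcqq2 : c ∉ qq2.support := ((Walk.cons_isPath_iff _ _).mp hq2path).2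
  obtain ⟨B1, hsub1, hB1⟩ := exists_block_superset (pair_noCutVtx hadj1)
  obtain ⟨B2, hsub2, hB2⟩ := exists_block_superset (pair_noCutVtx hadj2)
  have hcB1 : c ∈ B1 := hsub1 (Or.inl rfl)
  have huB1 : u ∈ B1 := hsub1 (Or.inr rfl)
  have hcB2 : c ∈ B2 := hsub2 (Or.inl rfl)
  have huB2 : u' ∈ B2 := hsub2 (Or.inr rfl)
  have hB12 : B1 ≠ B2 := by
    rintro rfl
    have w1 : InW G ({c}ᶜ : Set V) x u := by
      refine ⟨qq1.reverse, fun v hv => ?_⟩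
      rw [Walk.support_reverse, List.mem_reverse] at hv
      exact fun h => hcqq1 (h ▸ hv)
    have w2 : InW G ({c}ᶜ : Set V) u u' := by
      have hconn := nocut_del hB1.1 c
      have hu1 : u ∈ B1 \ {c} := ⟨huB1, by simp [hadj1.ne']⟩
      have hu2 : u' ∈ B1 \ {c} := ⟨huB2, by simp [hadj2.ne']⟩
      have h3 := (conn_iff.mp hconn).2 u hu1 u' hu2
      refine h3.mono ?_
      intro a ha
      exact ha.2
    have w3 : InW G ({c}ᶜ : Set V) u' y := by
      refine ⟨qq2, fun v hv => ?_⟩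
      exact fun h => hcqq2 (h ▸ hv)
    exact hnxy ((w1.trans w2).trans w3)
  by_cases hq : B1 = B
  · exact ⟨B2, hB2, hcB2, fun h => hB12 (hq.trans h.symm)⟩
  · exact ⟨B1, hB1, hcB1, hq⟩

/-- `x` lies beyond the vertex `c` of the set `B`. -/
def Beyond (G : SimpleGraph V) (B : Set V) (c x : V) : Prop :=
  x ∉ B ∧ c ∈ B ∧ ∃ p : G.Walk x c, ∀ v ∈ p.support, v ∈ B → v = c

lemma beyond_unique [DecidableEq V] (hGc : G.Connected) {B : Set V} (hB : IsBlockSet G B)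
    {x c c' : V} (h : Beyond G B c x) (h' : Beyond G B c' x) : c = c' := by
  by_contra hne
  obtain ⟨hx, hcB, w, hw⟩ := h
  obtain ⟨-, hc'B, w', hw'⟩ := h'
  have h1 : w.bypass.IsPath := w.bypass_isPath
  have h2 : w'.bypass.IsPath := w'.bypass_isPath
  have hm1 : ∀ v ∈ w.bypass.support, v ∈ B → v = c :=
    fun v hv => hw v (w.support_bypass_subset hv)
  have hm2 : ∀ v ∈ w'.bypass.support, v ∈ B → v = c' :=
    fun v hv => hw' v (w'.support_bypass_subset hv)
  have hcp2 : c ∉ w'.bypass.support := fun hmem => hne (hm2 c hmem hcB)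
  have hc'p1 : c' ∉ w.bypass.support := fun hmem => hne (hm1 c' hmem hc'B).symm
  obtain ⟨r, hr, hrsub, t, htr, htc, htc', htp2⟩ := meet w.bypass w'.bypass h1 h2 hcp2 hc'p1
  have htB : t ∉ B := fun hBt => htc' (hm2 t htp2 hBt)
  exact ear hGc hB r hr hcB hc'B hne htr htB

lemma gate [DecidableEq V] (hG : ClassB G) {B : Set V} (hB : IsBlockSet G B) {x : V}
    (hx : x ∉ B) :
    ∃ c, c ∈ B ∧ CutVtx G c ∧ Beyond G B c x ∧
      ∀ v ∈ B, G.dist x v = G.dist x c + G.dist c v := by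
  have hGc := hG.1.1
  obtain ⟨b, hbB, -⟩ := block_two hG hB x
  obtain ⟨W⟩ := hGc.preconnected x b
  obtain ⟨c, hcB, q, hmeet, -⟩ := first_visit (s := B) W hbB
  have hbey : Beyond G B c x := ⟨hx, hcB, q, hmeet⟩
  have hxc : x ≠ c := fun h => hx (h ▸ hcB)
  obtain ⟨u, hadju, qq, heq⟩ := Walk.exists_eq_cons_of_ne hxc.symm q.reverse
  have huq : u ∈ q.support := by
    have : u ∈ q.reverse.support := by
      rw [heq, Walk.support_cons]
      exact List.mem_cons_of_mem _ qq.start_mem_support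
    rwa [Walk.support_reverse, List.mem_reverse] at this
  have huB : u ∉ B := fun h => hadju.ne' (hmeet u huq h)
  have hcut : CutVtx G c := cut_of_outside hG hB hcB huB hadju
  refine ⟨c, hcB, hcut, hbey, ?_⟩
  intro v hvB
  have hle : G.dist x v ≤ G.dist x c + G.dist c v := hGc.dist_triangle
  have hge : G.dist x c + G.dist c v ≤ G.dist x v := by
    obtain ⟨W', hlen⟩ := hGc.exists_walk_length_eq_dist x v
    obtain ⟨c₀, hc₀B, q₀, hmeet₀, hsub₀⟩ := first_visit (s := B) W' hvB
    have hbey₀ : Beyond G B c₀ x := ⟨hx, hc₀B, q₀, hmeet₀⟩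
    have hcc : c = c₀ := beyond_unique hGc hB hbey hbey₀
    have hcW : c ∈ W'.support := hcc ▸ hsub₀ c₀ q₀.end_mem_support
    have hsplit := W'.take_spec hcW
    have hlen2 : (W'.takeUntil c hcW).length + (W'.dropUntil c hcW).length = G.dist x v := by
      rw [← hlen, ← Walk.length_append, hsplit]
    have d1 : G.dist x c ≤ (W'.takeUntil c hcW).length := dist_le _
    have d2 : G.dist c v ≤ (W'.dropUntil c hcW).length := dist_le _
    omega
  omega

lemma t10 [DecidableEq V] (hGc : G.Connected) {B B'' : Set V} (hB : IsBlockSet G B)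
    (hB'' : IsBlockSet G B'') (hne : B ≠ B'') {c x y : V} (hcB : c ∈ B) (hcB'' : c ∈ B'')
    (hx : x ∈ B) (hxc : x ≠ c) (hy : y ∈ B'') (hyc : y ≠ c)
    (W : G.Walk x y) (hW : c ∉ W.support) : False := by
  have hsub := blocks_inter hB hB'' hne
  have hxB'' : x ∉ B'' := fun h => hxc (hsub ⟨hx, h⟩ ⟨hcB, hcB''⟩)
  have hconn : Conn G B'' := (noCutVtx_induce_iff.mp hB''.1).1
  obtain ⟨Q0, hQ0⟩ := (conn_iff.mp hconn).2 y hy c hcB''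
  have hP : W.bypass.IsPath := W.bypass_isPath
  have hPc : c ∉ W.bypass.support := fun h => hW (W.support_bypass_subset h)
  have hQ : Q0.bypass.IsPath := Q0.bypass_isPath
  have hQsub : ∀ v ∈ Q0.bypass.support, v ∈ B'' := fun v hv => hQ0 v (Q0.support_bypass_subset hv)
  have h1 : W.bypass.reverse.IsPath := hP.reverse
  have hxQ : x ∉ Q0.bypass.support := fun h => hxB'' (hQsub x h)
  have hcP : c ∉ W.bypass.reverse.support := by
    rwa [Walk.support_reverse, List.mem_reverse]
  obtain ⟨r, hr, hrsub, t, htr, htx, htc, htQ⟩ := meet W.bypass.reverse Q0.bypass h1 hQ hxQ hcP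
  have htB : t ∉ B := fun h => htc (hsub ⟨h, hQsub t htQ⟩ ⟨hcB, hcB''⟩)
  exact ear hGc hB r hr hx hcB hxc htr htB

lemma compBipOn_symm {B V1 V2 : Set V} (h : CompBipOn G B V1 V2) : CompBipOn G B V2 V1 := by
  obtain ⟨h1, h2, hdisj, hunion, hadj⟩ := h
  refine ⟨h2, h1, hdisj.symm, by rw [Set.union_comm]; exact hunion, ?_⟩
  intro x hx y hy
  rw [hadj x hx y hy]
  tauto

lemma mem_of_part1 {B V1 V2 : Set V} (h : CompBipOn G B V1 V2) {x : V} (hx : x ∈ V1) : x ∈ B :=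
  h.2.2.2.1 ▸ Or.inl hx

lemma adj_cross {B V1 V2 : Set V} (h : CompBipOn G B V1 V2) {x y : V} (hx : x ∈ V1)
    (hy : y ∈ V2) : G.Adj x y := by
  refine (h.2.2.2.2 x (mem_of_part1 h hx) y (mem_of_part1 (compBipOn_symm h) hy)).mpr (Or.inl ⟨hx, hy⟩)

lemma dist_cross {B V1 V2 : Set V} (h : CompBipOn G B V1 V2) {x y : V} (hx : x ∈ V1)
    (hy : y ∈ V2) : G.dist x y = 1 :=
  dist_eq_one_iff_adj.mpr (adj_cross h hx hy)

lemma not_adj_same {B V1 V2 : Set V} (h : CompBipOn G B V1 V2) {x y : V} (hx : x ∈ V1)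
    (hy : y ∈ V1) : ¬ G.Adj x y := by
  intro hadj
  rcases (h.2.2.2.2 x (mem_of_part1 h hx) y (mem_of_part1 h hy)).mp hadj with ⟨h1, h2⟩ | ⟨h1, h2⟩
  · exact Set.disjoint_left.mp h.2.2.1 hy h2
  · exact Set.disjoint_left.mp h.2.2.1 hx h1

lemma dist_same (hGc : G.Connected) {B V1 V2 : Set V} (h : CompBipOn G B V1 V2) {x y : V}
    (hx : x ∈ V1) (hy : y ∈ V1) (hne : x ≠ y) : G.dist x y = 2 := by
  obtain ⟨z, hz⟩ := h.2.1
  have hxz : G.Adj x z := adj_cross h hx hz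
  have hzy : G.Adj z y := (adj_cross h hy hz).symm
  have hle : G.dist x y ≤ 2 := by
    have := dist_le (Walk.cons hxz (Walk.cons hzy Walk.nil))
    simpa using this
  have hpos : 0 < G.dist x y := hGc.pos_dist_of_ne hne
  have hone : G.dist x y ≠ 1 := by
    intro h1
    exact not_adj_same h hx hy (dist_eq_one_iff_adj.mp h1)
  omega

lemma adj_S [Fintype V] [DecidableEq V] (hG : ClassB G) {S : Set V} (hS : AssocSet G S)
    {B'' : Set V} {c : V} (hB'' : IsBlockSet G B'') (hc : c ∈ B'') (hcut : CutVtx G c) :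
    ∃ u ∈ S, u ∈ B'' ∧ G.Adj c u := by
  obtain ⟨W1, W2, hbip⟩ := hG.1.2 B'' hB''
  have main : ∀ W1 W2 : Set V, CompBipOn G B'' W1 W2 → c ∈ W1 → ∃ u ∈ S, u ∈ B'' ∧ G.Adj c u := by
    intro W1 W2 hbip hcW1
    by_cases hK : W1.ncard = 1 ∧ W2.ncard = 1
    · obtain ⟨u, hu⟩ := hbip.2.1
      have hadj : G.Adj c u := adj_cross hbip hcW1 hu
      exact ⟨u, (hS.2 B'' W1 W2 hB'' hbip).1 hK (mem_of_part1 (compBipOn_symm hbip) hu),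
        mem_of_part1 (compBipOn_symm hbip) hu, hadj⟩
    · have hcond := (hS.2 B'' W1 W2 hB'' hbip).2 hK
      have hk2 : (B'' ∩ cutSet G).ncard ≤ 2 := hG.2.2 B'' hB''
      have hk1 : 1 ≤ (B'' ∩ cutSet G).ncard := by
        rw [Nat.one_le_iff_ne_zero]
        intro h0
        have hemp : (B'' ∩ cutSet G) = ∅ := (Set.ncard_eq_zero (Set.toFinite _)).mp h0
        have : c ∈ B'' ∩ cutSet G := ⟨hc, hcut⟩
        rw [hemp] at this
        exact this
      rcases Nat.lt_or_ge (B'' ∩ cutSet G).ncard 2 with hblt | hbge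
      · have h1 : (B'' ∩ cutSet G).ncard = 1 := by omega
        obtain ⟨-, hw⟩ := hcond.1 h1
        obtain ⟨u, hu⟩ := Set.ncard_eq_one.mp hw
        have hu2 : u ∈ S ∩ (W2 \ cutSet G) := by rw [hu]; rfl
        exact ⟨u, hu2.1, mem_of_part1 (compBipOn_symm hbip) hu2.2.1, adj_cross hbip hcW1 hu2.2.1⟩
      · have h2 : (B'' ∩ cutSet G).ncard = 2 := by omega
        have htriple := hcond.2 h2
        have hdisj12 : Disjoint (W1 ∩ cutSet G) (W2 ∩ cutSet G) :=
          hbip.2.2.1.mono Set.inter_subset_left Set.inter_subset_left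
        have hsum : (W1 ∩ cutSet G).ncard + (W2 ∩ cutSet G).ncard = 2 := by
          rw [← Set.ncard_union_eq hdisj12 (Set.toFinite _) (Set.toFinite _),
            ← Set.union_inter_distrib_right, hbip.2.2.2.1]
          exact h2
        have hc1 : 1 ≤ (W1 ∩ cutSet G).ncard := by
          rw [Nat.one_le_iff_ne_zero]
          intro h0
          have hemp := (Set.ncard_eq_zero (s := W1 ∩ cutSet G) (Set.toFinite _)).mp h0
          have : c ∈ W1 ∩ cutSet G := ⟨hcW1, hcut⟩
          rw [hemp] at this
          exact this
        rcases Nat.lt_or_ge (W1 ∩ cutSet G).ncard 2 with hlt | hge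
        · have h22 : (W2 ∩ cutSet G).ncard = 1 := by omega
          obtain ⟨c2, hc2⟩ := Set.ncard_eq_one.mp h22
          have hc2m : c2 ∈ W2 ∩ cutSet G := by rw [hc2]; rfl
          exact ⟨c2, hS.1 c2 hc2m.2, mem_of_part1 (compBipOn_symm hbip) hc2m.1,
            adj_cross hbip hcW1 hc2m.1⟩
        · have h20 : (W1 ∩ cutSet G).ncard = 2 := by omega
          obtain ⟨hw, -⟩ := htriple.1 h20
          obtain ⟨u, hu⟩ := Set.ncard_eq_one.mp hw
          have hu2 : u ∈ S ∩ (W2 \ cutSet G) := by rw [hu]; rfl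
          exact ⟨u, hu2.1, mem_of_part1 (compBipOn_symm hbip) hu2.2.1, adj_cross hbip hcW1 hu2.2.1⟩
  have hcm : c ∈ W1 ∪ W2 := by rw [hbip.2.2.2.1]; exact hc
  rcases hcm with h1 | h2
  · exact main W1 W2 hbip h1
  · exact main W2 W1 (compBipOn_symm hbip) h2

lemma dcomm (x y : V) : G.dist x y = G.dist y x := dist_comm

lemma far_dist [Fintype V] [DecidableEq V] (hG : ClassB G) {S : Set V} (hS : AssocSet G S)
    {B : Set V} (hB : IsBlockSet G B) {c1 c2 : V} (hc1B : c1 ∈ B) (hc2B : c2 ∈ B)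
    (hne12 : c1 ≠ c2) (hc2cut : CutVtx G c2) {x : V}
    (hx : x = c1 ∨ (x ∉ B ∧ Beyond G B c1 x)) :
    ∃ u ∈ S, G.dist x u = G.dist x c2 + 1 := by
  have hGc := hG.1.1
  obtain ⟨B'', hB''2, hc2B'', hBne⟩ := cut_two_blocks hG hc2cut B
  obtain ⟨u, huS, huB'', hadj⟩ := adj_S hG hS hB''2 hc2B'' hc2cut
  have hsub := blocks_inter hB hB''2 (Ne.symm hBne)
  obtain ⟨wx, hwx⟩ : ∃ w : G.Walk x c1, ∀ v ∈ w.support, v ∈ B → v = c1 := by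
    rcases hx with rfl | ⟨-, -, -, w, hw⟩
    · exact ⟨Walk.nil, by intro v hv _; simpa using hv⟩
    · exact ⟨w, hw⟩
  have hc2wx : c2 ∉ wx.support := fun h => hne12 (hwx c2 h hc2B).symm
  have hxB'' : x ∉ B'' := by
    intro hxB''
    rcases hx with rfl | ⟨hxB, -⟩
    · exact hne12 (hsub ⟨hc1B, hxB''⟩ ⟨hc2B, hc2B''⟩)
    · have hxc2 : x ≠ c2 := fun h => hxB (by rw [h]; exact hc2B)
      exact t10 hGc hB hB''2 (Ne.symm hBne) hc2B hc2B'' hc1B hne12 hxB'' hxc2 wx.reverse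
        (by rwa [Walk.support_reverse, List.mem_reverse])
  obtain ⟨g, hgB'', hgcut, hbeyg, hformg⟩ := gate hG hB''2 hxB''
  have hgc2 : g = c2 := by
    by_contra hgne
    obtain ⟨-, -, wg, hwg⟩ := hbeyg
    have hc2wg : c2 ∉ wg.support := fun h => hgne (hwg c2 h hc2B'').symm
    have hc2W : c2 ∉ (wx.reverse.append wg).support := by
      intro h
      rcases (Walk.mem_support_append_iff _ _).mp h with h | h
      · rw [Walk.support_reverse, List.mem_reverse] at h; exact hc2wx h
      · exact hc2wg h
    exact t10 hGc hB hB''2 (Ne.symm hBne) hc2B hc2B'' hc1B hne12 hgB'' hgne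
      (wx.reverse.append wg) hc2W
  have hd1 : G.dist c2 u = 1 := dist_eq_one_iff_adj.mpr hadj
  have hu := hformg u huB''
  rw [hgc2, hd1] at hu
  exact ⟨u, huS, hu⟩

lemma repAux [Fintype V] [DecidableEq V] (hG : ClassB G) {S : Set V} (hS : AssocSet G S)
    {B V1 V2 : Set V} {a b : V} (hB : IsBlockSet G B) (hbip : CompBipOn G B V1 V2)
    (haV1 : a ∈ V1) (hacut : ¬ CutVtx G a) (haS : a ∉ S) (hab : a ≠ b) :
    ∃ a' ∈ S, G.dist a' b = G.dist a b := by
  have hGc := hG.1.1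
  have haB : a ∈ B := mem_of_part1 hbip haV1
  by_cases hK : V1.ncard = 1 ∧ V2.ncard = 1
  · exact absurd ((hS.2 B V1 V2 hB hbip).1 hK haB) haS
  have hcond := (hS.2 B V1 V2 hB hbip).2 hK
  have hk2 : (B ∩ cutSet G).ncard ≤ 2 := hG.2.2 B hB
  have hk1 : 1 ≤ (B ∩ cutSet G).ncard := by
    obtain ⟨c0, hc0B, hc0⟩ := cut_in_block hG hB
    rw [Nat.one_le_iff_ne_zero]
    intro h0
    have hemp := (Set.ncard_eq_zero (s := B ∩ cutSet G) (Set.toFinite _)).mp h0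
    have hmem : c0 ∈ B ∩ cutSet G := ⟨hc0B, hc0⟩
    rw [hemp] at hmem
    exact hmem
  have hcut_eq : B ∩ cutSet G = (V1 ∩ cutSet G) ∪ (V2 ∩ cutSet G) := by
    rw [← hbip.2.2.2.1, Set.union_inter_distrib_right]
  rcases Nat.lt_or_ge (B ∩ cutSet G).ncard 2 with hblt | hbge
  · -- CASE k = 1 : exactly one cut vertex in B
    have h1 : (B ∩ cutSet G).ncard = 1 := by omega
    obtain ⟨ha1, hw2⟩ := hcond.1 h1
    obtain ⟨a₀, ha₀⟩ := Set.ncard_eq_one.mp ha1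
    have ha₀m : a₀ ∈ S ∩ (V1 \ cutSet G) := by rw [ha₀]; rfl
    have ha₀S : a₀ ∈ S := ha₀m.1
    have ha₀V1 : a₀ ∈ V1 := ha₀m.2.1
    have ha₀B : a₀ ∈ B := mem_of_part1 hbip ha₀V1
    obtain ⟨c, hcic⟩ := Set.ncard_eq_one.mp h1
    have hcm : c ∈ B ∩ cutSet G := by rw [hcic]; rfl
    have hcB : c ∈ B := hcm.1
    have hccut : CutVtx G c := hcm.2
    have hca : c ≠ a := fun h => hacut (by rw [← h]; exact hccut)
    have hca₀ : c ≠ a₀ := fun h => ha₀m.2.2 (by rw [← h]; exact hccut)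
    by_cases hbB : b ∈ B
    · rcases (show b ∈ V1 ∪ V2 by rw [hbip.2.2.2.1]; exact hbB) with hbV1 | hbV2
      · have hdab : G.dist a b = 2 := dist_same hGc hbip haV1 hbV1 hab
        by_cases hba₀ : b = a₀
        · subst hba₀
          rcases (show c ∈ V1 ∪ V2 by rw [hbip.2.2.2.1]; exact hcB) with hcV1 | hcV2
          · exact ⟨c, hS.1 c hccut, by
              rw [dist_same hGc hbip hcV1 hbV1 (Ne.symm (fun h => hca₀ h.symm)), hdab]⟩
          · obtain ⟨u, huS, hu⟩ := far_dist hG hS hB (mem_of_part1 hbip hbV1) hcB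
              (fun h => ha₀m.2.2 (by rw [h]; exact hccut)) hccut (Or.inl rfl)
            rw [dist_cross hbip hbV1 hcV2] at hu
            exact ⟨u, huS, by rw [dcomm u b, hu, hdab]⟩
        · exact ⟨a₀, ha₀S, by
            rw [dist_same hGc hbip ha₀V1 hbV1 (fun h => hba₀ h.symm), hdab]⟩
      · exact ⟨a₀, ha₀S, by
          rw [dist_cross hbip ha₀V1 hbV2, dist_cross hbip haV1 hbV2]⟩
    · obtain ⟨g, hgB, hgcut, -, hform⟩ := gate hG hB hbB
      have hgm : g ∈ B ∩ cutSet G := ⟨hgB, hgcut⟩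
      have hgc : g = c := by rw [hcic] at hgm; exact hgm
      subst hgc
      have hda := hform a haB
      have hda₀ := hform a₀ ha₀B
      have heq : G.dist g a = G.dist g a₀ := by
        rcases (show g ∈ V1 ∪ V2 by rw [hbip.2.2.2.1]; exact hgB) with hgV1 | hgV2
        · rw [dist_same hGc hbip hgV1 haV1 hca, dist_same hGc hbip hgV1 ha₀V1 hca₀]
        · rw [dist_cross (compBipOn_symm hbip) hgV2 haV1,
            dist_cross (compBipOn_symm hbip) hgV2 ha₀V1]
      refine ⟨a₀, ha₀S, ?_⟩
      rw [dcomm a₀ b, hda₀, dcomm a b, hda, heq]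
  · -- CASE k = 2
    have h2 : (B ∩ cutSet G).ncard = 2 := by omega
    have htriple := hcond.2 h2
    have hdisj12 : Disjoint (V1 ∩ cutSet G) (V2 ∩ cutSet G) :=
      hbip.2.2.1.mono Set.inter_subset_left Set.inter_subset_left
    have hsum : (V1 ∩ cutSet G).ncard + (V2 ∩ cutSet G).ncard = 2 := by
      rw [← Set.ncard_union_eq hdisj12 (Set.toFinite _) (Set.toFinite _), ← hcut_eq]
      exact h2
    rcases Nat.lt_or_ge (V1 ∩ cutSet G).ncard 1 with hn0 | hn1
    · -- no cut vertex in V1, both in V2 : twin available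
      have h02 : (V2 ∩ cutSet G).ncard = 2 := by omega
      obtain ⟨hw1, -⟩ := htriple.2.1 h02
      obtain ⟨a₀, ha₀⟩ := Set.ncard_eq_one.mp hw1
      have ha₀m : a₀ ∈ S ∩ (V1 \ cutSet G) := by rw [ha₀]; rfl
      have ha₀S : a₀ ∈ S := ha₀m.1
      have ha₀V1 : a₀ ∈ V1 := ha₀m.2.1
      obtain ⟨c, c', hcc', hpair⟩ := Set.ncard_eq_two.mp h02
      have hcm : c ∈ V2 ∩ cutSet G := by rw [hpair]; exact Or.inl rfl
      have hcB : c ∈ B := mem_of_part1 (compBipOn_symm hbip) hcm.1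
      by_cases hbB : b ∈ B
      · rcases (show b ∈ V1 ∪ V2 by rw [hbip.2.2.2.1]; exact hbB) with hbV1 | hbV2
        · have hdab : G.dist a b = 2 := dist_same hGc hbip haV1 hbV1 hab
          by_cases hba₀ : b = a₀
          · subst hba₀
            obtain ⟨u, huS, hu⟩ := far_dist hG hS hB (mem_of_part1 hbip hbV1) hcB
              (fun h => ha₀m.2.2 (by rw [h]; exact hcm.2)) hcm.2 (Or.inl rfl)
            rw [dist_cross hbip hbV1 hcm.1] at hu
            exact ⟨u, huS, by rw [dcomm u b, hu, hdab]⟩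
          · exact ⟨a₀, ha₀S, by
              rw [dist_same hGc hbip ha₀V1 hbV1 (fun h => hba₀ h.symm), hdab]⟩
        · exact ⟨a₀, ha₀S, by
            rw [dist_cross hbip ha₀V1 hbV2, dist_cross hbip haV1 hbV2]⟩
      · obtain ⟨g, hgB, hgcut, -, hform⟩ := gate hG hB hbB
        have hgm : g ∈ B ∩ cutSet G := ⟨hgB, hgcut⟩
        rw [hcut_eq] at hgm
        have hgV2 : g ∈ V2 := by
          rcases hgm with hgm | hgm
          · exfalso
            have hemp := (Set.ncard_eq_zero (s := V1 ∩ cutSet G) (Set.toFinite _)).mp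
              (by omega : (V1 ∩ cutSet G).ncard = 0)
            rw [hemp] at hgm
            exact hgm
          · exact hgm.1
        have hda := hform a haB
        have hda₀ := hform a₀ (mem_of_part1 hbip ha₀V1)
        have heq : G.dist g a = G.dist g a₀ := by
          rw [dist_cross (compBipOn_symm hbip) hgV2 haV1,
            dist_cross (compBipOn_symm hbip) hgV2 ha₀V1]
        refine ⟨a₀, ha₀S, ?_⟩
        rw [dcomm a₀ b, hda₀, dcomm a b, hda, heq]
    · rcases Nat.lt_or_ge (V1 ∩ cutSet G).ncard 2 with hn1' | hn2
      · -- one cut vertex in each part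
        have h11 : (V1 ∩ cutSet G).ncard = 1 := by omega
        have h22 : (V2 ∩ cutSet G).ncard = 1 := by omega
        obtain ⟨c1, hc1⟩ := Set.ncard_eq_one.mp h11
        obtain ⟨c2, hc2⟩ := Set.ncard_eq_one.mp h22
        have hc1m : c1 ∈ V1 ∩ cutSet G := by rw [hc1]; rfl
        have hc2m : c2 ∈ V2 ∩ cutSet G := by rw [hc2]; rfl
        have hc1V1 : c1 ∈ V1 := hc1m.1
        have hc2V2 : c2 ∈ V2 := hc2m.1
        have hc1B : c1 ∈ B := mem_of_part1 hbip hc1V1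
        have hc2B : c2 ∈ B := mem_of_part1 (compBipOn_symm hbip) hc2V2
        have hc12 : c1 ≠ c2 := fun h =>
          Set.disjoint_left.mp hbip.2.2.1 hc1V1 (by rw [h]; exact hc2V2)
        have hc1a : c1 ≠ a := fun h => hacut (by rw [← h]; exact hc1m.2)
        by_cases hbB : b ∈ B
        · rcases (show b ∈ V1 ∪ V2 by rw [hbip.2.2.2.1]; exact hbB) with hbV1 | hbV2
          · have hdab : G.dist a b = 2 := dist_same hGc hbip haV1 hbV1 hab
            by_cases hbc1 : b = c1
            · subst hbc1
              obtain ⟨u, huS, hu⟩ := far_dist hG hS hB hc1B hc2B hc12 hc2m.2 (Or.inl rfl)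
              rw [dist_cross hbip hc1V1 hc2V2] at hu
              exact ⟨u, huS, by rw [dcomm u b, hu, hdab]⟩
            · exact ⟨c1, hS.1 c1 hc1m.2, by
                rw [dist_same hGc hbip hc1V1 hbV1 (fun h => hbc1 h.symm), hdab]⟩
          · exact ⟨c1, hS.1 c1 hc1m.2, by
              rw [dist_cross hbip hc1V1 hbV2, dist_cross hbip haV1 hbV2]⟩
        · obtain ⟨g, hgB, hgcut, hbey, hform⟩ := gate hG hB hbB
          have hgm : g ∈ B ∩ cutSet G := ⟨hgB, hgcut⟩
          rw [hcut_eq] at hgm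
          have hda := hform a haB
          rcases hgm with hgm | hgm
          · -- gate is c1 : go behind c2
            have hgc1 : g = c1 := by rw [hc1] at hgm; exact hgm
            subst hgc1
            obtain ⟨u, huS, hu⟩ := far_dist hG hS hB hc1B hc2B hc12 hc2m.2
              (Or.inr ⟨hbB, hbey⟩)
            have hdc2 := hform c2 hc2B
            rw [dist_cross hbip hc1V1 hc2V2] at hdc2
            rw [hdc2] at hu
            rw [dist_same hGc hbip hc1V1 haV1 hc1a] at hda
            refine ⟨u, huS, ?_⟩
            rw [dcomm u b, hu, dcomm a b, hda]
          · -- gate is c2 : use c1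
            have hgc2 : g = c2 := by rw [hc2] at hgm; exact hgm
            subst hgc2
            have hdc1 := hform c1 hc1B
            rw [dist_cross (compBipOn_symm hbip) hc2V2 hc1V1] at hdc1
            rw [dist_cross (compBipOn_symm hbip) hc2V2 haV1] at hda
            refine ⟨c1, hS.1 c1 hc1m.2, ?_⟩
            rw [dcomm c1 b, hdc1, dcomm a b, hda]
      · -- both cut vertices in V1
        have h20 : (V1 ∩ cutSet G).ncard = 2 := by omega
        have h02' : (V2 ∩ cutSet G).ncard = 0 := by omega
        have hV2emp : V2 ∩ cutSet G = ∅ := (Set.ncard_eq_zero (Set.toFinite _)).mp h02'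
        obtain ⟨c, c', hcc', hpair⟩ := Set.ncard_eq_two.mp h20
        have hcm : c ∈ V1 ∩ cutSet G := by rw [hpair]; exact Or.inl rfl
        have hc'm : c' ∈ V1 ∩ cutSet G := by rw [hpair]; exact Or.inr rfl
        have hcB : c ∈ B := mem_of_part1 hbip hcm.1
        have hc'B : c' ∈ B := mem_of_part1 hbip hc'm.1
        by_cases hbB : b ∈ B
        · rcases (show b ∈ V1 ∪ V2 by rw [hbip.2.2.2.1]; exact hbB) with hbV1 | hbV2
          · have hdab : G.dist a b = 2 := dist_same hGc hbip haV1 hbV1 hab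
            by_cases hbc : b = c
            · subst hbc
              exact ⟨c', hS.1 c' hc'm.2, by
                rw [dist_same hGc hbip hc'm.1 hbV1 hcc'.symm, hdab]⟩
            · exact ⟨c, hS.1 c hcm.2, by
                rw [dist_same hGc hbip hcm.1 hbV1 (fun h => hbc h.symm), hdab]⟩
          · exact ⟨c, hS.1 c hcm.2, by
              rw [dist_cross hbip hcm.1 hbV2, dist_cross hbip haV1 hbV2]⟩
        · obtain ⟨g, hgB, hgcut, -, hform⟩ := gate hG hB hbB
          have hgm : g ∈ B ∩ cutSet G := ⟨hgB, hgcut⟩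
          rw [hcut_eq] at hgm
          have hgV1c : g ∈ V1 ∩ cutSet G := by
            rcases hgm with h | h
            · exact h
            · rw [hV2emp] at h; exact absurd h (Set.notMem_empty g)
          have hda := hform a haB
          rw [dist_same hGc hbip hgV1c.1 haV1
            (fun h => hacut (by rw [← h]; exact hgV1c.2))] at hda
          have hgpair : g = c ∨ g = c' := by rw [hpair] at hgV1c; exact hgV1c
          rcases hgpair with rfl | rfl
          · have hdo := hform c' hc'B
            rw [dist_same hGc hbip hcm.1 hc'm.1 hcc'] at hdo
            refine ⟨c', hS.1 c' hc'm.2, ?_⟩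
            rw [dcomm c' b, hdo, dcomm a b, hda]
          · have hdo := hform c hcB
            rw [dist_same hGc hbip hc'm.1 hcm.1 (Ne.symm hcc')] at hdo
            refine ⟨c, hS.1 c hcm.2, ?_⟩
            rw [dcomm c b, hdo, dcomm a b, hda]

lemma rep [Fintype V] [DecidableEq V] (hG : ClassB G) {S : Set V} (hS : AssocSet G S)
    {a b : V} (hab : a ≠ b) : ∃ a' ∈ S, G.dist a' b = G.dist a b := by
  by_cases haS : a ∈ S
  · exact ⟨a, haS, rfl⟩
  · have hacut : ¬ CutVtx G a := fun h => haS (hS.1 a h)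
    have hnt : Nontrivial V := nontrivial_of_classB hG
    obtain ⟨B, haB, hB⟩ := exists_block_mem hG.1.1 a
    obtain ⟨V1, V2, hbip⟩ := hG.1.2 B hB
    rcases (show a ∈ V1 ∪ V2 by rw [hbip.2.2.2.1]; exact haB) with h1 | h2
    · exact repAux hG hS hB hbip h1 hacut haS hab
    · exact repAux hG hS hB (compBipOn_symm hbip) h2 hacut haS hab

end BW

theorem stmt_4 {V : Type*} [Fintype V] (G : SimpleGraph V) (hG : ClassB G)
    (S : Set V) (hS : AssocSet G S) :
    ∀ a b : V, ∃ a' ∈ S, ∃ b' ∈ S, G.dist a b = G.dist a' b' := by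
  classical
  intro a b
  by_cases hab : a = b
  · subst hab
    obtain ⟨B1, B2, hB1, hB2, hne⟩ := hG.2.1
    obtain ⟨c, hcB, hcut⟩ := BW.cut_in_block hG hB1
    exact ⟨c, hS.1 c hcut, c, hS.1 c hcut, by rw [SimpleGraph.dist_self, SimpleGraph.dist_self]⟩
  · obtain ⟨a', ha'S, ha'⟩ := BW.rep hG hS hab
    have hba' : b ≠ a' := by
      intro h
      rw [← h, SimpleGraph.dist_self] at ha'
      have hpos := hG.1.1.pos_dist_of_ne hab
      omega
    obtain ⟨b', hb'S, hb'⟩ := BW.rep hG hS hba'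
    refine ⟨a', ha'S, b', hb'S, ?_⟩
    rw [BW.dcomm a' b', hb', BW.dcomm b a', ha']
end

section
/- For every graph G in class B with associated tree T_G, the eccentricity of each vertex a of T_G computed in G equals the eccentricity of a computed in T_G. -/
open SimpleGraph

variable {V : Type*}

section Aux
variable {V : Type*} {G : SimpleGraph V}

/-- Reachable within a vertex set. -/
def RW (G : SimpleGraph V) (A : Set V) (x y : V) : Prop :=
  ∃ w : G.Walk x y, ∀ z ∈ w.support, z ∈ A

/-- Connected within a vertex set. -/
def ConnW (G : SimpleGraph V) (A : Set V) : Prop :=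
  A.Nonempty ∧ ∀ x ∈ A, ∀ y ∈ A, RW G A x y

lemma RW.left_mem {A : Set V} {x y : V} (h : RW G A x y) : x ∈ A := by
  obtain ⟨w, hw⟩ := h; exact hw x w.start_mem_support

lemma RW.right_mem {A : Set V} {x y : V} (h : RW G A x y) : y ∈ A := by
  obtain ⟨w, hw⟩ := h; exact hw y w.end_mem_support

lemma RW.refl {A : Set V} {x : V} (hx : x ∈ A) : RW G A x x :=
  ⟨SimpleGraph.Walk.nil, by simpa using hx⟩

lemma RW.symm {A : Set V} {x y : V} (h : RW G A x y) : RW G A y x := by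
  obtain ⟨w, hw⟩ := h
  exact ⟨w.reverse, by simpa using hw⟩

lemma RW.trans {A : Set V} {x y z : V} (h : RW G A x y) (h' : RW G A y z) : RW G A x z := by
  obtain ⟨w, hw⟩ := h; obtain ⟨w', hw'⟩ := h'
  refine ⟨w.append w', fun t ht => ?_⟩
  rcases (SimpleGraph.Walk.mem_support_append_iff _ _).1 ht with h1 | h1
  · exact hw t h1
  · exact hw' t h1

lemma RW.mono {A A' : Set V} {x y : V} (hAA : A ⊆ A') (h : RW G A x y) : RW G A' x y := by
  obtain ⟨w, hw⟩ := h; exact ⟨w, fun z hz => hAA (hw z hz)⟩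

lemma walk_down {A : Set V} : ∀ {x y : ↥A} (w : (G.induce A).Walk x y),
    ∃ w' : G.Walk x.1 y.1, w'.length = w.length ∧ w'.support = w.support.map Subtype.val
  | _, _, SimpleGraph.Walk.nil => ⟨SimpleGraph.Walk.nil, rfl, rfl⟩
  | _, _, SimpleGraph.Walk.cons h p => by
    obtain ⟨w', h1, h2⟩ := walk_down p
    exact ⟨SimpleGraph.Walk.cons h w', by show w'.length + 1 = p.length + 1; rw [h1],
      by show _ :: w'.support = List.map Subtype.val (_ :: p.support); rw [h2]; rfl⟩

lemma walk_up {A : Set V} : ∀ {x y : V} (w : G.Walk x y) (hs : ∀ z ∈ w.support, z ∈ A)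
    (hx : x ∈ A) (hy : y ∈ A),
    ∃ w' : (G.induce A).Walk ⟨x, hx⟩ ⟨y, hy⟩,
      w'.length = w.length ∧ w'.support.map Subtype.val = w.support
  | _, _, SimpleGraph.Walk.nil, _, hx, hy => ⟨SimpleGraph.Walk.nil, rfl, rfl⟩
  | x, y, SimpleGraph.Walk.cons (v := b) h p, hs, hx, hy => by
    have hb : b ∈ A := hs b (by simp)
    obtain ⟨w', h1, h2⟩ := walk_up p (fun z hz => hs z (by simp [hz])) hb hy
    exact ⟨SimpleGraph.Walk.cons (by exact h) w', by show w'.length + 1 = p.length + 1; rw [h1],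
      by show List.map Subtype.val (_ :: w'.support) = _ :: p.support; rw [List.map_cons, h2]⟩

lemma connW_iff_induce_connected {A : Set V} : (G.induce A).Connected ↔ ConnW G A := by
  constructor
  · intro h
    have hne : A.Nonempty := by
      obtain ⟨⟨x, hx⟩⟩ := h.nonempty
      exact ⟨x, hx⟩
    refine ⟨hne, fun x hx y hy => ?_⟩
    obtain ⟨w⟩ := h.preconnected ⟨x, hx⟩ ⟨y, hy⟩
    obtain ⟨w', _, h2⟩ := walk_down w
    refine ⟨w', fun z hz => ?_⟩
    rw [h2] at hz
    obtain ⟨t, _, rfl⟩ := List.mem_map.1 hz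
    exact t.2
  · rintro ⟨hne, h⟩
    have : Nonempty ↥A := ⟨⟨hne.choose, hne.choose_spec⟩⟩
    refine ⟨fun a b => ?_⟩
    obtain ⟨w, hw⟩ := h a.1 a.2 b.1 b.2
    obtain ⟨w', _, _⟩ := walk_up w hw a.2 b.2
    exact ⟨w'⟩

end Aux
section Aux2
variable {V : Type*} {G : SimpleGraph V}

/-- "No cut vertex", expressed purely with vertex sets of the ambient graph. -/
def NCV (G : SimpleGraph V) (B : Set V) : Prop :=
  ConnW G B ∧ ∀ w ∈ B, ConnW G (B \ {w})

lemma rw_induce {A : Set V} {B' : Set ↥A} {x y : ↥A} :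
    RW (G.induce A) B' x y ↔ RW G (Subtype.val '' B') x.1 y.1 := by
  constructor
  · rintro ⟨w, hw⟩
    obtain ⟨w', _, h2⟩ := walk_down w
    refine ⟨w', fun z hz => ?_⟩
    rw [h2] at hz
    obtain ⟨t, ht, rfl⟩ := List.mem_map.1 hz
    exact ⟨t, hw t ht, rfl⟩
  · rintro ⟨w, hw⟩
    have hsub : ∀ z ∈ w.support, z ∈ A := by
      intro z hz; obtain ⟨t, _, rfl⟩ := hw z hz; exact t.2
    obtain ⟨w', _, h2⟩ := walk_up w hsub x.2 y.2
    refine ⟨w', fun t ht => ?_⟩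
    have : t.1 ∈ Subtype.val '' B' := by
      apply hw
      rw [← h2]
      exact List.mem_map.2 ⟨t, ht, rfl⟩
    obtain ⟨t', ht', h⟩ := this
    rwa [show t' = t from Subtype.ext h] at ht'

lemma image_compl_singleton {A : Set V} (w : ↥A) :
    (Subtype.val '' ({w}ᶜ : Set ↥A)) = A \ {w.1} := by
  ext z
  constructor
  · rintro ⟨t, ht, rfl⟩
    exact ⟨t.2, fun h => ht (Subtype.ext (by simpa using h))⟩
  · rintro ⟨hz, hzw⟩
    exact ⟨⟨z, hz⟩, fun h => hzw (by simpa using congrArg Subtype.val h), rfl⟩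

lemma ncv_iff {B : Set V} : NoCutVtx (G.induce B) ↔ NCV G B := by
  constructor
  · rintro ⟨h1, h2⟩
    refine ⟨connW_iff_induce_connected.1 h1, fun w hw => ?_⟩
    have h3 := connW_iff_induce_connected.1 (h2 ⟨w, hw⟩)
    obtain ⟨hne, hr⟩ := h3
    constructor
    · obtain ⟨t, ht⟩ := hne
      refine ⟨t.1, t.2, fun h => ht ?_⟩
      exact Subtype.ext (by simpa using h)
    · intro x hx y hy
      have hx' : (⟨x, hx.1⟩ : ↥B) ∈ ({(⟨w, hw⟩ : ↥B)}ᶜ : Set ↥B) := by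
        intro h; exact hx.2 (by simpa using congrArg Subtype.val h)
      have hy' : (⟨y, hy.1⟩ : ↥B) ∈ ({(⟨w, hw⟩ : ↥B)}ᶜ : Set ↥B) := by
        intro h; exact hy.2 (by simpa using congrArg Subtype.val h)
      have := (rw_induce (G := G)).1 (hr _ hx' _ hy')
      rwa [image_compl_singleton] at this
  · rintro ⟨h1, h2⟩
    refine ⟨connW_iff_induce_connected.2 h1, fun w => ?_⟩
    apply connW_iff_induce_connected.2
    obtain ⟨hne, hr⟩ := h2 w.1 w.2
    constructor
    · obtain ⟨t, ht⟩ := hne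
      refine ⟨⟨t, ht.1⟩, fun h => ht.2 ?_⟩
      simpa using congrArg Subtype.val h
    · rintro x hx y hy
      have hx' : x.1 ∈ B \ {w.1} :=
        ⟨x.2, fun h => hx (Subtype.ext (by simpa using h))⟩
      have hy' : y.1 ∈ B \ {w.1} :=
        ⟨y.2, fun h => hy (Subtype.ext (by simpa using h))⟩
      have := hr _ hx' _ hy'
      rw [← image_compl_singleton w] at this
      exact (rw_induce (G := G)).2 this

lemma cutVtx_iff {v : V} : CutVtx G v ↔ ¬ ConnW G ({v}ᶜ) := by
  unfold CutVtx
  rw [connW_iff_induce_connected]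

lemma not_cutVtx_connW {v : V} (h : ¬ CutVtx G v) : ConnW G ({v}ᶜ) := by
  by_contra h'
  exact h (cutVtx_iff.2 h')

lemma isBlockSet_iff {B : Set V} :
    IsBlockSet G B ↔ NCV G B ∧ ∀ C : Set V, B ⊆ C → NCV G C → B = C := by
  unfold IsBlockSet
  constructor
  · rintro ⟨h1, h2⟩
    exact ⟨ncv_iff.1 h1, fun C hBC hC => h2 C hBC (ncv_iff.2 hC)⟩
  · rintro ⟨h1, h2⟩
    exact ⟨ncv_iff.2 h1, fun C hBC hC => h2 C hBC (ncv_iff.1 hC)⟩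

lemma connW_del {B : Set V} (h : NCV G B) (w : V) (hne : (B \ {w}).Nonempty) :
    ConnW G (B \ {w}) := by
  by_cases hw : w ∈ B
  · exact h.2 w hw
  · have : B \ {w} = B := by
      ext z; simp only [Set.mem_diff, Set.mem_singleton_iff]
      exact ⟨fun h => h.1, fun hz => ⟨hz, fun h => hw (h ▸ hz)⟩⟩
    rw [this]; exact h.1

end Aux2
section Aux3
variable {V : Type*} {G : SimpleGraph V}

open SimpleGraph

/-- The support of a walk, as a set. -/
def wsupp {x y : V} (w : G.Walk x y) : Set V := {z | z ∈ w.support}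

lemma rw_support_start {x y z : V} (w : G.Walk x y) (hz : z ∈ w.support) :
    RW G (wsupp w) x z := by
  classical
  exact ⟨w.takeUntil z hz, fun t ht => Walk.support_takeUntil_subset w hz ht⟩

lemma rw_support_end {x y z : V} (w : G.Walk x y) (hz : z ∈ w.support) :
    RW G (wsupp w) z y := by
  classical
  exact ⟨w.dropUntil z hz, fun t ht => Walk.support_dropUntil_subset w hz ht⟩

lemma not_end_mem_takeUntil [DecidableEq V] {x y z : V} (p : G.Walk x y) (hp : p.IsPath)
    (hz : z ∈ p.support) (hzy : z ≠ y) : y ∉ (p.takeUntil z hz).support := by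
  classical
  intro hy
  have hspec := p.take_spec hz
  have hnd : p.support.Nodup := hp.support_nodup
  rw [← hspec, Walk.support_append] at hnd
  have hytail : y ∈ (p.dropUntil z hz).support.tail := by
    have h1 : y ∈ (p.dropUntil z hz).support := Walk.end_mem_support _
    have h2 : (p.dropUntil z hz).support = z :: (p.dropUntil z hz).support.tail :=
      Walk.support_eq_cons _
    rw [h2] at h1
    rcases List.mem_cons.1 h1 with rfl | h
    · exact absurd rfl hzy
    · exact h
  exact (List.disjoint_of_nodup_append hnd) hy hytail

/-- Removing the final vertex of a path, all other vertices still reach the start. -/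
lemma rw_del_end {x y z : V} (p : G.Walk x y) (hp : p.IsPath)
    (hz : z ∈ p.support) (hzy : z ≠ y) : RW G (wsupp p \ {y}) x z := by
  classical
  refine ⟨p.takeUntil z hz, fun t ht => ⟨Walk.support_takeUntil_subset p hz ht, ?_⟩⟩
  intro hty
  rw [Set.mem_singleton_iff] at hty
  subst hty
  exact not_end_mem_takeUntil p hp hz hzy ht

/-- From a vertex in the tail of a walk whose start is not repeated, reach the end
avoiding the start. -/
lemma rw_del_start {w y z : V} : ∀ (d : G.Walk w y), z ∈ d.support.tail →
    w ∉ d.support.tail → RW G (wsupp d \ {w}) z y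
  | SimpleGraph.Walk.nil, hz, _ => by simp at hz
  | SimpleGraph.Walk.cons hadj d', hz, hw => by
    have hsup : (Walk.cons hadj d').support.tail = d'.support := by
      simp [Walk.support_cons]
    rw [hsup] at hz hw
    refine (rw_support_end d' hz).mono ?_
    intro t ht
    refine ⟨?_, ?_⟩
    · show t ∈ (Walk.cons hadj d').support
      rw [Walk.support_cons]
      exact List.mem_cons.2 (Or.inr ht)
    · intro htw
      rw [Set.mem_singleton_iff] at htw
      subst htw
      exact hw ht

/-- Removing an interior vertex of a path, every other vertex reaches an endpoint. -/
lemma rw_del_mid {x y w z : V} (p : G.Walk x y) (hp : p.IsPath)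
    (hw : w ∈ p.support) (hz : z ∈ p.support) (hzw : z ≠ w) :
    RW G (wsupp p \ {w}) x z ∨ RW G (wsupp p \ {w}) z y := by
  classical
  have hspec := p.take_spec hw
  have hnd : p.support.Nodup := hp.support_nodup
  have hnd' : ((p.takeUntil w hw).support ++ (p.dropUntil w hw).support.tail).Nodup := by
    rw [← Walk.support_append, hspec]; exact hnd
  have hz' : z ∈ (p.takeUntil w hw).support ∨ z ∈ (p.dropUntil w hw).support.tail := by
    have : z ∈ (p.takeUntil w hw).support ++ (p.dropUntil w hw).support.tail := by
      rw [← Walk.support_append, hspec]; exact hz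
    exact List.mem_append.1 this
  rcases hz' with h | h
  · left
    have htp : (p.takeUntil w hw).IsPath := hp.takeUntil hw
    have := rw_del_end (p.takeUntil w hw) htp h hzw
    refine this.mono ?_
    rintro t ⟨ht, htw⟩
    exact ⟨Walk.support_takeUntil_subset p hw ht, htw⟩
  · right
    have hwtail : w ∉ (p.dropUntil w hw).support.tail := by
      intro hcon
      exact (List.disjoint_of_nodup_append hnd') (Walk.end_mem_support _) hcon
    have := rw_del_start (p.dropUntil w hw) h hwtail
    refine this.mono ?_
    rintro t ⟨ht, htw⟩
    exact ⟨Walk.support_dropUntil_subset p hw ht, htw⟩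

lemma exists_first_hit {B : Set V} : ∀ {a b : V} (w : G.Walk a b) (_ : w.IsPath) (hb : b ∈ B),
    ∃ y ∈ B, ∃ w1 : G.Walk a y, w1.IsPath ∧ (∀ z ∈ w1.support, z ∈ B → z = y) ∧
      (∀ z ∈ w1.support, z ∈ w.support)
  | a, b, w, hw, hb => by
    by_cases ha : a ∈ B
    · exact ⟨a, ha, Walk.nil, Walk.IsPath.nil, by simp, by simp⟩
    · rcases w with _ | @⟨_, c, _, hadj, q⟩
      · exact absurd hb ha
      · have hq : q.IsPath := ((Walk.cons_isPath_iff hadj q).1 hw).1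
        have haq : a ∉ q.support := ((Walk.cons_isPath_iff hadj q).1 hw).2
        obtain ⟨y, hy, w1, hw1p, hw1, hw1s⟩ := exists_first_hit q hq hb
        refine ⟨y, hy, Walk.cons hadj w1, ?_, ?_, ?_⟩
        · exact (Walk.cons_isPath_iff hadj w1).2 ⟨hw1p, fun hc => haq (hw1s a hc)⟩
        · intro z hz hzB
          rcases List.mem_cons.1 (by simpa using hz) with rfl | hz'
          · exact absurd hzB ha
          · exact hw1 z hz' hzB
        · intro z hz
          rcases List.mem_cons.1 (by simpa using hz) with rfl | hz'
          · simp
          · simp [Walk.support_cons]; right; exact hw1s z hz'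

lemma exists_crossing {B : Set V} : ∀ {a b : V} (_ : G.Walk a b) (_ : a ∈ B) (_ : b ∉ B),
    ∃ x ∈ B, ∃ y, y ∉ B ∧ G.Adj x y
  | a, _, Walk.nil, ha, hb => absurd ha hb
  | a, b, Walk.cons (v := c) hadj q, ha, hb => by
    by_cases hc : c ∈ B
    · exact exists_crossing q hc hb
    · exact ⟨a, ha, c, hc, hadj⟩

lemma exists_adj (hc : G.Connected) {x u : V} (hxu : x ≠ u) : ∃ y, G.Adj x y := by
  obtain ⟨w⟩ := hc.preconnected x u
  rcases w with _ | @⟨_, c, _, hadj, _⟩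
  · exact absurd rfl hxu
  · exact ⟨c, hadj⟩

end Aux3
section Blocks
variable {V : Type*} {G : SimpleGraph V}
open SimpleGraph

lemma edge_ncv {x y : V} (h : G.Adj x y) : NCV G {x, y} := by
  have hxy : x ≠ y := h.ne
  have hrw : RW G {x, y} x y :=
    ⟨Walk.cons h Walk.nil, by intro z hz; simpa using (by simpa using hz)⟩
  constructor
  · refine ⟨⟨x, by simp⟩, ?_⟩
    intro a ha b hb
    rcases ha with rfl | ha <;> rcases hb with rfl | hb
    · exact RW.refl (by simp)
    · rcases hb with rfl; exact hrw
    · rcases ha with rfl; exact hrw.symm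
    · rcases ha with rfl; rcases hb with rfl; exact RW.refl (by simp)
  · intro w hw
    rcases hw with rfl | hw
    · have : ({w, y} : Set V) \ {w} = {y} := Set.pair_diff_left hxy
      rw [this]
      exact ⟨⟨y, rfl⟩, fun a ha b hb => by rcases ha; rcases hb; exact RW.refl rfl⟩
    · rcases hw with rfl
      have : ({x, w} : Set V) \ {w} = {x} := Set.pair_diff_right hxy
      rw [this]
      exact ⟨⟨x, rfl⟩, fun a ha b hb => by rcases ha; rcases hb; exact RW.refl rfl⟩

lemma blk_extend_aux [Finite V] :
    ∀ (n : ℕ) (B0 : Set V), (Set.univ \ B0).ncard ≤ n → NCV G B0 →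
      ∃ B, B0 ⊆ B ∧ IsBlockSet G B := by
  intro n
  induction n with
  | zero =>
    intro B0 hn h
    have hB0 : B0 = Set.univ := by
      have : (Set.univ \ B0) = ∅ := by
        have hfin : (Set.univ \ B0).Finite := Set.toFinite _
        have := Nat.le_zero.1 hn
        rwa [Set.ncard_eq_zero hfin] at this
      have := Set.diff_eq_empty.1 this
      exact Set.eq_univ_of_univ_subset this
    refine ⟨B0, subset_rfl, isBlockSet_iff.2 ⟨h, fun C hsub _ => ?_⟩⟩
    rw [hB0]
    exact (Set.eq_univ_of_univ_subset (hB0 ▸ hsub)).symm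
  | succ n ih =>
    intro B0 hn h
    by_cases hmax : ∀ C, B0 ⊆ C → NCV G C → B0 = C
    · exact ⟨B0, subset_rfl, isBlockSet_iff.2 ⟨h, hmax⟩⟩
    · push_neg at hmax
      obtain ⟨C, hsub, hC, hne⟩ := hmax
      have hss : B0 ⊂ C := HasSubset.Subset.ssubset_of_ne hsub hne
      have hlt : (Set.univ \ C).ncard < (Set.univ \ B0).ncard := by
        apply Set.ncard_lt_ncard
        · rw [Set.ssubset_def]
          obtain ⟨t, htC, htB0⟩ := Set.exists_of_ssubset hss
          refine ⟨Set.diff_subset_diff_right hss.1, fun hsub2 => ?_⟩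
          exact (hsub2 ⟨Set.mem_univ t, htB0⟩).2 htC
        · exact Set.toFinite _
      obtain ⟨B, hB1, hB2⟩ := ih C (by omega) hC
      exact ⟨B, hsub.trans hB1, hB2⟩

lemma blk_extend [Finite V] {B0 : Set V} (h : NCV G B0) :
    ∃ B, B0 ⊆ B ∧ IsBlockSet G B :=
  blk_extend_aux (Set.univ \ B0).ncard B0 le_rfl h

lemma mem_block_of_adj [Finite V] {x y : V} (h : G.Adj x y) :
    ∃ B, IsBlockSet G B ∧ x ∈ B ∧ y ∈ B := by
  obtain ⟨B, hsub, hB⟩ := blk_extend (edge_ncv h)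
  exact ⟨B, hB, hsub (by simp), hsub (by simp)⟩

lemma block_sub_block {B1 B2 : Set V} (h1 : IsBlockSet G B1) (h2 : IsBlockSet G B2)
    (hsub : B2 ⊆ B1) : B2 = B1 :=
  (isBlockSet_iff.1 h2).2 B1 hsub (isBlockSet_iff.1 h1).1

end Blocks
section Cut2
variable {V : Type*} {G : SimpleGraph V}
open SimpleGraph

lemma cut_of_two_blocks {B1 B2 : Set V} (h1 : IsBlockSet G B1) (h2 : IsBlockSet G B2)
    (hne12 : B1 ≠ B2) {v : V} (hv1 : v ∈ B1) (hv2 : v ∈ B2) : CutVtx G v := by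
  classical
  by_contra hcut
  have hconnc : ConnW G ({v}ᶜ) := not_cutVtx_connW hcut
  have hn1 : NCV G B1 := (isBlockSet_iff.1 h1).1
  have hn2 : NCV G B2 := (isBlockSet_iff.1 h2).1
  have hB2nsub : ¬ B2 ⊆ B1 := fun hs => hne12 (block_sub_block h1 h2 hs).symm
  obtain ⟨b2, hb2B2, hb2B1⟩ := Set.not_subset.1 hB2nsub
  obtain ⟨b1, hb1⟩ := (hn1.2 v hv1).1
  have hb2v : b2 ≠ v := fun h => hb2B1 (h ▸ hv1)
  have hb1v : b1 ≠ v := hb1.2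
  obtain ⟨w0, hw0⟩ := hconnc.2 b2 hb2v b1 hb1v
  set p := w0.toPath.1 with hpdef
  have hp : p.IsPath := w0.toPath.2
  have hpsup : ∀ z ∈ p.support, z ≠ v := fun z hz =>
    hw0 z (Walk.support_toPath_subset w0 hz)
  obtain ⟨y1, hy1B1, w1, hw1p, hw1fst, hw1sub⟩ := exists_first_hit p hp hb1.1
  have hw1v : ∀ z ∈ w1.support, z ≠ v := fun z hz => hpsup z (hw1sub z hz)
  have hy1v : y1 ≠ v := hw1v y1 (Walk.end_mem_support _)
  set U : Set V := (B1 ∪ B2) ∪ wsupp w1 with hUdef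
  have hB1U : B1 ⊆ U := fun z hz => Or.inl (Or.inl hz)
  have hB2U : B2 ⊆ U := fun z hz => Or.inl (Or.inr hz)
  have hwU : wsupp w1 ⊆ U := fun z hz => Or.inr hz
  have hb2y1 : RW G (wsupp w1) b2 y1 := ⟨w1, fun z hz => hz⟩
  -- connectivity of U with a vertex removed (or not)
  have key : ∀ w : V, ∀ z ∈ U \ {w}, RW G (U \ {w}) z (if w = v then y1 else v) := by
    intro w z hz
    by_cases hwv : w = v
    · subst hwv
      simp only [if_pos rfl]
      have hy1mem : y1 ∈ U \ {w} := ⟨hB1U hy1B1, by simpa using hy1v⟩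
      have hrwB1 : ∀ t ∈ B1, t ≠ w → RW G (U \ {w}) t y1 := by
        intro t ht htw
        have := (hn1.2 w hv1).2 t ⟨ht, by simpa using htw⟩ y1 ⟨hy1B1, by simpa using hy1v⟩
        exact this.mono (fun u hu => ⟨hB1U hu.1, hu.2⟩)
      have hrww : ∀ t ∈ wsupp w1, RW G (U \ {w}) t y1 := by
        intro t ht
        refine (rw_support_end w1 ht).mono (fun u hu => ⟨hwU hu, ?_⟩)
        simpa using hw1v u hu
      rcases hz.1 with (hzB | hzB) | hzw
      · exact hrwB1 z hzB (by simpa using hz.2)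
      · -- z ∈ B2 : reach b2 within B2 \ {w}, then along the walk
        have hstep : RW G (U \ {w}) z b2 := by
          have := (hn2.2 w hv2).2 z ⟨hzB, by simpa using hz.2⟩ b2 ⟨hb2B2, by simpa using hb2v⟩
          exact this.mono (fun u hu => ⟨hB2U hu.1, hu.2⟩)
        refine hstep.trans ?_
        exact hrww b2 (Walk.start_mem_support _)
      · exact hrww z hzw
    · simp only [if_neg hwv]
      have hvmem : v ∈ U \ {w} := ⟨hB1U hv1, by simpa using Ne.symm hwv⟩
      have hrwB1 : ∀ t ∈ B1, t ≠ w → RW G (U \ {w}) t v := by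
        intro t ht htw
        have hcw : ConnW G (B1 \ {w}) := connW_del hn1 w ⟨v, hv1, by simpa using Ne.symm hwv⟩
        have := hcw.2 t ⟨ht, by simpa using htw⟩ v ⟨hv1, by simpa using Ne.symm hwv⟩
        exact this.mono (fun u hu => ⟨hB1U hu.1, hu.2⟩)
      have hrwB2 : ∀ t ∈ B2, t ≠ w → RW G (U \ {w}) t v := by
        intro t ht htw
        have hcw : ConnW G (B2 \ {w}) := connW_del hn2 w ⟨v, hv2, by simpa using Ne.symm hwv⟩
        have := hcw.2 t ⟨ht, by simpa using htw⟩ v ⟨hv2, by simpa using Ne.symm hwv⟩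
        exact this.mono (fun u hu => ⟨hB2U hu.1, hu.2⟩)
      rcases hz.1 with (hzB | hzB) | hzw
      · exact hrwB1 z hzB (by simpa using hz.2)
      · exact hrwB2 z hzB (by simpa using hz.2)
      · -- z on the walk
        have hzw' : z ≠ w := by simpa using hz.2
        by_cases hwsup : w ∈ w1.support
        · rcases rw_del_mid w1 hw1p hwsup hzw hzw' with hL | hR
          · have hb2w : b2 ≠ w := by
              have := hL.left_mem; simpa using this.2
            refine (hL.symm.mono (A' := U \ {w}) (fun u hu => ⟨hwU hu.1, hu.2⟩)).trans ?_
            exact hrwB2 b2 hb2B2 hb2w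
          · have hy1w : y1 ≠ w := by
              have := hR.right_mem; simpa using this.2
            refine (hR.mono (A' := U \ {w}) (fun u hu => ⟨hwU hu.1, hu.2⟩)).trans ?_
            exact hrwB1 y1 hy1B1 hy1w
        · have hy1w : y1 ≠ w := fun h => hwsup (h ▸ Walk.end_mem_support _)
          have hsub : wsupp w1 ⊆ U \ {w} := by
            intro u hu
            exact ⟨hwU hu, fun h => hwsup ((Set.mem_singleton_iff.1 h) ▸ hu)⟩
          refine ((rw_support_end w1 hzw).mono hsub).trans ?_
          exact hrwB1 y1 hy1B1 hy1w
  -- U has no cut vertices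
  have hNCVU : NCV G U := by
    constructor
    · refine ⟨⟨v, hB1U hv1⟩, fun x hx y hy => ?_⟩
      have hub : ∀ z ∈ U, RW G U z v := by
        intro z hz
        rcases hz with (hzB | hzB) | hzw
        · exact (hn1.1.2 z hzB v hv1).mono hB1U
        · exact (hn2.1.2 z hzB v hv2).mono hB2U
        · refine ((rw_support_end w1 hzw).mono hwU).trans ?_
          exact (hn1.1.2 y1 hy1B1 v hv1).mono hB1U
      exact (hub x hx).trans (hub y hy).symm
    · intro w hw
      constructor
      · by_cases hwv : w = v
        · exact ⟨y1, ⟨hB1U hy1B1, by simpa [hwv] using hy1v⟩⟩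
        · exact ⟨v, ⟨hB1U hv1, by simpa using Ne.symm hwv⟩⟩
      · intro x hx y hy
        have hx' := key w x hx
        have hy' := key w y hy
        exact hx'.trans hy'.symm
  have hU : B1 = U := (isBlockSet_iff.1 h1).2 U hB1U hNCVU
  exact hb2B1 (hU ▸ hB2U hb2B2 : b2 ∈ B1) |>.elim
end Cut2
section Aux6
variable {V : Type*} {G : SimpleGraph V}
open SimpleGraph

lemma cut_of_boundary [Finite V] {B : Set V} (hB : IsBlockSet G B) {x y : V}
    (hx : x ∈ B) (hy : y ∉ B) (hadj : G.Adj x y) : CutVtx G x := by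
  obtain ⟨B', hB', hxB', hyB'⟩ := mem_block_of_adj hadj
  exact cut_of_two_blocks hB hB' (fun h => hy (h ▸ hyB')) hx hxB'

lemma noncut_nbr_in_block [Finite V] {B : Set V} (hB : IsBlockSet G B) {x y : V}
    (hx : x ∈ B) (hcut : ¬ CutVtx G x) (hadj : G.Adj x y) : y ∈ B := by
  by_contra hy
  exact hcut (cut_of_boundary hB hx hy hadj)

lemma block_has_cut [Finite V] (hconn : G.Connected)
    (htwo : ∃ B1 B2 : Set V, IsBlockSet G B1 ∧ IsBlockSet G B2 ∧ B1 ≠ B2)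
    {B : Set V} (hB : IsBlockSet G B) : ∃ c ∈ B, CutVtx G c := by
  obtain ⟨B1, B2, h1, h2, h12⟩ := htwo
  have hBuniv : B ≠ Set.univ := by
    rintro rfl
    have e1 : B1 = Set.univ := block_sub_block hB h1 (Set.subset_univ _)
    have e2 : B2 = Set.univ := block_sub_block hB h2 (Set.subset_univ _)
    exact h12 (e1.trans e2.symm)
  obtain ⟨u, hu⟩ : ∃ u, u ∉ B := by
    by_contra h
    push_neg at h
    exact hBuniv (Set.eq_univ_of_forall h)
  obtain ⟨x0, hx0⟩ := (isBlockSet_iff.1 hB).1.1.1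
  obtain ⟨w⟩ := hconn.preconnected x0 u
  obtain ⟨x, hxB, y, hyB, hadj⟩ := exists_crossing w hx0 hu
  exact ⟨x, hxB, cut_of_boundary hB hxB hyB hadj⟩

lemma dist_ge_two (hconn : G.Connected) {x y : V} (hne : x ≠ y) (hnadj : ¬ G.Adj x y) :
    2 ≤ G.dist x y := by
  have h1 : 0 < G.dist x y := hconn.pos_dist_of_ne hne
  have h2 : G.dist x y ≠ 1 := fun h => hnadj (SimpleGraph.dist_eq_one_iff_adj.1 h)
  omega

lemma dist_le_of_adj_right (hconn : G.Connected) {a u v : V} (h : G.Adj u v) :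
    G.dist a v ≤ G.dist a u + 1 := by
  calc G.dist a v ≤ G.dist a u + G.dist u v := hconn.dist_triangle
  _ ≤ G.dist a u + 1 := by
      have : G.dist u v = 1 := SimpleGraph.dist_eq_one_iff_adj.2 h
      omega

lemma dist_split (hconn : G.Connected) {a b c : V} (hsep : ¬ RW G ({c}ᶜ) a b) :
    G.dist a c + G.dist c b ≤ G.dist a b := by
  classical
  obtain ⟨p, hp⟩ := (hconn.preconnected a b).exists_walk_length_eq_dist
  have hc : c ∈ p.support := by
    by_contra hc
    exact hsep ⟨p, fun z hz => fun h => hc ((Set.mem_singleton_iff.1 h) ▸ hz)⟩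
  have hspec := p.take_spec hc
  have hlen : (p.takeUntil c hc).length + (p.dropUntil c hc).length = p.length := by
    rw [← Walk.length_append, hspec]
  calc G.dist a c + G.dist c b
      ≤ (p.takeUntil c hc).length + (p.dropUntil c hc).length :=
        Nat.add_le_add (SimpleGraph.dist_le _) (SimpleGraph.dist_le _)
  _ = p.length := hlen
  _ = G.dist a b := hp

lemma rw_compl_trans_not {c a b d : V} (h1 : ¬ RW G ({c}ᶜ) a b) (h2 : RW G ({c}ᶜ) d b) :
    ¬ RW G ({c}ᶜ) a d := fun h => h1 (h.trans h2)

-- complete bipartite block helpers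
lemma compBip_swap {B V1 V2 : Set V} (h : CompBipOn G B V1 V2) : CompBipOn G B V2 V1 := by
  obtain ⟨h1, h2, h3, h4, h5⟩ := h
  exact ⟨h2, h1, h3.symm, (Set.union_comm _ _).trans h4, fun x hx y hy =>
    (h5 x hx y hy).trans (by tauto)⟩

lemma compBip_adj {B V1 V2 : Set V} (h : CompBipOn G B V1 V2) {x y : V}
    (hx : x ∈ V1) (hy : y ∈ V2) : G.Adj x y := by
  obtain ⟨h1, h2, h3, h4, h5⟩ := h
  exact (h5 x (h4 ▸ Or.inl hx) y (h4 ▸ Or.inr hy)).2 (Or.inl ⟨hx, hy⟩)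

lemma compBip_not_adj_left {B V1 V2 : Set V} (h : CompBipOn G B V1 V2) {x y : V}
    (hx : x ∈ V1) (hy : y ∈ V1) : ¬ G.Adj x y := by
  obtain ⟨h1, h2, h3, h4, h5⟩ := h
  intro hadj
  rcases (h5 x (h4 ▸ Or.inl hx) y (h4 ▸ Or.inl hy)).1 hadj with ⟨_, h'⟩ | ⟨h', _⟩
  · exact (h3.ne_of_mem hy h') rfl
  · exact (h3.ne_of_mem hx h') rfl

lemma compBip_ne {B V1 V2 : Set V} (h : CompBipOn G B V1 V2) {x y : V}
    (hx : x ∈ V1) (hy : y ∈ V2) : x ≠ y := fun he => (h.2.2.1.ne_of_mem hx hy) he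

lemma compBip_side {B V1 V2 : Set V} (h : CompBipOn G B V1 V2) {x y : V}
    (hx : x ∈ V1) (hy : y ∈ B) (hadj : G.Adj x y) : y ∈ V2 := by
  obtain ⟨h1, h2, h3, h4, h5⟩ := h
  rcases (h5 x (h4 ▸ Or.inl hx) y hy).1 hadj with ⟨_, h'⟩ | ⟨h', _⟩
  · exact h'
  · exact absurd rfl (h3.ne_of_mem hx h')

lemma dist_le_two_same_side (hconn : G.Connected) {B V1 V2 : Set V}
    (h : CompBipOn G B V1 V2) {x y : V} (hx : x ∈ V1) (hy : y ∈ V1) :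
    G.dist x y ≤ 2 := by
  obtain ⟨z, hz⟩ := h.2.1
  have h1 : G.Adj x z := compBip_adj h hx hz
  have h2 : G.Adj z y := (compBip_adj h hy hz).symm
  have := SimpleGraph.dist_le (Walk.cons h1 (Walk.cons h2 Walk.nil))
  simpa using this

end Aux6
section Sep2
variable {V : Type*} {G : SimpleGraph V}
open SimpleGraph

lemma exists_penultimate : ∀ {x y : V} (w : G.Walk x y), x ≠ y →
    ∃ z ∈ w.support, z ≠ y ∧ G.Adj z y
  | x, _, Walk.nil, hxy => absurd rfl hxy
  | x, y, Walk.cons (v := b) hadj q, hxy => by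
    by_cases hby : b = y
    · subst hby
      exact ⟨x, Walk.start_mem_support _, hxy, hadj⟩
    · obtain ⟨z, hz1, hz2, hz3⟩ := exists_penultimate q hby
      exact ⟨z, by simp [Walk.support_cons]; right; exact hz1, hz2, hz3⟩

lemma exists_second : ∀ {x y : V} (w : G.Walk x y), x ≠ y →
    ∃ z ∈ w.support, G.Adj x z ∧ s(x, z) ∈ w.edges
  | x, _, Walk.nil, hxy => absurd rfl hxy
  | x, y, Walk.cons (v := b) hadj q, _ =>
    ⟨b, by simp [Walk.support_cons, Walk.start_mem_support], hadj, by simp [Walk.edges_cons]⟩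

lemma wsupp_reverse {x y : V} (w : G.Walk x y) : wsupp w.reverse = wsupp w := by
  ext z; simp [wsupp]

/-- From `a ∉ B` reaching `v ∈ B` while avoiding `c`, the walk enters `B` at a cut
vertex distinct from `c`; when `c, c'` are the only cut vertices of `B`, it enters at
`c'`. -/
lemma reach_hit [Finite V] {B : Set V} (hB : IsBlockSet G B) {c c' a v : V}
    (hcB : c ∈ B) (hc'B : c' ∈ B) (hcc' : c ≠ c')
    (honly : ∀ x ∈ B, CutVtx G x → x = c ∨ x = c')
    (ha : a ∉ B) (hv : v ∈ B) (h1 : RW G ({c}ᶜ) a v) :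
    ∃ Q : G.Walk a c', (∀ z ∈ Q.support, z ∈ B → z = c') ∧ (∀ z ∈ Q.support, z ≠ c) := by
  classical
  obtain ⟨w0, hw0⟩ := h1
  have hp : (w0.toPath : G.Walk a v).IsPath := w0.toPath.2
  have hpsup : ∀ z ∈ (w0.toPath : G.Walk a v).support, z ≠ c := by
    intro z hz heq
    exact hw0 z (Walk.support_toPath_subset w0 hz) (by simp [heq])
  obtain ⟨y, hyB, w1, hw1p, hw1fst, hw1sub⟩ := exists_first_hit (w0.toPath : G.Walk a v) hp hv
  have hw1c : ∀ z ∈ w1.support, z ≠ c := fun z hz => hpsup z (hw1sub z hz)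
  have hya : a ≠ y := fun h => ha (h ▸ hyB)
  obtain ⟨z0, hz0sup, hz0y, hz0adj⟩ := exists_penultimate w1 hya
  have hz0B : z0 ∉ B := fun h => hz0y (hw1fst z0 hz0sup h)
  have hycut : CutVtx G y := cut_of_boundary hB hyB hz0B hz0adj.symm
  have hyc' : y = c' := by
    rcases honly y hyB hycut with h | h
    · exact absurd h (hw1c y (Walk.end_mem_support _))
    · exact h
  subst hyc'
  exact ⟨w1, hw1fst, hw1c⟩

lemma sep_two [Finite V] {B : Set V} (hB : IsBlockSet G B) {c c' a v : V}
    (hcB : c ∈ B) (hc'B : c' ∈ B) (hcc' : c ≠ c')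
    (honly : ∀ x ∈ B, CutVtx G x → x = c ∨ x = c')
    (ha : a ∉ B) (hv : v ∈ B)
    (h1 : RW G ({c}ᶜ) a v) (h2 : RW G ({c'}ᶜ) a v) : False := by
  classical
  have hncv : NCV G B := (isBlockSet_iff.1 hB).1
  obtain ⟨Q, hQB, hQc⟩ := reach_hit hB hcB hc'B hcc' honly ha hv h1
  obtain ⟨Q', hQ'B, hQ'c'⟩ :=
    reach_hit hB hc'B hcB hcc'.symm (fun x hx hc => (honly x hx hc).symm) ha hv h2
  set W : G.Walk c' c := Q.reverse.append Q' with hWdef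
  have hWB : ∀ z ∈ W.support, z ∈ B → z = c ∨ z = c' := by
    intro z hz hzB
    rcases (Walk.mem_support_append_iff _ _).1 hz with h | h
    · right; exact hQB z (by rwa [Walk.support_reverse, List.mem_reverse] at h) hzB
    · left; exact hQ'B z h hzB
  have hWedge : s(c', c) ∉ W.edges := by
    intro hmem
    rw [Walk.edges_append, List.mem_append] at hmem
    rcases hmem with h | h
    · rw [Walk.edges_reverse, List.mem_reverse] at h
      have : c ∈ Q.support := Walk.snd_mem_support_of_mem_edges Q (by rwa [Sym2.eq_swap] at h)
      exact hQc c this rfl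
    · have : c' ∈ Q'.support := Walk.fst_mem_support_of_mem_edges Q' h
      exact hQ'c' c' this rfl
  set r : G.Walk c' c := (W.toPath : G.Walk c' c) with hrdef
  have hrp : r.IsPath := W.toPath.2
  have hrsub : ∀ z ∈ r.support, z ∈ W.support := fun z hz => Walk.support_toPath_subset W hz
  have hrB : ∀ z ∈ r.support, z ∈ B → z = c ∨ z = c' := fun z hz => hWB z (hrsub z hz)
  obtain ⟨m, hmsup, hmadj, hmedge⟩ := exists_second r hcc'.symm
  have hmc : m ≠ c := by
    rintro rfl
    exact hWedge (Walk.edges_toPath_subset W hmedge)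
  have hmc' : m ≠ c' := fun h => (hmadj.ne (h ▸ rfl)).elim
  have hmB : m ∉ B := fun h => by rcases hrB m hmsup h with h' | h' <;> [exact hmc h'; exact hmc' h']
  -- the union of B and the path support is nonseparable
  set U : Set V := B ∪ wsupp r with hUdef
  have hBU : B ⊆ U := fun z hz => Or.inl hz
  have hrU : wsupp r ⊆ U := fun z hz => Or.inr hz
  have hcr : c ∈ wsupp r := Walk.end_mem_support _
  have hc'r : c' ∈ wsupp r := Walk.start_mem_support _
  have hNCVU : NCV G U := by
    constructor
    · refine ⟨⟨c, hBU hcB⟩, fun x hx y hy => ?_⟩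
      have hub : ∀ z ∈ U, RW G U z c := by
        intro z hz
        rcases hz with hzB | hzr
        · exact (hncv.1.2 z hzB c hcB).mono hBU
        · exact (rw_support_end r hzr).mono hrU
      exact (hub x hx).trans (hub y hy).symm
    · intro w hw
      have main : ∃ hub ∈ U \ {w}, ∀ z ∈ U \ {w}, RW G (U \ {w}) z hub := by
        by_cases hwc : w = c
        · subst hwc
          refine ⟨c', ⟨hBU hc'B, by simpa using hcc'.symm⟩, fun z hz => ?_⟩
          rcases hz.1 with hzB | hzr
          · exact ((hncv.2 w hcB).2 z ⟨hzB, hz.2⟩ c' ⟨hc'B, by simpa using hcc'.symm⟩).mono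
              (fun u hu => ⟨hBU hu.1, hu.2⟩)
          · exact ((rw_del_end r hrp hzr (by simpa using hz.2)).symm).mono
              (A' := U \ {w}) (fun u hu => ⟨hrU hu.1, hu.2⟩)
        · by_cases hwc' : w = c'
          · subst hwc'
            refine ⟨c, ⟨hBU hcB, by simpa using hcc'⟩, fun z hz => ?_⟩
            rcases hz.1 with hzB | hzr
            · exact ((hncv.2 w hc'B).2 z ⟨hzB, hz.2⟩ c ⟨hcB, by simpa using hcc'⟩).mono
                (fun u hu => ⟨hBU hu.1, hu.2⟩)
            · have hzr' : z ∈ r.reverse.support := by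
                rw [Walk.support_reverse, List.mem_reverse]; exact hzr
              have := (rw_del_end r.reverse hrp.reverse hzr' (by simpa using hz.2)).symm
              rw [wsupp_reverse] at this
              exact this.mono (A' := U \ {w}) (fun u hu => ⟨hrU hu.1, hu.2⟩)
          · -- w ≠ c, c'
            refine ⟨c, ⟨hBU hcB, by simpa using (Ne.symm hwc)⟩, fun z hz => ?_⟩
            have hBdel : ∀ t ∈ B, t ≠ w → RW G (U \ {w}) t c := by
              intro t ht htw
              have hcwB : ConnW G (B \ {w}) :=
                connW_del hncv w ⟨c, hcB, by simpa using Ne.symm hwc⟩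
              exact (hcwB.2 t ⟨ht, by simpa using htw⟩ c ⟨hcB, by simpa using Ne.symm hwc⟩).mono
                (fun u hu => ⟨hBU hu.1, hu.2⟩)
            rcases hz.1 with hzB | hzr
            · exact hBdel z hzB (by simpa using hz.2)
            · by_cases hwr : w ∈ r.support
              · have hwB : w ∉ B := by
                  intro hcon
                  rcases hrB w hwr hcon with h | h <;> [exact hwc h; exact hwc' h]
                rcases rw_del_mid r hrp hwr hzr (by simpa using hz.2) with hL | hR
                · have hLc' : c' ≠ w := by
                    have := hL.left_mem; simpa [eq_comm] using this.2
                  refine ((hL.symm).mono (A' := U \ {w})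
                    (fun u hu => ⟨hrU hu.1, hu.2⟩)).trans ?_
                  exact hBdel c' hc'B hLc'
                · refine (hR.mono (A' := U \ {w}) (fun u hu => ⟨hrU hu.1, hu.2⟩)).trans ?_
                  exact hBdel c hcB (Ne.symm hwc)
              · have hsub : wsupp r ⊆ U \ {w} := fun u hu =>
                  ⟨hrU hu, fun h => hwr ((Set.mem_singleton_iff.1 h) ▸ hu)⟩
                refine ((rw_support_end r hzr).mono hsub).trans ?_
                exact hBdel c hcB (Ne.symm hwc)
      obtain ⟨hub, hhub, hmain⟩ := main
      exact ⟨⟨hub, hhub⟩, fun x hx y hy => (hmain x hx).trans (hmain y hy).symm⟩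
  have hU : B = U := (isBlockSet_iff.1 hB).2 U hBU hNCVU
  exact hmB (hU ▸ hrU hmsup)
end Sep2
section Aux8
variable {V : Type*} {G : SimpleGraph V} {S : Set V}
open SimpleGraph

lemma cut_split_ncard {B V1 V2 : Set V} [Finite V] (hcb : CompBipOn G B V1 V2) :
    (B ∩ cutSet G).ncard = (V1 ∩ cutSet G).ncard + (V2 ∩ cutSet G).ncard := by
  have h4 := hcb.2.2.2.1
  have h3 := hcb.2.2.1
  rw [← h4, Set.union_inter_distrib_right]
  exact Set.ncard_union_eq (h3.mono Set.inter_subset_left Set.inter_subset_left)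
    (Set.toFinite _) (Set.toFinite _)

lemma block_cut_one_or_two [Finite V] (hG : ClassB G) {B : Set V} (hB : IsBlockSet G B) :
    (B ∩ cutSet G).ncard = 1 ∨ (B ∩ cutSet G).ncard = 2 := by
  obtain ⟨c0, hc0B, hc0⟩ := block_has_cut hG.1.1 hG.2.1 hB
  have h1 : 0 < (B ∩ cutSet G).ncard := by
    rw [Set.ncard_pos (Set.toFinite _)]
    exact ⟨c0, hc0B, hc0⟩
  have h2 := hG.2.2 B hB
  omega

lemma sides_meet_S [Finite V] (hG : ClassB G) (hS : AssocSet G S) {B V1 V2 : Set V}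
    (hB : IsBlockSet G B) (hcb : CompBipOn G B V1 V2)
    (hk : ¬ (V1.ncard = 1 ∧ V2.ncard = 1)) :
    (S ∩ V1).Nonempty ∧ (S ∩ V2).Nonempty := by
  have hds := ((hS.2 B V1 V2 hB hcb).2 hk)
  have hsplit := cut_split_ncard (G := G) hcb
  have hmem1 : (S ∩ (V1 \ cutSet G)).ncard = 1 → (S ∩ V1).Nonempty := by
    intro h
    obtain ⟨t, ht⟩ := Set.nonempty_of_ncard_ne_zero (by omega : (S ∩ (V1 \ cutSet G)).ncard ≠ 0)
    exact ⟨t, ht.1, ht.2.1⟩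
  have hmem2 : (S ∩ (V2 \ cutSet G)).ncard = 1 → (S ∩ V2).Nonempty := by
    intro h
    obtain ⟨t, ht⟩ := Set.nonempty_of_ncard_ne_zero (by omega : (S ∩ (V2 \ cutSet G)).ncard ≠ 0)
    exact ⟨t, ht.1, ht.2.1⟩
  have hcut1 : 0 < (V1 ∩ cutSet G).ncard → (S ∩ V1).Nonempty := by
    intro h
    obtain ⟨t, ht⟩ := Set.nonempty_of_ncard_ne_zero (s := V1 ∩ cutSet G) (by omega)
    exact ⟨t, hS.1 t ht.2, ht.1⟩
  have hcut2 : 0 < (V2 ∩ cutSet G).ncard → (S ∩ V2).Nonempty := by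
    intro h
    obtain ⟨t, ht⟩ := Set.nonempty_of_ncard_ne_zero (s := V2 ∩ cutSet G) (by omega)
    exact ⟨t, hS.1 t ht.2, ht.1⟩
  rcases block_cut_one_or_two hG hB with h | h
  · obtain ⟨ha, hb⟩ := hds.1 h
    exact ⟨hmem1 ha, hmem2 hb⟩
  · have h2 := hds.2 h
    have hsum : (V1 ∩ cutSet G).ncard + (V2 ∩ cutSet G).ncard = 2 := by omega
    rcases Nat.lt_or_ge (V1 ∩ cutSet G).ncard 1 with h1 | h1
    · exact ⟨hmem1 (h2.2.1 (by omega)).1, hcut2 (by omega)⟩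
    rcases Nat.lt_or_ge (V1 ∩ cutSet G).ncard 2 with h1' | h1'
    · exact ⟨hcut1 (by omega), hcut2 (by omega)⟩
    · exact ⟨hcut1 (by omega), hmem2 (h2.1 (by omega)).1⟩

lemma exists_S_same_side [Finite V] (hG : ClassB G) (hS : AssocSet G S) {c w : V}
    (hc : CutVtx G c) (hw : w ≠ c) : ∃ s ∈ S, s ≠ c ∧ RW G ({c}ᶜ) w s := by
  classical
  have hconn : G.Connected := hG.1.1
  obtain ⟨w0⟩ := hconn.preconnected w c
  set p : G.Walk w c := (w0.toPath : G.Walk w c) with hpdef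
  have hp : p.IsPath := w0.toPath.2
  obtain ⟨z, hzsup, hzc, hzadj⟩ := exists_penultimate p hw
  have hwz : RW G ({c}ᶜ) w z := by
    refine (rw_del_end p hp hzsup hzc).mono ?_
    rintro u ⟨_, hu2⟩
    exact hu2
  obtain ⟨B, hB, hzB, hcB⟩ := mem_block_of_adj hzadj
  obtain ⟨W1, W2, hcb⟩ := hG.1.2 B hB
  have hBdel : ∀ s ∈ B, s ≠ c → RW G ({c}ᶜ) z s := by
    intro s hsB hsc
    have hcw : ConnW G (B \ {c}) := (isBlockSet_iff.1 hB).1.2 c hcB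
    refine (hcw.2 z ⟨hzB, by simpa using hzc⟩ s ⟨hsB, by simpa using hsc⟩).mono ?_
    rintro u ⟨_, hu2⟩
    exact hu2
  by_cases hk : W1.ncard = 1 ∧ W2.ncard = 1
  · have hBS : B ⊆ S := (hS.2 B W1 W2 hB hcb).1 hk
    exact ⟨z, hBS hzB, hzc, hwz⟩
  · obtain ⟨hS1, hS2⟩ := sides_meet_S hG hS hB hcb hk
    have hcB' : c ∈ W1 ∪ W2 := hcb.2.2.2.1.symm ▸ hcB
    rcases hcB' with hcW | hcW
    · obtain ⟨s, hsS, hsW⟩ := hS2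
      have hsc : s ≠ c := (compBip_ne hcb hcW hsW).symm
      exact ⟨s, hsS, hsc, hwz.trans (hBdel s (hcb.2.2.2.1 ▸ Or.inr hsW) hsc)⟩
    · obtain ⟨s, hsS, hsW⟩ := hS1
      have hsc : s ≠ c := (compBip_ne (compBip_swap hcb) hcW hsW).symm
      exact ⟨s, hsS, hsc, hwz.trans (hBdel s (hcb.2.2.2.1 ▸ Or.inl hsW) hsc)⟩

lemma exists_far_vertex {c a : V} (hc : CutVtx G c) (hac : a ≠ c) :
    ∃ w, w ≠ c ∧ ¬ RW G ({c}ᶜ) a w := by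
  have h := cutVtx_iff.1 hc
  rw [ConnW, not_and_or] at h
  rcases h with h | h
  · exact absurd ⟨a, by simpa using hac⟩ h
  · push_neg at h
    obtain ⟨x, hx, y, hy, hxy⟩ := h
    by_cases hax : RW G ({c}ᶜ) a x
    · by_cases hay : RW G ({c}ᶜ) a y
      · exact absurd (hax.symm.trans hay) hxy
      · exact ⟨y, by simpa using hy, hay⟩
    · exact ⟨x, by simpa using hx, hax⟩

lemma exists_S_far [Finite V] (hG : ClassB G) (hS : AssocSet G S) {c a : V}
    (hc : CutVtx G c) (hac : a ≠ c) : ∃ s ∈ S, G.dist a c + 1 ≤ G.dist a s := by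
  have hconn : G.Connected := hG.1.1
  obtain ⟨w, hwc, hw⟩ := exists_far_vertex hc hac
  obtain ⟨s, hsS, hsc, hws⟩ := exists_S_same_side hG hS hc hwc
  have hnr : ¬ RW G ({c}ᶜ) a s := fun h => hw (h.trans hws.symm)
  have := dist_split hconn hnr
  have hpos : 0 < G.dist c s := hconn.pos_dist_of_ne (Ne.symm hsc)
  exact ⟨s, hsS, by omega⟩

end Aux8
section Aux9
variable {V : Type*} {G : SimpleGraph V} {S : Set V}
open SimpleGraph

lemma walk_swap_end : ∀ {a s : V} (p : G.Walk a s) (_ : a ≠ s) (v : V)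
    (_ : ∀ y, G.Adj y s → G.Adj y v), ∃ q : G.Walk a v, q.length ≤ p.length
  | a, _, Walk.nil, hne, _, _ => absurd rfl hne
  | a, s, Walk.cons (v := b) h p', hne, v, hsub => by
    by_cases hbs : b = s
    · subst hbs
      exact ⟨Walk.cons (hsub a h) Walk.nil, by simp⟩
    · obtain ⟨q, hq⟩ := walk_swap_end p' hbs v hsub
      exact ⟨Walk.cons h q, by simpa using hq⟩

lemma dist_reroute (hconn : G.Connected) {a s v : V}
    (hsub : ∀ y, G.Adj y s → G.Adj y v) (hne : a ≠ s) : G.dist a v ≤ G.dist a s := by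
  obtain ⟨p, hp⟩ := (hconn.preconnected a s).exists_walk_length_eq_dist
  obtain ⟨q, hq⟩ := walk_swap_end p hne v hsub
  calc G.dist a v ≤ q.length := SimpleGraph.dist_le q
  _ ≤ p.length := hq
  _ = G.dist a s := hp

lemma distS [Finite V] (hG : ClassB G) (hS : AssocSet G S) :
    ∀ k : ℕ, ∀ a ∈ S, ∀ b ∈ S, G.dist a b = k →
      ∃ w : G.Walk a b, (∀ z ∈ w.support, z ∈ S) ∧ w.length ≤ k := by
  have hconn : G.Connected := hG.1.1
  intro k
  induction k using Nat.strong_induction_on with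
  | _ k ih =>
    intro a ha b hb hd
    rcases Nat.eq_zero_or_pos k with rfl | hkpos
    · have hab : a = b := by
        rcases SimpleGraph.dist_eq_zero_iff_eq_or_not_reachable.1 hd with h | h
        · exact h
        · exact absurd (hconn.preconnected a b) h
      subst hab
      exact ⟨Walk.nil, by simpa using ha, by simp⟩
    · obtain ⟨p, hp⟩ := (hconn.preconnected a b).exists_walk_length_eq_dist
      rw [hd] at hp
      cases p with
      | nil => simp at hp; omega
      | @cons _ x1 _ h q =>
        simp only [Walk.length_cons] at hp
        by_cases hx1S : x1 ∈ S
        · have hm : G.dist x1 b ≤ k - 1 := by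
            have := SimpleGraph.dist_le q
            omega
          obtain ⟨w', hw'S, hw'len⟩ := ih (G.dist x1 b) (by omega) x1 hx1S b hb rfl
          refine ⟨Walk.cons h w', ?_, ?_⟩
          · intro z hz
            rcases List.mem_cons.1 (by simpa using hz) with rfl | hz'
            · exact ha
            · exact hw'S z hz'
          · simp only [Walk.length_cons]
            omega
        · have hx1cut : ¬ CutVtx G x1 := fun hc => hx1S (hS.1 _ hc)
          obtain ⟨B, hB, hx1B, haB⟩ := mem_block_of_adj h.symm
          obtain ⟨W1, W2, hcb⟩ := hG.1.2 B hB
          have core : ∀ W1' W2' : Set V, CompBipOn G B W1' W2' → x1 ∈ W1' →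
              ∃ s ∈ S, G.Adj a s ∧ G.dist s b ≤ k - 1 := by
            intro W1' W2' hcb' hx1W
            have haW2 : a ∈ W2' := compBip_side hcb' hx1W haB h.symm
            have hnk : ¬ (W1'.ncard = 1 ∧ W2'.ncard = 1) := by
              intro hk
              exact hx1S ((hS.2 B W1' W2' hB hcb').1 hk (hcb'.2.2.2.1 ▸ Or.inl hx1W))
            obtain ⟨s, hsS, hsW1⟩ := (sides_meet_S hG hS hB hcb' hnk).1
            have hadj_as : G.Adj a s := (compBip_adj hcb' hsW1 haW2).symm
            cases q with
            | nil =>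
              exact absurd hb (by simpa using hx1S)
            | @cons _ x2 _ h2 q2 =>
              simp only [Walk.length_cons] at hp
              have hx2B : x2 ∈ B := noncut_nbr_in_block hB hx1B hx1cut h2
              have hx2W2 : x2 ∈ W2' := compBip_side hcb' hx1W hx2B h2
              by_cases hsx2 : s = x2
              · subst hsx2
                have := SimpleGraph.dist_le q2
                exact ⟨s, hsS, hadj_as, by omega⟩
              · have hadj_sx2 : G.Adj s x2 := compBip_adj hcb' hsW1 hx2W2
                have := SimpleGraph.dist_le (Walk.cons hadj_sx2 q2)
                simp only [Walk.length_cons] at this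
                exact ⟨s, hsS, hadj_as, by omega⟩
          have hside : x1 ∈ W1 ∪ W2 := hcb.2.2.2.1.symm ▸ hx1B
          have hs' : ∃ s ∈ S, G.Adj a s ∧ G.dist s b ≤ k - 1 := by
            rcases hside with hx | hx
            · exact core W1 W2 hcb hx
            · exact core W2 W1 (compBip_swap hcb) hx
          obtain ⟨s, hsS, hadj, hsb⟩ := hs'
          obtain ⟨w', hw'S, hw'len⟩ := ih (G.dist s b) (by omega) s hsS b hb rfl
          refine ⟨Walk.cons hadj w', ?_, ?_⟩
          · intro z hz
            rcases List.mem_cons.1 (by simpa using hz) with rfl | hz'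
            · exact ha
            · exact hw'S z hz'
          · simp only [Walk.length_cons]
            omega

lemma dist_induce_eq [Finite V] (hG : ClassB G) (hS : AssocSet G S) {a b : V}
    (ha : a ∈ S) (hb : b ∈ S) :
    (G.induce S).dist ⟨a, ha⟩ ⟨b, hb⟩ = G.dist a b := by
  obtain ⟨w, hwS, hwlen⟩ := distS hG hS (G.dist a b) a ha b hb rfl
  obtain ⟨w', hlen', _⟩ := walk_up w hwS ha hb
  have hle : (G.induce S).dist ⟨a, ha⟩ ⟨b, hb⟩ ≤ G.dist a b := by
    have := SimpleGraph.dist_le w'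
    omega
  have hreach : (G.induce S).Reachable ⟨a, ha⟩ ⟨b, hb⟩ := ⟨w'⟩
  obtain ⟨p, hp⟩ := hreach.exists_walk_length_eq_dist
  obtain ⟨p', hp'len, _⟩ := walk_down p
  have hge : G.dist a b ≤ (G.induce S).dist ⟨a, ha⟩ ⟨b, hb⟩ := by
    have h2 : G.dist a b ≤ p'.length := SimpleGraph.dist_le p'
    omega
  omega

end Aux9
section Far
variable {V : Type*} {G : SimpleGraph V} {S : Set V}
open SimpleGraph

lemma mem_cutSet_iff {v : V} : v ∈ cutSet G ↔ CutVtx G v := Iff.rfl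

lemma far_core [Finite V] (hG : ClassB G) (hS : AssocSet G S) {a v : V} {B V1 V2 : Set V}
    (ha : a ∈ S) (hvS : v ∉ S) (hvcut : ¬ CutVtx G v)
    (hB : IsBlockSet G B) (hcb : CompBipOn G B V1 V2) (hv1 : v ∈ V1) :
    ∃ s ∈ S, G.dist a v ≤ G.dist a s := by
  have hconn : G.Connected := hG.1.1
  have hvB : v ∈ B := hcb.2.2.2.1 ▸ Or.inl hv1
  have hav : a ≠ v := fun h => hvS (h ▸ ha)
  have hnk : ¬ (V1.ncard = 1 ∧ V2.ncard = 1) := fun hk =>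
    hvS ((hS.2 B V1 V2 hB hcb).1 hk hvB)
  have hdv2 : ∀ x ∈ V1, G.dist x v ≤ 2 := fun x hx => dist_le_two_same_side hconn hcb hx hv1
  by_cases htwin : (S ∩ (V1 \ cutSet G)).Nonempty
  · obtain ⟨s, hsS, hsV1, hscut⟩ := htwin
    by_cases has : a = s
    · subst has
      have haV1 : a ∈ V1 := hsV1
      have hdav : G.dist a v ≤ 2 := hdv2 a haV1
      obtain ⟨c, hcB, hccut⟩ := block_has_cut hconn hG.2.1 hB
      rcases (hcb.2.2.2.1.symm ▸ hcB : c ∈ V1 ∪ V2) with hcW | hcW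
      · have hac : a ≠ c := fun h => hscut (h ▸ hccut)
        have hnadj : ¬ G.Adj a c := compBip_not_adj_left hcb haV1 hcW
        have h2 := dist_ge_two hconn hac hnadj
        exact ⟨c, hS.1 c hccut, by omega⟩
      · have hac : a ≠ c := compBip_ne hcb haV1 hcW
        obtain ⟨s', hs'S, hfar⟩ := exists_S_far hG hS hccut hac
        have hpos : 1 ≤ G.dist a c := hconn.pos_dist_of_ne hac
        exact ⟨s', hs'S, by omega⟩
    · have hsB : s ∈ B := hcb.2.2.2.1 ▸ Or.inl hsV1
      have hsub : ∀ y, G.Adj y s → G.Adj y v := by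
        intro y hy
        have hyB : y ∈ B := noncut_nbr_in_block hB hsB hscut hy.symm
        have hyW2 : y ∈ V2 := compBip_side hcb hsV1 hyB hy.symm
        exact (compBip_adj hcb hv1 hyW2).symm
      exact ⟨s, hsS, dist_reroute hconn hsub has⟩
  · have hempty : S ∩ (V1 \ cutSet G) = ∅ := Set.not_nonempty_iff_eq_empty.1 htwin
    have hds := (hS.2 B V1 V2 hB hcb).2 hnk
    have hn2 : (B ∩ cutSet G).ncard = 2 := by
      rcases block_cut_one_or_two hG hB with h | h
      · exfalso
        have h1 := (hds.1 h).1
        rw [hempty] at h1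
        simp at h1
      · exact h
    obtain ⟨c, c', hcc', hset⟩ := Set.ncard_eq_two.1 hn2
    have hcmem : c ∈ B ∩ cutSet G := hset ▸ (by simp)
    have hc'mem : c' ∈ B ∩ cutSet G := hset ▸ (by simp)
    have hcB : c ∈ B := hcmem.1
    have hc'B : c' ∈ B := hc'mem.1
    have hccut : CutVtx G c := hcmem.2
    have hc'cut : CutVtx G c' := hc'mem.2
    have honly : ∀ x ∈ B, CutVtx G x → x = c ∨ x = c' := by
      intro x hx hcx
      have : x ∈ B ∩ cutSet G := ⟨hx, hcx⟩
      rw [hset] at this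
      simpa using this
    have hvc : v ≠ c := fun h => hvcut (h ▸ hccut)
    have hvc' : v ≠ c' := fun h => hvcut (h ▸ hc'cut)
    -- helper : both designated cut vertices in V1
    have horient : ∀ d d' : V, d ∈ V1 → d' ∈ V1 → d ≠ d' → CutVtx G d → CutVtx G d' →
        v ≠ d → ¬ RW G ({d}ᶜ) a v → ∃ s ∈ S, G.dist a v ≤ G.dist a s := by
      intro d d' hd hd' hdd' hdcut hd'cut hvd hnr
      have hdB : d ∈ B := hcb.2.2.2.1 ▸ Or.inl hd
      have hd'B : d' ∈ B := hcb.2.2.2.1 ▸ Or.inl hd'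
      have htri : G.dist a v ≤ G.dist a d + 2 := by
        have h1 := hconn.dist_triangle (u := a) (v := d) (w := v)
        have h2 := hdv2 d hd
        omega
      have hrd'v : RW G ({d}ᶜ) d' v := by
        have hcw : ConnW G (B \ {d}) := (isBlockSet_iff.1 hB).1.2 d hdB
        refine (hcw.2 d' ⟨hd'B, by simpa using (Ne.symm hdd')⟩ v ⟨hvB, by simpa using hvd⟩).mono ?_
        rintro u ⟨_, hu2⟩
        exact hu2
      have hnr' : ¬ RW G ({d}ᶜ) a d' := fun h => hnr (h.trans hrd'v)
      have hsplit := dist_split hconn hnr'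
      have h2 : 2 ≤ G.dist d d' := dist_ge_two hconn hdd' (compBip_not_adj_left hcb hd hd')
      exact ⟨d', hS.1 d' hd'cut, by omega⟩
    -- helper : mixed sides
    have hmixed : ∀ c1 c2 : V, c1 ∈ V1 → c2 ∈ V2 → CutVtx G c1 → CutVtx G c2 →
        (∀ x ∈ B, CutVtx G x → x = c1 ∨ x = c2) → ∃ s ∈ S, G.dist a v ≤ G.dist a s := by
      intro c1 c2 hc1 hc2 hc1cut hc2cut honly'
      have hc1B : c1 ∈ B := hcb.2.2.2.1 ▸ Or.inl hc1
      have hc2B : c2 ∈ B := hcb.2.2.2.1 ▸ Or.inr hc2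
      have hc1c2 : c1 ≠ c2 := compBip_ne hcb hc1 hc2
      have hvc1 : v ≠ c1 := fun h => hvcut (h ▸ hc1cut)
      have hadjc2v : G.Adj c2 v := (compBip_adj hcb hv1 hc2).symm
      have hdc2v : G.dist a v ≤ G.dist a c2 + 1 := dist_le_of_adj_right hconn hadjc2v
      by_cases haB : a ∈ B
      · have hacut : CutVtx G a := by
          by_contra hac
          have hV1c : (V1 ∩ cutSet G) = {c1} := by
            apply Set.eq_singleton_iff_unique_mem.2
            refine ⟨⟨hc1, hc1cut⟩, fun x hx => ?_⟩
            rcases honly' x (hcb.2.2.2.1 ▸ Or.inl hx.1) hx.2 with h | h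
            · exact h
            · exact absurd (h ▸ hx.1) (fun hh => (hcb.2.2.1.ne_of_mem hh hc2) rfl)
          have hV2c : (V2 ∩ cutSet G) = {c2} := by
            apply Set.eq_singleton_iff_unique_mem.2
            refine ⟨⟨hc2, hc2cut⟩, fun x hx => ?_⟩
            rcases honly' x (hcb.2.2.2.1 ▸ Or.inr hx.1) hx.2 with h | h
            · exact absurd (h ▸ hx.1) (fun hh => (hcb.2.2.1.ne_of_mem hc1 hh) rfl)
            · exact h
          have hBS : S ∩ (B \ cutSet G) = ∅ :=
            (hds.2 hn2).2.2 ⟨by rw [hV1c]; simp, by rw [hV2c]; simp⟩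
          have : a ∈ S ∩ (B \ cutSet G) := ⟨ha, haB, hac⟩
          rw [hBS] at this
          exact this
        rcases honly' a haB hacut with rfl | rfl
        · -- a = c1
          have hdav : G.dist a v ≤ 2 := hdv2 a hc1
          obtain ⟨s, hsS, hfar⟩ := exists_S_far hG hS hc2cut hc1c2
          have hpos : 1 ≤ G.dist a c2 := hconn.pos_dist_of_ne hc1c2
          exact ⟨s, hsS, by omega⟩
        · -- a = c2
          have hdav : G.dist a v ≤ 1 := by
            have := SimpleGraph.dist_le (Walk.cons hadjc2v Walk.nil)
            simpa using this
          have hpos : 1 ≤ G.dist a c1 := hconn.pos_dist_of_ne (Ne.symm hc1c2)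
          exact ⟨c1, hS.1 c1 hc1cut, by omega⟩
      · have hsep : ¬ RW G ({c1}ᶜ) a v ∨ ¬ RW G ({c2}ᶜ) a v := by
          by_contra h
          push_neg at h
          exact sep_two hB hc1B hc2B hc1c2 honly' haB hvB h.1 h.2
        have hac1 : a ≠ c1 := fun h => haB (h ▸ hc1B)
        have hac2 : a ≠ c2 := fun h => haB (h ▸ hc2B)
        rcases hsep with hnr | hnr
        · -- separated at c1
          have htri : G.dist a v ≤ G.dist a c1 + 2 := by
            have h1 := hconn.dist_triangle (u := a) (v := c1) (w := v)
            have h2 := hdv2 c1 hc1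
            omega
          have hrc2v : RW G ({c1}ᶜ) c2 v := by
            have hcw : ConnW G (B \ {c1}) := (isBlockSet_iff.1 hB).1.2 c1 hc1B
            refine (hcw.2 c2 ⟨hc2B, by simpa using (Ne.symm hc1c2)⟩ v
              ⟨hvB, by simpa using hvc1⟩).mono ?_
            rintro u ⟨_, hu2⟩
            exact hu2
          have hnr' : ¬ RW G ({c1}ᶜ) a c2 := fun h => hnr (h.trans hrc2v)
          have hsplit := dist_split hconn hnr'
          have hd12 : 1 ≤ G.dist c1 c2 := hconn.pos_dist_of_ne hc1c2
          obtain ⟨s, hsS, hfar⟩ := exists_S_far hG hS hc2cut hac2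
          exact ⟨s, hsS, by omega⟩
        · -- separated at c2
          have hrc1v : RW G ({c2}ᶜ) c1 v := by
            have hcw : ConnW G (B \ {c2}) := (isBlockSet_iff.1 hB).1.2 c2 hc2B
            have hvc2 : v ≠ c2 := hadjc2v.ne'
            refine (hcw.2 c1 ⟨hc1B, by simpa using hc1c2⟩ v
              ⟨hvB, by simpa using hvc2⟩).mono ?_
            rintro u ⟨_, hu2⟩
            exact hu2
          have hnr' : ¬ RW G ({c2}ᶜ) a c1 := fun h => hnr (h.trans hrc1v)
          have hsplit := dist_split hconn hnr'
          have hd21 : 1 ≤ G.dist c2 c1 := hconn.pos_dist_of_ne (Ne.symm hc1c2)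
          exact ⟨c1, hS.1 c1 hc1cut, by omega⟩
    -- case analysis on the sides of c and c'
    rcases (hcb.2.2.2.1.symm ▸ hcB : c ∈ V1 ∪ V2) with hcW | hcW <;>
      rcases (hcb.2.2.2.1.symm ▸ hc'B : c' ∈ V1 ∪ V2) with hc'W | hc'W
    · -- both in V1
      by_cases haB : a ∈ B
      · rcases (hcb.2.2.2.1.symm ▸ haB : a ∈ V1 ∪ V2) with haW | haW
        · have hacut : CutVtx G a := by
            by_contra hac
            have : a ∈ S ∩ (V1 \ cutSet G) := ⟨ha, haW, hac⟩
            rw [hempty] at this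
            exact this
          rcases honly a haB hacut with rfl | rfl
          · have hdav : G.dist a v ≤ 2 := hdv2 a hcW
            have h2 : 2 ≤ G.dist a c' :=
              dist_ge_two hconn hcc' (compBip_not_adj_left hcb hcW hc'W)
            exact ⟨c', hS.1 c' hc'cut, by omega⟩
          · have hdav : G.dist a v ≤ 2 := hdv2 a hc'W
            have h2 : 2 ≤ G.dist a c :=
              dist_ge_two hconn (Ne.symm hcc') (compBip_not_adj_left hcb hc'W hcW)
            exact ⟨c, hS.1 c hccut, by omega⟩
        · have hadj : G.Adj a v := (compBip_adj hcb hv1 haW).symm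
          have hdav : G.dist a v ≤ 1 := by
            have := SimpleGraph.dist_le (Walk.cons hadj Walk.nil)
            simpa using this
          have hac : a ≠ c := fun h => (compBip_ne hcb hcW haW) h.symm
          have hpos : 1 ≤ G.dist a c := hconn.pos_dist_of_ne hac
          exact ⟨c, hS.1 c hccut, by omega⟩
      · have hsep : ¬ RW G ({c}ᶜ) a v ∨ ¬ RW G ({c'}ᶜ) a v := by
          by_contra h
          push_neg at h
          exact sep_two hB hcB hc'B hcc' honly haB hvB h.1 h.2
        rcases hsep with hnr | hnr
        · exact horient c c' hcW hc'W hcc' hccut hc'cut hvc hnr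
        · exact horient c' c hc'W hcW (Ne.symm hcc') hc'cut hccut hvc' hnr
    · exact hmixed c c' hcW hc'W hccut hc'cut honly
    · exact hmixed c' c hc'W hcW hc'cut hccut
        (fun x hx hcx => (honly x hx hcx).symm)
    · -- both in V2 : contradiction with the absence of a twin
      exfalso
      have hV2c : V2 ∩ cutSet G = {c, c'} := by
        apply Set.Subset.antisymm
        · intro x hx
          rcases honly x (hcb.2.2.2.1 ▸ Or.inr hx.1) hx.2 with h | h
          · simp [h]
          · simp [h]
        · intro x hx
          rcases hx with rfl | rfl
          · exact ⟨hcW, hccut⟩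
          · exact ⟨hc'W, hc'cut⟩
      have h22 : (V2 ∩ cutSet G).ncard = 2 := by
        rw [hV2c]
        exact Set.ncard_pair hcc'
      have h1 := ((hds.2 hn2).2.1 h22).1
      rw [hempty] at h1
      simp at h1

lemma far_S [Finite V] (hG : ClassB G) (hS : AssocSet G S) {a : V} (ha : a ∈ S) (v : V) :
    ∃ s ∈ S, G.dist a v ≤ G.dist a s := by
  by_cases hvS : v ∈ S
  · exact ⟨v, hvS, le_rfl⟩
  · have hconn : G.Connected := hG.1.1
    have hvcut : ¬ CutVtx G v := fun hc => hvS (hS.1 _ hc)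
    have hav : a ≠ v := fun h => hvS (h ▸ ha)
    obtain ⟨u, hu⟩ := exists_adj hconn (show v ≠ a from hav.symm)
    obtain ⟨B, hB, hvB, huB⟩ := mem_block_of_adj hu
    obtain ⟨W1, W2, hcb⟩ := hG.1.2 B hB
    rcases (hcb.2.2.2.1.symm ▸ hvB : v ∈ W1 ∪ W2) with hv1 | hv1
    · exact far_core hG hS ha hvS hvcut hB hcb hv1
    · exact far_core hG hS ha hvS hvcut hB (compBip_swap hcb) hv1

end Far
theorem stmt_6 {V : Type*} [Fintype V] (G : SimpleGraph V) (hG : ClassB G)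
    (S : Set V) (hS : AssocSet G S) :
    ∀ a : S, ecc G a.1 = ecc (G.induce S) a := by
  rintro ⟨a, haS⟩
  have hV : Nonempty V := ⟨a⟩
  have hSne : Nonempty ↥S := ⟨⟨a, haS⟩⟩
  unfold ecc
  apply le_antisymm
  · apply csSup_le (Set.range_nonempty _)
    rintro x ⟨v, rfl⟩
    obtain ⟨s, hsS, hle⟩ := far_S hG hS haS v
    have heq : G.dist a s = (G.induce S).dist ⟨a, haS⟩ ⟨s, hsS⟩ :=
      (dist_induce_eq hG hS haS hsS).symm
    calc G.dist a v ≤ G.dist a s := hle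
    _ = (G.induce S).dist ⟨a, haS⟩ ⟨s, hsS⟩ := heq
    _ ≤ sSup (Set.range ((G.induce S).dist ⟨a, haS⟩)) :=
        le_csSup (Set.Finite.bddAbove (Set.finite_range _)) ⟨⟨s, hsS⟩, rfl⟩
  · apply csSup_le (Set.range_nonempty _)
    rintro x ⟨b, rfl⟩
    have heq : (G.induce S).dist ⟨a, haS⟩ b = G.dist a b.1 := by
      have := dist_induce_eq hG hS haS b.2
      convert this
    calc (G.induce S).dist ⟨a, haS⟩ b = G.dist a b.1 := heq
    _ ≤ sSup (Set.range (G.dist a)) :=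
        le_csSup (Set.Finite.bddAbove (Set.finite_range _)) ⟨b.1, rfl⟩
end

section
/- Let G be in class B with diam(G) ≥ 4, let B0 be a leaf block of G with unique cut-vertex v, and let u be a non-cut-vertex of G in B0. If u and v lie in the same partite set of B0 then e(u) = e(v) + 2; otherwise e(u) = e(v) + 1. -/
open SimpleGraph

variable {V : Type*}

section AuxLemmas

/-- Connectivity of `S` witnessed by walks in `G` staying in `S`. -/
def ConnOn (G : SimpleGraph V) (S : Set V) : Prop :=
  S.Nonempty ∧ ∀ a ∈ S, ∀ b ∈ S, ∃ p : G.Walk a b, ∀ z ∈ p.support, z ∈ S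

lemma walk_proj {G : SimpleGraph V} {S : Set V} {a b : ↥S}
    (q : (G.induce S).Walk a b) :
    ∃ p : G.Walk ↑a ↑b, p.support = q.support.map Subtype.val := by
  induction q with
  | nil => exact ⟨Walk.nil, by simp⟩
  | cons h q ih =>
    obtain ⟨p, hp⟩ := ih
    exact ⟨Walk.cons h p, by simp only [Walk.support_cons, List.map_cons, ← hp]; rfl⟩

lemma walk_lift {G : SimpleGraph V} {S : Set V} :
    ∀ {a b : V} (p : G.Walk a b), (∀ z ∈ p.support, z ∈ S) →
    ∀ (ha : a ∈ S) (hb : b ∈ S),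
    ∃ q : (G.induce S).Walk ⟨a, ha⟩ ⟨b, hb⟩, q.support.map Subtype.val = p.support := by
  intro a b p
  induction p with
  | nil => intro _ ha hb; exact ⟨Walk.nil, by simp⟩
  | @cons a c b h q ih =>
    intro hs ha hb
    have hc : c ∈ S := hs c (by simp)
    obtain ⟨q', hq'⟩ := ih (fun z hz => hs z (by simp [hz])) hc hb
    refine ⟨Walk.cons (by exact h) q', by show _ = a :: q.support; rw [← hq']; rfl⟩

lemma connOn_induce_iff {G : SimpleGraph V} {S : Set V} :
    (G.induce S).Connected ↔ ConnOn G S := by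
  constructor
  · intro h
    have hne : S.Nonempty := nonempty_subtype.mp h.nonempty
    refine ⟨hne, fun a ha b hb => ?_⟩
    obtain ⟨q⟩ := h.preconnected ⟨a, ha⟩ ⟨b, hb⟩
    obtain ⟨p, hp⟩ := walk_proj q
    refine ⟨p, fun z hz => ?_⟩
    rw [hp] at hz
    obtain ⟨s, _, rfl⟩ := List.mem_map.mp hz
    exact s.2
  · rintro ⟨hne, h⟩
    haveI : Nonempty ↥S := hne.to_subtype
    refine ⟨?_⟩
    intro x y
    obtain ⟨a, ha⟩ := x
    obtain ⟨b, hb⟩ := y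
    obtain ⟨p, hp⟩ := h a ha b hb
    obtain ⟨q, _⟩ := walk_lift p hp ha hb
    exact ⟨q⟩

lemma connOn_compl_iff {G : SimpleGraph V} {C : Set V} (w : ↥C) :
    ConnOn (G.induce C) {w}ᶜ ↔ ConnOn G (C \ {(w : V)}) := by
  constructor
  · rintro ⟨⟨a, ha⟩, h⟩
    have ha' : (a : V) ∈ C \ {(w : V)} :=
      ⟨a.2, fun he => ha (by simpa [Subtype.ext_iff] using he)⟩
    refine ⟨⟨a, ha'⟩, fun x hx y hy => ?_⟩
    have hx' : (⟨x, hx.1⟩ : ↥C) ∈ ({w}ᶜ : Set ↥C) := by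
      simp only [Set.mem_compl_iff, Set.mem_singleton_iff]
      intro he; exact hx.2 (by simpa [Subtype.ext_iff] using he)
    have hy' : (⟨y, hy.1⟩ : ↥C) ∈ ({w}ᶜ : Set ↥C) := by
      simp only [Set.mem_compl_iff, Set.mem_singleton_iff]
      intro he; exact hy.2 (by simpa [Subtype.ext_iff] using he)
    obtain ⟨p, hp⟩ := h _ hx' _ hy'
    obtain ⟨p', hp'⟩ := walk_proj p
    refine ⟨p', fun z hz => ?_⟩
    rw [hp'] at hz
    obtain ⟨s, hs, rfl⟩ := List.mem_map.mp hz
    refine ⟨s.2, fun he => ?_⟩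
    exact hp s hs (by simpa [Subtype.ext_iff] using he)
  · rintro ⟨⟨a, ha⟩, h⟩
    refine ⟨⟨⟨a, ha.1⟩, by
      simp only [Set.mem_compl_iff, Set.mem_singleton_iff]
      intro he; exact ha.2 (by simpa [Subtype.ext_iff] using he)⟩, ?_⟩
    rintro ⟨x, hxC⟩ hx ⟨y, hyC⟩ hy
    simp only [Set.mem_compl_iff, Set.mem_singleton_iff] at hx hy
    have hx' : x ∈ C \ {(w : V)} := ⟨hxC, fun he => hx (Subtype.ext he)⟩
    have hy' : y ∈ C \ {(w : V)} := ⟨hyC, fun he => hy (Subtype.ext he)⟩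
    obtain ⟨p, hp⟩ := h x hx' y hy'
    obtain ⟨q, hq⟩ := walk_lift p (fun z hz => (hp z hz).1) hxC hyC
    refine ⟨q, fun z hz => ?_⟩
    simp only [Set.mem_compl_iff, Set.mem_singleton_iff]
    intro he
    have : (z : V) ∈ p.support := by
      rw [← hq]; exact List.mem_map.mpr ⟨z, hz, rfl⟩
    exact (hp _ this).2 (by simp [he])

lemma noCutVtx_induce_iff {G : SimpleGraph V} {C : Set V} :
    NoCutVtx (G.induce C) ↔ ConnOn G C ∧ ∀ w ∈ C, ConnOn G (C \ {w}) := by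
  unfold NoCutVtx
  rw [connOn_induce_iff]
  refine and_congr_right fun _ => ?_
  constructor
  · intro h w hw
    have := (connOn_induce_iff.mp (h ⟨w, hw⟩))
    exact (connOn_compl_iff ⟨w, hw⟩).mp this
  · intro h w
    exact connOn_induce_iff.mpr ((connOn_compl_iff w).mpr (h w w.2))

lemma end_not_mem_takeUntil {G : SimpleGraph V} [DecidableEq V] {a b c : V} {P : G.Walk a b}
    (hP : P.IsPath) (hc : c ∈ P.support) (hcb : c ≠ b) : b ∉ (P.takeUntil c hc).support := by
  intro hmem
  have hspec := P.take_spec hc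
  have hnd : P.support.Nodup := hP.support_nodup
  rw [← hspec, Walk.support_append, List.nodup_append] at hnd
  have hb2 : b ∈ (P.dropUntil c hc).support.tail := by
    have := (P.dropUntil c hc).end_mem_support
    rw [(P.dropUntil c hc).support_eq_cons, List.mem_cons] at this
    rcases this with h | h
    · exact absurd h.symm hcb
    · exact h
  exact hnd.2.2 b hmem b hb2 rfl

lemma start_not_mem_dropUntil {G : SimpleGraph V} [DecidableEq V] {a b c : V} {P : G.Walk a b}
    (hP : P.IsPath) (hc : c ∈ P.support) (hca : c ≠ a) : a ∉ (P.dropUntil c hc).support := by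
  intro hmem
  have hspec := P.take_spec hc
  have hnd : P.support.Nodup := hP.support_nodup
  rw [← hspec, Walk.support_append, List.nodup_append] at hnd
  have ha2 : a ∈ (P.dropUntil c hc).support.tail := by
    rw [(P.dropUntil c hc).support_eq_cons, List.mem_cons] at hmem
    rcases hmem with h | h
    · exact absurd h.symm hca
    · exact h
  exact hnd.2.2 a (P.takeUntil c hc).start_mem_support a ha2 rfl

lemma first_hit {G : SimpleGraph V} {B0 : Set V} :
    ∀ {y c : V} (W : G.Walk y c), W.IsPath → c ∈ B0 →
    ∃ b ∈ B0, ∃ P : G.Walk y b, P.IsPath ∧ (∀ z ∈ P.support, z ∈ W.support) ∧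
      ∀ z ∈ P.support, z ≠ b → z ∉ B0 := by
  intro y c W
  induction W with
  | nil =>
    intro _ hc
    refine ⟨_, hc, Walk.nil, Walk.IsPath.nil, by simp, ?_⟩
    intro z hz hne
    simp only [Walk.support_nil, List.mem_singleton] at hz
    exact absurd hz hne
  | @cons y d c h q ih =>
    intro hpath hc
    by_cases hy : y ∈ B0
    · refine ⟨_, hy, Walk.nil, Walk.IsPath.nil, by simp, ?_⟩
      intro z hz hne
      simp only [Walk.support_nil, List.mem_singleton] at hz
      exact absurd hz hne
    · obtain ⟨b, hb, P, hPp, hsub, hout⟩ := ih hpath.of_cons hc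
      refine ⟨b, hb, Walk.cons h P, ?_, ?_, ?_⟩
      · rw [Walk.cons_isPath_iff]
        exact ⟨hPp, fun hmem => ((Walk.cons_isPath_iff _ _).mp hpath).2 (hsub y hmem)⟩
      · intro z hz
        rw [Walk.support_cons, List.mem_cons] at hz ⊢
        rcases hz with h1 | h1
        · exact Or.inl h1
        · exact Or.inr (hsub z h1)
      · intro z hz hne
        rw [Walk.support_cons, List.mem_cons] at hz
        rcases hz with h1 | h1
        · rw [h1]; exact hy
        · exact hout z h1 hne

lemma connOn_of_target {G : SimpleGraph V} {S : Set V} {t : V} (ht : t ∈ S)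
    (h : ∀ a ∈ S, ∃ p : G.Walk a t, ∀ z ∈ p.support, z ∈ S) : ConnOn G S := by
  refine ⟨⟨t, ht⟩, fun a ha b hb => ?_⟩
  obtain ⟨p, hp⟩ := h a ha
  obtain ⟨q, hq⟩ := h b hb
  refine ⟨p.append q.reverse, fun z hz => ?_⟩
  rcases (Walk.mem_support_append_iff _ _).mp hz with h1 | h2
  · exact hp z h1
  · exact hq z (by rwa [Walk.support_reverse, List.mem_reverse] at h2)

lemma block_closed {G : SimpleGraph V} {B0 : Set V} (hB : IsBlockSet G B0)
    {x y b0 : V} (hx : x ∈ B0) (hb0 : b0 ∈ B0) (hb0x : b0 ≠ x) (hnc : ¬ CutVtx G x)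
    (hadj : G.Adj x y) : y ∈ B0 := by
  classical
  by_contra hy
  have hGx : (G.induce ({x}ᶜ : Set V)).Connected := not_not.mp hnc
  obtain ⟨-, hconn⟩ := connOn_induce_iff.mp hGx
  have hyx : y ∈ ({x}ᶜ : Set V) := by
    simp only [Set.mem_compl_iff, Set.mem_singleton_iff]; exact hadj.ne'
  have hb0x' : b0 ∈ ({x}ᶜ : Set V) := by
    simp only [Set.mem_compl_iff, Set.mem_singleton_iff]; exact hb0x
  obtain ⟨W0, hW0⟩ := hconn y hyx b0 hb0x'
  have hWx : ∀ z ∈ W0.bypass.support, z ≠ x := fun z hz => by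
    have := hW0 z (W0.support_bypass_subset hz)
    simpa using this
  obtain ⟨b, hbB, P, hPp, hPsub, hPout⟩ := first_hit W0.bypass W0.bypass_isPath hb0
  have hPx : ∀ z ∈ P.support, z ≠ x := fun z hz => hWx z (hPsub z hz)
  have hyP : y ∈ P.support := P.start_mem_support
  have hbP : b ∈ P.support := P.end_mem_support
  have hbx : b ≠ x := hPx b hbP
  set C : Set V := B0 ∪ {z | z ∈ P.support} with hC
  obtain ⟨hB1, hB2⟩ := noCutVtx_induce_iff.mp hB.1
  have hBC : ∀ {z}, z ∈ B0 → z ∈ C := fun hz => Or.inl hz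
  have hPC : ∀ {z}, z ∈ P.support → z ∈ C := fun hz => Or.inr hz
  -- the key: C is nonseparable
  have hNC : NoCutVtx (G.induce C) := by
    rw [noCutVtx_induce_iff]
    constructor
    · -- ConnOn G C
      refine connOn_of_target (hBC hbB) ?_
      intro a ha
      rcases ha with haB | haP
      · obtain ⟨p, hp⟩ := hB1.2 a haB b hbB
        exact ⟨p, fun z hz => hBC (hp z hz)⟩
      · exact ⟨P.dropUntil a haP, fun z hz => hPC (P.support_dropUntil_subset haP hz)⟩
    · intro w hw
      by_cases hwP : w ∈ P.support
      · by_cases hwB : w ∈ B0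
        · -- w = b
          have hwb : w = b := by
            by_contra hne
            exact hPout w hwP hne hwB
          subst hwb
          refine connOn_of_target (t := x) ⟨hBC hx, by simpa using hbx.symm⟩ ?_
          rintro a ⟨haC, haw⟩
          have haw' : a ≠ w := by simpa using haw
          rcases haC with haB | haP
          · obtain ⟨p, hp⟩ := (hB2 w hwB).2 a ⟨haB, by simpa using haw'⟩ x ⟨hx, by simpa using hbx.symm⟩
            exact ⟨p, fun z hz => ⟨hBC (hp z hz).1, (hp z hz).2⟩⟩
          · have hbR : w ∉ (P.takeUntil a haP).support := end_not_mem_takeUntil hPp haP haw'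
            refine ⟨(P.takeUntil a haP).reverse.append (Walk.cons hadj.symm Walk.nil), ?_⟩
            intro z hz
            rcases (Walk.mem_support_append_iff _ _).mp hz with h1 | h2
            · rw [Walk.support_reverse, List.mem_reverse] at h1
              refine ⟨hPC (P.support_takeUntil_subset haP h1), ?_⟩
              simp only [Set.mem_singleton_iff]
              intro he; exact hbR (he ▸ h1)
            · simp only [Walk.support_cons, Walk.support_nil, List.mem_cons,
                List.not_mem_nil, or_false] at h2
              rcases h2 with rfl | rfl
              · refine ⟨hPC hyP, ?_⟩
                simp only [Set.mem_singleton_iff]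
                intro he
                exact hy (he.symm ▸ hwB)
              · exact ⟨hBC hx, by simpa using hbx.symm⟩
        · -- w ∈ P.support \ B0 ; target b
          refine connOn_of_target (t := b) ⟨hBC hbB, by
            simp only [Set.mem_singleton_iff]; intro he; exact hwB (he ▸ hbB)⟩ ?_
          rintro a ⟨haC, haw⟩
          have haw' : a ≠ w := by simpa using haw
          rcases haC with haB | haP
          · obtain ⟨p, hp⟩ := hB1.2 a haB b hbB
            refine ⟨p, fun z hz => ⟨hBC (hp z hz), ?_⟩⟩
            simp only [Set.mem_singleton_iff]
            intro he; exact hwB (he ▸ hp z hz)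
          · have hsplit : a ∈ (P.takeUntil w hwP).support ∨ a ∈ (P.dropUntil w hwP).support := by
              refine (Walk.mem_support_append_iff _ _).mp ?_
              rw [P.take_spec hwP]; exact haP
            rcases hsplit with hT | hD
            · -- a before w : walk a → y, edge y-x, walk x → b in B0
              have hTp : (P.takeUntil w hwP).IsPath := hPp.takeUntil hwP
              have hwR : w ∉ ((P.takeUntil w hwP).takeUntil a hT).support :=
                end_not_mem_takeUntil hTp hT haw'
              obtain ⟨pxb, hpxb⟩ := hB1.2 x hx b hbB
              refine ⟨((P.takeUntil w hwP).takeUntil a hT).reverse.append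
                (Walk.cons hadj.symm pxb), ?_⟩
              intro z hz
              rcases (Walk.mem_support_append_iff _ _).mp hz with h1 | h2
              · rw [Walk.support_reverse, List.mem_reverse] at h1
                have hzP : z ∈ P.support :=
                  P.support_takeUntil_subset hwP ((P.takeUntil w hwP).support_takeUntil_subset hT h1)
                refine ⟨hPC hzP, ?_⟩
                simp only [Set.mem_singleton_iff]
                intro he; exact hwR (he ▸ h1)
              · simp only [Walk.support_cons, List.mem_cons] at h2
                rcases h2 with rfl | h2
                · refine ⟨hPC hyP, ?_⟩
                  simp only [Set.mem_singleton_iff]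
                  intro he
                  subst he
                  exact hwR (Walk.start_mem_support _)
                · refine ⟨hBC (hpxb z h2), ?_⟩
                  simp only [Set.mem_singleton_iff]
                  intro he; exact hwB (he ▸ hpxb z h2)
            · -- a after w : walk a → b inside P avoiding w
              have hDp : (P.dropUntil w hwP).IsPath := hPp.dropUntil hwP
              have hwQ : w ∉ ((P.dropUntil w hwP).dropUntil a hD).support :=
                start_not_mem_dropUntil hDp hD haw'
              refine ⟨(P.dropUntil w hwP).dropUntil a hD, ?_⟩
              intro z hz
              have hzP : z ∈ P.support :=
                P.support_dropUntil_subset hwP ((P.dropUntil w hwP).support_dropUntil_subset hD hz)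
              refine ⟨hPC hzP, ?_⟩
              simp only [Set.mem_singleton_iff]
              intro he; exact hwQ (he ▸ hz)
      · -- w ∉ P.support (so w ∈ B0) ; target b
        have hwB : w ∈ B0 := by
          rcases hw with h | h
          · exact h
          · exact absurd h hwP
        refine connOn_of_target (t := b) ⟨hBC hbB, by
          simp only [Set.mem_singleton_iff]; intro he; exact hwP (he ▸ hbP)⟩ ?_
        rintro a ⟨haC, haw⟩
        have haw' : a ≠ w := by simpa using haw
        rcases haC with haB | haP
        · obtain ⟨p, hp⟩ := (hB2 w hwB).2 a ⟨haB, by simpa using haw'⟩ b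
            ⟨hbB, by simp only [Set.mem_singleton_iff]; intro he; exact hwP (he ▸ hbP)⟩
          exact ⟨p, fun z hz => ⟨hBC (hp z hz).1, (hp z hz).2⟩⟩
        · refine ⟨P.dropUntil a haP, fun z hz => ?_⟩
          have hzP := P.support_dropUntil_subset haP hz
          refine ⟨hPC hzP, ?_⟩
          simp only [Set.mem_singleton_iff]
          intro he; exact hwP (he ▸ hzP)
  have hEq := hB.2 C (fun z hz => hBC hz) hNC
  exact hy (hEq ▸ (hPC hyP) : y ∈ B0)

lemma walk_through {G : SimpleGraph V} {B0 : Set V} {v : V}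
    (hclosed : ∀ a ∈ B0, a ≠ v → ∀ y, G.Adj a y → y ∈ B0) :
    ∀ {a c : V}, a ∈ B0 → ∀ (W : G.Walk a c), c ∉ B0 → v ∈ W.support := by
  intro a c ha W
  induction W with
  | nil => intro hc; exact absurd ha hc
  | @cons a d c h q ih =>
    intro hc
    by_cases hav : a = v
    · rw [Walk.support_cons, List.mem_cons]; exact Or.inl hav.symm
    · have hd : d ∈ B0 := hclosed a ha hav d h
      rw [Walk.support_cons, List.mem_cons]
      exact Or.inr (ih hd hc)

lemma dist_split_s7 {G : SimpleGraph V} (hG : G.Connected) {u v w : V}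
    (hsep : ∀ (W : G.Walk u w), v ∈ W.support) :
    G.dist u w = G.dist u v + G.dist v w := by
  classical
  refine le_antisymm hG.dist_triangle ?_
  obtain ⟨p, hp⟩ := hG.exists_walk_length_eq_dist u w
  have hvp : v ∈ p.support := hsep p
  calc G.dist u v + G.dist v w
      ≤ (p.takeUntil v hvp).length + (p.dropUntil v hvp).length :=
        add_le_add (dist_le _) (dist_le _)
    _ = p.length := by rw [← Walk.length_append, p.take_spec hvp]
    _ = G.dist u w := hp

end AuxLemmas

section EccLemmas

lemma dist_le_ecc [Fintype V] {G : SimpleGraph V} (v w : V) : G.dist v w ≤ ecc G v :=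
  le_csSup (Set.finite_range _).bddAbove (Set.mem_range_self w)

lemma ecc_exists [Fintype V] {G : SimpleGraph V} (v : V) : ∃ w, G.dist v w = ecc G v := by
  haveI : Nonempty V := ⟨v⟩
  have : ecc G v ∈ Set.range (G.dist v) :=
    Nat.sSup_mem (Set.range_nonempty _) (Set.finite_range _).bddAbove
  exact this

lemma ecc_le [Fintype V] {G : SimpleGraph V} {v : V} {k : ℕ} (h : ∀ w, G.dist v w ≤ k) :
    ecc G v ≤ k := by
  haveI : Nonempty V := ⟨v⟩
  exact csSup_le (Set.range_nonempty _) (by rintro _ ⟨w, rfl⟩; exact h w)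

lemma gdiam_exists [Fintype V] {G : SimpleGraph V} (h4 : 4 ≤ gdiam G) :
    ∃ a b : V, 4 ≤ G.dist a b := by
  rcases isEmpty_or_nonempty V with hV | hV
  · exfalso
    rw [gdiam, Set.range_eq_empty, csSup_empty] at h4
    simp at h4
  · have hmem : gdiam G ∈ Set.range (ecc G) :=
      Nat.sSup_mem (Set.range_nonempty _) (Set.finite_range _).bddAbove
    obtain ⟨a, ha⟩ := hmem
    obtain ⟨b, hb⟩ := ecc_exists (G := G) a
    exact ⟨a, b, by omega⟩

end EccLemmas

theorem stmt_7 {V : Type*} [Fintype V] (G : SimpleGraph V) (hG : ClassB G)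
    (h4 : 4 ≤ gdiam G) (B0 V1 V2 : Set V) (hB : IsBlockSet G B0)
    (hbip : CompBipOn G B0 V1 V2)
    (v : V) (hv : B0 ∩ cutSet G = {v})
    (u : V) (hu : u ∈ B0) (hnc : ¬ CutVtx G u) :
    ((u ∈ V1 ∧ v ∈ V1) ∨ (u ∈ V2 ∧ v ∈ V2) → ecc G u = ecc G v + 2) ∧
    ((u ∈ V1 ∧ v ∈ V2) ∨ (u ∈ V2 ∧ v ∈ V1) → ecc G u = ecc G v + 1) := by
  classical
  obtain ⟨⟨hGconn, -⟩, -, -⟩ := hG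
  obtain ⟨hV1ne, hV2ne, hdisj, hunion, hadj_iff⟩ := hbip
  have hvB : v ∈ B0 ∧ CutVtx G v := by
    have h : v ∈ B0 ∩ cutSet G := by rw [hv]; rfl
    exact ⟨h.1, h.2⟩
  have huv : u ≠ v := fun he => hnc (he ▸ hvB.2)
  have hclosed : ∀ a ∈ B0, a ≠ v → ∀ y, G.Adj a y → y ∈ B0 := by
    intro a ha hav y hay
    have hanc : ¬ CutVtx G a := fun hc => hav (by
      have h : a ∈ B0 ∩ cutSet G := ⟨ha, hc⟩
      rw [hv] at h; exact h)
    exact block_closed hB ha hvB.1 (Ne.symm hav) hanc hay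
  have hdle2 : ∀ p ∈ B0, ∀ q ∈ B0, G.dist p q ≤ 2 := by
    intro p hp q hq
    have hp' : p ∈ V1 ∪ V2 := by rw [hunion]; exact hp
    have hq' : q ∈ V1 ∪ V2 := by rw [hunion]; exact hq
    have hmem : ∀ {t}, t ∈ V1 ∪ V2 → t ∈ B0 := fun ht => by rw [← hunion]; exact ht
    rcases hp' with hp1 | hp2 <;> rcases hq' with hq1 | hq2
    · obtain ⟨t, ht⟩ := hV2ne
      have htB : t ∈ B0 := hmem (Or.inr ht)
      have h1 : G.Adj p t := (hadj_iff p hp t htB).mpr (Or.inl ⟨hp1, ht⟩)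
      have h2 : G.Adj t q := (hadj_iff t htB q hq).mpr (Or.inr ⟨ht, hq1⟩)
      simpa using dist_le (Walk.cons h1 (Walk.cons h2 Walk.nil))
    · have h1 : G.Adj p q := (hadj_iff p hp q hq).mpr (Or.inl ⟨hp1, hq2⟩)
      have := dist_le (Walk.cons h1 Walk.nil)
      simp at this; omega
    · have h1 : G.Adj p q := (hadj_iff p hp q hq).mpr (Or.inr ⟨hp2, hq1⟩)
      have := dist_le (Walk.cons h1 Walk.nil)
      simp at this; omega
    · obtain ⟨t, ht⟩ := hV1ne
      have htB : t ∈ B0 := hmem (Or.inl ht)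
      have h1 : G.Adj p t := (hadj_iff p hp t htB).mpr (Or.inr ⟨hp2, ht⟩)
      have h2 : G.Adj t q := (hadj_iff t htB q hq).mpr (Or.inl ⟨ht, hq2⟩)
      simpa using dist_le (Walk.cons h1 (Walk.cons h2 Walk.nil))
  have hsep : ∀ w, w ∉ B0 → G.dist u w = G.dist u v + G.dist v w := fun w hw =>
    dist_split_s7 hGconn (fun W => walk_through hclosed hu W hw)
  obtain ⟨a, b, hab⟩ := gdiam_exists h4
  have htri : G.dist a b ≤ G.dist v a + G.dist v b := by
    have := hGconn.dist_triangle (u := a) (v := v) (w := b)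
    rwa [SimpleGraph.dist_comm (u := a) (v := v)] at this
  have h2e : 2 ≤ ecc G v := by
    have h1 := dist_le_ecc (G := G) v a
    have h2 := dist_le_ecc (G := G) v b
    omega
  obtain ⟨w0, hw0⟩ := ecc_exists (G := G) v
  have hout : ∃ w, w ∉ B0 ∧ G.dist v w = ecc G v := by
    by_cases hw0B : w0 ∈ B0
    · have hle2 : ecc G v ≤ 2 := hw0 ▸ hdle2 v hvB.1 w0 hw0B
      have he2 : ecc G v = 2 := le_antisymm hle2 h2e
      have hda : G.dist v a ≤ 2 := he2 ▸ dist_le_ecc (G := G) v a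
      have hdb : G.dist v b ≤ 2 := he2 ▸ dist_le_ecc (G := G) v b
      have hda2 : G.dist v a = 2 := by omega
      have hdb2 : G.dist v b = 2 := by omega
      by_cases haB : a ∈ B0
      · by_cases hbB : b ∈ B0
        · have := hdle2 a haB b hbB; omega
        · exact ⟨b, hbB, by rw [hdb2, he2]⟩
      · exact ⟨a, haB, by rw [hda2, he2]⟩
    · exact ⟨w0, hw0B, hw0⟩
  obtain ⟨w, hwB, hwe⟩ := hout
  have hecc : ecc G u = G.dist u v + ecc G v := by
    refine le_antisymm (ecc_le fun w' => ?_) ?_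
    · have h1 := hGconn.dist_triangle (u := u) (v := v) (w := w')
      have h2 := dist_le_ecc (G := G) v w'
      omega
    · calc G.dist u v + ecc G v = G.dist u v + G.dist v w := by rw [hwe]
        _ = G.dist u w := (hsep w hwB).symm
        _ ≤ ecc G u := dist_le_ecc u w
  constructor
  · rintro (⟨hu1, hv1⟩ | ⟨hu2, hv2⟩)
    · have hnadj : ¬ G.Adj u v := by
        intro h
        rcases (hadj_iff u hu v hvB.1).mp h with ⟨-, h2⟩ | ⟨h2, -⟩
        · exact Set.disjoint_left.mp hdisj hv1 h2
        · exact Set.disjoint_left.mp hdisj hu1 h2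
      have h0 : 0 < G.dist u v := hGconn.pos_dist_of_ne huv
      have h1 : G.dist u v ≠ 1 := fun h => hnadj (dist_eq_one_iff_adj.mp h)
      have hle := hdle2 u hu v hvB.1
      have hd2 : G.dist u v = 2 := by omega
      rw [hecc, hd2]; omega
    · have hnadj : ¬ G.Adj u v := by
        intro h
        rcases (hadj_iff u hu v hvB.1).mp h with ⟨h2, -⟩ | ⟨-, h2⟩
        · exact Set.disjoint_left.mp hdisj h2 hu2
        · exact Set.disjoint_left.mp hdisj h2 hv2
      have h0 : 0 < G.dist u v := hGconn.pos_dist_of_ne huv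
      have h1 : G.dist u v ≠ 1 := fun h => hnadj (dist_eq_one_iff_adj.mp h)
      have hle := hdle2 u hu v hvB.1
      have hd2 : G.dist u v = 2 := by omega
      rw [hecc, hd2]; omega
  · rintro (⟨hu1, hv2⟩ | ⟨hu2, hv1⟩)
    · have hadj' : G.Adj u v := (hadj_iff u hu v hvB.1).mpr (Or.inl ⟨hu1, hv2⟩)
      have hd1 : G.dist u v = 1 := dist_eq_one_iff_adj.mpr hadj'
      rw [hecc, hd1]; omega
    · have hadj' : G.Adj u v := (hadj_iff u hu v hvB.1).mpr (Or.inr ⟨hu2, hv1⟩)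
      have hd1 : G.dist u v = 1 := dist_eq_one_iff_adj.mpr hadj'
      rw [hecc, hd1]; omega
end
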